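/- arXiv:1809.11010 — 5 statements merged into one kernel-verified Lean document; each statement's English description precedes it below -/
import Mathlib

section
/- Class H is preserved by the dynamic programming recursion: if f and g belong to class H, then the value function V defined by V(w) = sup_{b ∈ ℝ} H(w, b) also belongs to class H. -/
/-- `f` is affine on the set `s`. -/
def AffOn (f : ℝ → ℝ) (s : Set ℝ) : Prop := ∃ a c : ℝ, ∀ y ∈ s, f y = a * y + c

/-- Left derivative of `f` at `x`. -/
noncomputable def lDeriv (f : ℝ → ℝ) (x : ℝ) : ℝ := derivWithin f (Set.Iio x) x

/-- Right derivative of `f` at `x`. -/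
noncomputable def rDeriv (f : ℝ → ℝ) (x : ℝ) : ℝ := derivWithin f (Set.Ioi x) x

/-- `f` is piecewise affine with partition points `x 1 < x 2 < … < x N`
(no partition points if `N = 0`, in which case `f` is affine on all of `ℝ`). -/
def PWAff (f : ℝ → ℝ) (N : ℕ) (x : ℕ → ℝ) : Prop :=
  (∀ i, 1 ≤ i → i + 1 ≤ N → x i < x (i + 1)) ∧
  (N = 0 → AffOn f Set.univ) ∧
  (1 ≤ N → AffOn f (Set.Iic (x 1)) ∧ AffOn f (Set.Ici (x N)) ∧
    ∀ i, 1 ≤ i → i + 1 ≤ N → AffOn f (Set.Icc (x i) (x (i + 1))))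

/-- `f` belongs to class `H` as witnessed by the points `x 1 < … < x N`:
piecewise linear, concave on `ℝ`, and eventually constant. -/
def ClassHAux (f : ℝ → ℝ) (N : ℕ) (x : ℕ → ℝ) : Prop :=
  PWAff f N x ∧ ConcaveOn ℝ Set.univ f ∧ ∃ xb : ℝ, ∀ y, xb ≤ y → f y = f xb

/-- `f` belongs to class `H`. -/
def ClassH (f : ℝ → ℝ) : Prop := ∃ N x, ClassHAux f N x

/-- `x 1 < … < x N` are the singular values of the class-`H` function `f`:
they partition `ℝ` into pieces on which `f` is affine and each of them is a genuine
kink, i.e. the right derivative is strictly smaller than the left derivative there. -/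
def HasSingVals (f : ℝ → ℝ) (N : ℕ) (x : ℕ → ℝ) : Prop :=
  ClassHAux f N x ∧ ∀ i, 1 ≤ i → i ≤ N → rDeriv f (x i) < lDeriv f (x i)

/-- The dynamic-programming objective
`H(w,b) = R⁻¹ (p f(wR + b(u−R)) + (1−p) g(wR + b(d−R)))`. -/
noncomputable def Hfun (R u d p : ℝ) (f g : ℝ → ℝ) (w b : ℝ) : ℝ :=
  R⁻¹ * (p * f (w * R + b * (u - R)) + (1 - p) * g (w * R + b * (d - R)))

/-- The value function `V(w) = sup_b H(w,b)`. -/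
noncomputable def Vfun (R u d p : ℝ) (f g : ℝ → ℝ) (w : ℝ) : ℝ :=
  ⨆ b : ℝ, Hfun R u d p f g w b

/-- The set of maximizers `B(w) = {b : H(w,b) = V(w)}`. -/
noncomputable def Bset (R u d p : ℝ) (f g : ℝ → ℝ) (w : ℝ) : Set ℝ :=
  {b : ℝ | Hfun R u d p f g w b = Vfun R u d p f g w}

/-- The minimal optimal strategy `β(w) = min B(w)`. -/
noncomputable def betaFun (R u d p : ℝ) (f g : ℝ → ℝ) (w : ℝ) : ℝ :=
  sInf (Bset R u d p f g w)

/-- The grid line `C^u = {(w,b) : wR + b(u−R) = c}`. -/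
def Cu (R u : ℝ) (c : ℝ) : Set (ℝ × ℝ) := {pt | pt.1 * R + pt.2 * (u - R) = c}

/-- The grid line `C^d = {(w,b) : wR + b(d−R) = c}`. -/
def Cd (R d : ℝ) (c : ℝ) : Set (ℝ × ℝ) := {pt | pt.1 * R + pt.2 * (d - R) = c}

/-- The grid `G`, the union of the lines `C^u_i`, `1 ≤ i ≤ Nu`, and `C^d_j`, `1 ≤ j ≤ Nd`. -/
def Grid (R u d : ℝ) (Nu : ℕ) (xu : ℕ → ℝ) (Nd : ℕ) (xd : ℕ → ℝ) : Set (ℝ × ℝ) :=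
  (⋃ i ∈ Finset.Icc 1 Nu, Cu R u (xu i)) ∪ (⋃ j ∈ Finset.Icc 1 Nd, Cd R d (xd j))

/-- The open parallelogram `D_ij`, for `0 ≤ i ≤ Nu`, `0 ≤ j ≤ Nd`, with the conventions
`x^u_0 = x^d_0 = −∞` and `x^u_{Nu+1} = x^d_{Nd+1} = +∞`. -/
def Dset (R u d : ℝ) (Nu : ℕ) (xu : ℕ → ℝ) (Nd : ℕ) (xd : ℕ → ℝ) (i j : ℕ) : Set (ℝ × ℝ) :=
  {pt | (1 ≤ i → xu i < pt.1 * R + pt.2 * (u - R)) ∧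
        (i < Nu → pt.1 * R + pt.2 * (u - R) < xu (i + 1)) ∧
        (1 ≤ j → xd j < pt.1 * R + pt.2 * (d - R)) ∧
        (j < Nd → pt.1 * R + pt.2 * (d - R) < xd (j + 1))}


/-- Three-point concavity inequality. -/
lemma concave3 {f : ℝ → ℝ} (hf : ConcaveOn ℝ Set.univ f) (y m z : ℝ)
    (h1 : y < m) (h2 : m < z) :
    (z - m) * f y + (m - y) * f z ≤ (z - y) * f m := by
  have ht : (0:ℝ) < z - y := by linarith
  have hA : (0:ℝ) ≤ (z - m) / (z - y) := div_nonneg (by linarith) (by linarith)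
  have hB : (0:ℝ) ≤ (m - y) / (z - y) := div_nonneg (by linarith) (by linarith)
  have hsum : (z - m) / (z - y) + (m - y) / (z - y) = 1 := by field_simp; ring
  have h := hf.2 (Set.mem_univ y) (Set.mem_univ z) hA hB hsum
  have hcomb : ((z - m) / (z - y)) • y + ((m - y) / (z - y)) • z = m := by
    simp only [smul_eq_mul]; field_simp; ring
  rw [hcomb] at h
  simp only [smul_eq_mul] at h
  have h' := mul_le_mul_of_nonneg_left h (le_of_lt ht)
  have e : (z - y) * ((z - m)/(z - y) * f y + (m - y)/(z - y) * f z)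
      = (z - m) * f y + (m - y) * f z := by
    field_simp
  rw [e] at h'
  linarith
/-- Bundled data for a piecewise-linear concave eventually-constant function. -/
structure PLData (f : ℝ → ℝ) : Type where
  N : ℕ
  hN : 1 ≤ N
  x : ℕ → ℝ
  a : ℕ → ℝ
  c : ℕ → ℝ
  mono : ∀ i, 1 ≤ i → i + 1 ≤ N → x i < x (i + 1)
  p0 : ∀ y, y ≤ x 1 → f y = a 0 * y + c 0
  pN : ∀ y, x N ≤ y → f y = a N * y + c N
  pmid : ∀ i, 1 ≤ i → i + 1 ≤ N → ∀ y, x i ≤ y → y ≤ x (i + 1) → f y = a i * y + c i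
  conc : ConcaveOn ℝ Set.univ f
  xb : ℝ
  hxb : ∀ y, xb ≤ y → f y = f xb

namespace PLData

variable {f : ℝ → ℝ}

lemma xmono (D : PLData f) : ∀ i j, 1 ≤ i → i ≤ j → j ≤ D.N → D.x i ≤ D.x j := by
  intro i j h1 hij hjN
  induction j with
  | zero => omega
  | succ j ih =>
    rcases Nat.lt_or_ge i (j+1) with h | h
    · calc D.x i ≤ D.x j := ih (by omega) (by omega)
        _ ≤ D.x (j+1) := le_of_lt (D.mono j (by omega) (by omega))
    · have : i = j + 1 := by omega
      simp [this]

lemma xlt (D : PLData f) : ∀ i j, 1 ≤ i → i < j → j ≤ D.N → D.x i < D.x j := by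
  intro i j h1 hij hjN
  have h2 : D.x (i+1) ≤ D.x j := D.xmono (i+1) j (by omega) (by omega) hjN
  have := D.mono i h1 (by omega)
  linarith

/-- index of the piece to the right of `s`. -/
noncomputable def idx (D : PLData f) (s : ℝ) : ℕ :=
  (((Finset.range (D.N + 1)).filter (fun i => i = 0 ∨ D.x i ≤ s)).max' ⟨0, by simp⟩)

noncomputable def lidx (D : PLData f) (s : ℝ) : ℕ :=
  (((Finset.range (D.N + 1)).filter (fun i => i = 0 ∨ D.x i < s)).max' ⟨0, by simp⟩)

noncomputable def rs (D : PLData f) (s : ℝ) : ℝ := D.a (D.idx s)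
noncomputable def ls (D : PLData f) (s : ℝ) : ℝ := D.a (D.lidx s)

lemma idx_mem (D : PLData f) (s : ℝ) :
    D.idx s ∈ (Finset.range (D.N + 1)).filter (fun i => i = 0 ∨ D.x i ≤ s) :=
  Finset.max'_mem _ _

lemma lidx_mem (D : PLData f) (s : ℝ) :
    D.lidx s ∈ (Finset.range (D.N + 1)).filter (fun i => i = 0 ∨ D.x i < s) :=
  Finset.max'_mem _ _

lemma idx_le (D : PLData f) (s : ℝ) : D.idx s ≤ D.N := by
  have h := D.idx_mem s
  rw [Finset.mem_filter, Finset.mem_range] at h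
  omega

lemma lidx_le (D : PLData f) (s : ℝ) : D.lidx s ≤ D.N := by
  have h := D.lidx_mem s
  rw [Finset.mem_filter, Finset.mem_range] at h
  omega

lemma idx_ge (D : PLData f) (s : ℝ) (h : 1 ≤ D.idx s) : D.x (D.idx s) ≤ s := by
  have hm := D.idx_mem s
  rw [Finset.mem_filter, Finset.mem_range] at hm
  rcases hm.2 with h0 | h0
  · omega
  · exact h0

lemma lidx_ge (D : PLData f) (s : ℝ) (h : 1 ≤ D.lidx s) : D.x (D.lidx s) < s := by
  have hm := D.lidx_mem s
  rw [Finset.mem_filter, Finset.mem_range] at hm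
  rcases hm.2 with h0 | h0
  · omega
  · exact h0

lemma le_idx (D : PLData f) (s : ℝ) (k : ℕ) (hk : k ≤ D.N) (h : k = 0 ∨ D.x k ≤ s) :
    k ≤ D.idx s :=
  Finset.le_max' _ _ (by rw [Finset.mem_filter, Finset.mem_range]; exact ⟨by omega, h⟩)

lemma le_lidx (D : PLData f) (s : ℝ) (k : ℕ) (hk : k ≤ D.N) (h : k = 0 ∨ D.x k < s) :
    k ≤ D.lidx s :=
  Finset.le_max' _ _ (by rw [Finset.mem_filter, Finset.mem_range]; exact ⟨by omega, h⟩)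

lemma idx_lt (D : PLData f) (s : ℝ) (h : D.idx s < D.N) : s < D.x (D.idx s + 1) := by
  by_contra hc
  push_neg at hc
  have := D.le_idx s (D.idx s + 1) (by omega) (Or.inr hc)
  omega

lemma lidx_lt (D : PLData f) (s : ℝ) (h : D.lidx s < D.N) : s ≤ D.x (D.lidx s + 1) := by
  by_contra hc
  push_neg at hc
  have := D.le_lidx s (D.lidx s + 1) (by omega) (Or.inr hc)
  omega

/-- local affine behaviour to the right. -/
lemma F3r (D : PLData f) (s : ℝ) :
    ∃ δ > 0, ∀ y, s ≤ y → y ≤ s + δ → f y = f s + D.rs s * (y - s) := by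
  rcases Nat.eq_zero_or_pos (D.idx s) with h0 | hpos
  · have hlt : s < D.x 1 := by
      have h := D.idx_lt s (by have := D.hN; omega)
      rwa [h0] at h
    refine ⟨D.x 1 - s, by linarith, fun y h1 h2 => ?_⟩
    rw [D.p0 y (by linarith), D.p0 s (le_of_lt hlt)]
    rw [rs, h0]; ring
  · rcases Nat.lt_or_ge (D.idx s) D.N with hlt | hge
    · have hx1 : D.x (D.idx s) ≤ s := D.idx_ge s hpos
      have hx2 : s < D.x (D.idx s + 1) := D.idx_lt s hlt
      refine ⟨D.x (D.idx s + 1) - s, by linarith, fun y h1 h2 => ?_⟩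
      have hp := D.pmid (D.idx s) hpos (by omega)
      rw [hp y (by linarith) (by linarith), hp s hx1 (le_of_lt hx2)]
      rw [rs]; ring
    · have hiN' : D.idx s = D.N := le_antisymm (D.idx_le s) hge
      have hx : D.x D.N ≤ s := by
        have := D.idx_ge s hpos; rwa [hiN'] at this
      refine ⟨1, by norm_num, fun y h1 h2 => ?_⟩
      rw [D.pN y (by linarith), D.pN s hx]
      rw [rs, hiN']; ring

lemma F3l (D : PLData f) (s : ℝ) :
    ∃ δ > 0, ∀ y, s - δ ≤ y → y ≤ s → f y = f s + D.ls s * (y - s) := by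
  rcases Nat.eq_zero_or_pos (D.lidx s) with h0 | hpos
  · have hle : s ≤ D.x 1 := by
      have h := D.lidx_lt s (by have := D.hN; omega)
      rwa [h0] at h
    refine ⟨1, by norm_num, fun y h1 h2 => ?_⟩
    rw [D.p0 y (by linarith), D.p0 s hle]
    rw [ls, h0]; ring
  · rcases Nat.lt_or_ge (D.lidx s) D.N with hlt | hge
    · have hx1 : D.x (D.lidx s) < s := D.lidx_ge s hpos
      have hx2 : s ≤ D.x (D.lidx s + 1) := D.lidx_lt s hlt
      refine ⟨s - D.x (D.lidx s), by linarith, fun y h1 h2 => ?_⟩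
      have hp := D.pmid (D.lidx s) hpos (by omega)
      rw [hp y (by linarith) (by linarith), hp s (le_of_lt hx1) hx2]
      rw [ls]; ring
    · have hjN' : D.lidx s = D.N := le_antisymm (D.lidx_le s) hge
      have hx : D.x D.N < s := by
        have := D.lidx_ge s hpos; rwa [hjN'] at this
      refine ⟨s - D.x D.N, by linarith, fun y h1 h2 => ?_⟩
      rw [D.pN y (by linarith), D.pN s (le_of_lt hx)]
      rw [ls, hjN']; ring

/-- concavity three-point inequality. -/
lemma conc3 (D : PLData f) (y m z : ℝ) (h1 : y < m) (h2 : m < z) :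
    (z - m) * f y + (m - y) * f z ≤ (z - y) * f m :=
  concave3 D.conc y m z h1 h2

lemma F2a (D : PLData f) (s : ℝ) : ∀ y, s ≤ y → f y ≤ f s + D.rs s * (y - s) := by
  obtain ⟨δ, hδ, hloc⟩ := D.F3r s
  intro y hy
  rcases le_or_gt y (s + δ) with h | h
  · rw [hloc y hy h]
  · have hfm : f (s + δ) = f s + D.rs s * δ := by
      rw [hloc (s+δ) (by linarith) (le_refl _)]; ring_nf
    have h3 := D.conc3 s (s + δ) y (by linarith) h
    rw [hfm] at h3
    nlinarith [h3, hδ]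

lemma F2b (D : PLData f) (s : ℝ) : ∀ y, y ≤ s → f y ≤ f s + D.ls s * (y - s) := by
  obtain ⟨δ, hδ, hloc⟩ := D.F3l s
  intro y hy
  rcases le_or_gt (s - δ) y with h | h
  · rw [hloc y h hy]
  · have hfm : f (s - δ) = f s - D.ls s * δ := by
      rw [hloc (s - δ) (le_refl _) (by linarith)]; ring_nf
    have h3 := D.conc3 y (s - δ) s h (by linarith)
    rw [hfm] at h3
    nlinarith [h3, hδ]

lemma rs_le_ls (D : PLData f) (s : ℝ) : D.rs s ≤ D.ls s := by
  obtain ⟨δ, hδ, hloc⟩ := D.F3r s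
  obtain ⟨δ', hδ', hloc'⟩ := D.F3l s
  have h1 : f (s + δ) = f s + D.rs s * δ := by
    rw [hloc (s+δ) (by linarith) (le_refl _)]; ring_nf
  have h2 : f (s - δ') = f s - D.ls s * δ' := by
    rw [hloc' (s - δ') (le_refl _) (by linarith)]; ring_nf
  have h3 := D.conc3 (s - δ') s (s + δ) (by linarith) (by linarith)
  rw [h1, h2] at h3
  nlinarith [h3, mul_pos hδ hδ']

/-- supergradient property. -/
lemma superg (D : PLData f) (s q : ℝ) (h1 : D.rs s ≤ q) (h2 : q ≤ D.ls s) :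
    ∀ y, f y ≤ f s + q * (y - s) := by
  intro y
  rcases le_or_gt s y with h | h
  · have := D.F2a s y h
    nlinarith
  · have := D.F2b s y (le_of_lt h)
    nlinarith

/-- global maximum. -/
lemma fmax (D : PLData f) : ∀ y, f y ≤ f D.xb := by
  intro y
  rcases le_or_gt D.xb y with h | h
  · rw [D.hxb y h]
  · have h2 : f (2 * D.xb - y) = f D.xb := D.hxb _ (by linarith)
    have h3 := D.conc3 y D.xb (2 * D.xb - y) h (by linarith)
    rw [h2] at h3
    nlinarith [h3]

lemma aN0 (D : PLData f) : D.a D.N = 0 := by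
  set y1 := max (D.x D.N) D.xb with hy1
  have e1 : f y1 = D.a D.N * y1 + D.c D.N := D.pN y1 (le_max_left _ _)
  have e2 : f (y1 + 1) = D.a D.N * (y1 + 1) + D.c D.N := D.pN _ (by
    have := le_max_left (D.x D.N) D.xb; linarith)
  have e3 : f y1 = f D.xb := D.hxb y1 (le_max_right _ _)
  have e4 : f (y1 + 1) = f D.xb := D.hxb _ (by have := le_max_right (D.x D.N) D.xb; linarith)
  linarith [e1, e2, e3, e4]

lemma idx_x (D : PLData f) (i : ℕ) (h1 : 1 ≤ i) (h2 : i ≤ D.N) : D.idx (D.x i) = i := by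
  apply le_antisymm
  · by_contra hc
    push_neg at hc
    have hge : 1 ≤ D.idx (D.x i) := by omega
    have hi := D.idx_ge (D.x i) hge
    have := D.xlt i (D.idx (D.x i)) h1 hc (D.idx_le _)
    linarith
  · exact D.le_idx _ i h2 (Or.inr (le_refl _))

lemma lidx_x (D : PLData f) (i : ℕ) (h1 : 1 ≤ i) (h2 : i ≤ D.N) : D.lidx (D.x i) = i - 1 := by
  apply le_antisymm
  · by_contra hc
    push_neg at hc
    have hge : 1 ≤ D.lidx (D.x i) := by omega
    have hi := D.lidx_ge (D.x i) hge
    have : D.x i ≤ D.x (D.lidx (D.x i)) := D.xmono i _ h1 (by omega) (D.lidx_le _)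
    linarith
  · rcases Nat.eq_zero_or_pos (i - 1) with h0 | hpos
    · omega
    · exact D.le_lidx _ (i-1) (by omega) (Or.inr (D.xlt (i-1) i (by omega) (by omega) h2))

lemma slope_anti (D : PLData f) (i : ℕ) (h : i + 1 ≤ D.N) : D.a (i + 1) ≤ D.a i := by
  have h1 := D.rs_le_ls (D.x (i+1))
  rw [rs, ls, D.idx_x (i+1) (by omega) h, D.lidx_x (i+1) (by omega) h] at h1
  simpa using h1

lemma a_anti (D : PLData f) : ∀ i j, i ≤ j → j ≤ D.N → D.a j ≤ D.a i := by
  intro i j hij hj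
  induction j with
  | zero =>
    have : i = 0 := by omega
    simp [this]
  | succ j ih =>
    rcases Nat.lt_or_ge i (j+1) with h | h
    · have ha := D.slope_anti j hj
      have hb := ih (by omega) (by omega)
      linarith
    · have : i = j + 1 := by omega
      simp [this]

lemma a_nonneg (D : PLData f) (i : ℕ) (h : i ≤ D.N) : 0 ≤ D.a i := by
  have := D.a_anti i D.N h (le_refl _)
  rw [D.aN0] at this
  linarith

lemma fconst (D : PLData f) (h0 : D.a 0 = 0) : ∀ y z : ℝ, f y = f z := by
  have hz : ∀ i, i ≤ D.N → D.a i = 0 := fun i hi =>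
    le_antisymm (by have := D.a_anti 0 i (by omega) hi; linarith) (D.a_nonneg i hi)
  have hstep : ∀ s y, f y ≤ f s := by
    intro s y
    rcases le_or_gt s y with h | h
    · have := D.F2a s y h
      rw [rs, hz _ (D.idx_le s)] at this
      linarith
    · have := D.F2b s y (le_of_lt h)
      rw [ls, hz _ (D.lidx_le s)] at this
      linarith
  exact fun y z => le_antisymm (hstep z y) (hstep y z)

lemma cont (D : PLData f) : Continuous f := by
  have h1 : ConvexOn ℝ Set.univ (-f) := D.conc.neg
  have h2 : ContinuousOn (-f) Set.univ := h1.continuousOn isOpen_univ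
  have h3 : Continuous (-f) := continuousOn_univ.mp h2
  have := h3.neg
  simpa using this

end PLData

section FinTight

/-- Core comparison: if line `k` is minimal at `m` and no crossing point of the family
lies weakly between `m` and (strictly) `w`, then line `k` is minimal at `w` too. -/
lemma core_cmp (Y' : Finset ℝ) (B : ℝ → ℝ) (S : Finset ℝ)
    (hS : ∀ k l, k ∈ Y' → l ∈ Y' → k ≠ l → (B l - B k)/(k - l) ∈ S)
    (m w : ℝ) (k : ℝ) (hk : k ∈ Y')
    (hkm : ∀ l ∈ Y', k * m + B k ≤ l * m + B l)
    (hno : ∀ c ∈ S, ¬(m ≤ c ∧ c < w) ∧ ¬(w < c ∧ c ≤ m)) :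
    ∀ l ∈ Y', k * w + B k ≤ l * w + B l := by
  intro l hl
  by_contra hc
  push_neg at hc
  rcases eq_or_ne k l with he | hne
  · rw [he] at hc; linarith
  · set c₀ := (B l - B k)/(k - l) with hc₀def
    have hc₀S : c₀ ∈ S := hS k l hk hl hne
    have hkl : k - l ≠ 0 := sub_ne_zero.mpr hne
    have hquot : (k - l) * c₀ = B l - B k := by
      rw [hc₀def]; field_simp
    have hDm : (k - l) * (m - c₀) ≤ 0 := by
      have := hkm l hl
      nlinarith [hquot]
    have hDw : 0 < (k - l) * (w - c₀) := by
      nlinarith [hquot]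
    rcases lt_trichotomy (k - l) 0 with hσ | hσ | hσ
    · have h1 : c₀ ≤ m := by nlinarith
      have h2 : w < c₀ := by nlinarith
      exact (hno c₀ hc₀S).2 ⟨h2, h1⟩
    · exact hkl hσ
    · have h1 : m ≤ c₀ := by nlinarith
      have h2 : c₀ < w := by nlinarith
      exact (hno c₀ hc₀S).1 ⟨h1, h2⟩

/-- If a function has, around every point, a tight affine majorant whose slope belongs to
a fixed finite set, and is eventually constant, then it is of class H. -/
lemma classH_of_fin_tight (h : ℝ → ℝ) (Y : Finset ℝ)
    (hY : ∀ w, ∃ y ∈ Y, ∃ β, (∀ v, h v ≤ y * v + β) ∧ h w = y * w + β)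
    (hconst : ∃ xb, ∀ z, xb ≤ z → h z = h xb) : ClassH h := by
  classical
  set P : ℝ → ℝ → Prop := fun y β => (∀ v, h v ≤ y * v + β) ∧ ∃ w, h w = y * w + β with hP
  set Y' : Finset ℝ := Y.filter (fun y => ∃ β, P y β) with hY'
  set B : ℝ → ℝ := fun y => if hy : ∃ β, P y β then hy.choose else 0 with hB
  have hBspec : ∀ y ∈ Y', P y (B y) := by
    intro y hy
    rw [hY', Finset.mem_filter] at hy
    rw [hB]
    simp only [dif_pos hy.2]
    exact hy.2.choose_spec
  have argmin : ∀ w, ∃ y ∈ Y', h w = y * w + B y := by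
    intro w
    obtain ⟨y, hyY, β, hmaj, htight⟩ := hY w
    have hy' : y ∈ Y' := by
      rw [hY', Finset.mem_filter]
      exact ⟨hyY, ⟨β, hmaj, ⟨w, htight⟩⟩⟩
    have h1 : ∀ v, h v ≤ y * v + B y := (hBspec y hy').1
    obtain ⟨w', hw'⟩ := (hBspec y hy').2
    have hBβ : B y = β := by
      have e1 : B y ≤ β := by have := hmaj w'; linarith
      have e2 : β ≤ B y := by have := h1 w; linarith
      linarith
    exact ⟨y, hy', by rw [hBβ]; exact htight⟩
  have hmin : ∀ w y', y' ∈ Y' → h w ≤ y' * w + B y' := fun w y' hy' => (hBspec y' hy').1 w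
  have hminline : ∀ w y, y ∈ Y' → (∀ l ∈ Y', y * w + B y ≤ l * w + B l) → h w = y * w + B y := by
    intro w y hy hminy
    obtain ⟨l, hl, hlw⟩ := argmin w
    have h1 : h w ≤ y * w + B y := hmin w y hy
    have h2 : y * w + B y ≤ l * w + B l := hminy l hl
    linarith
  have hargmin' : ∀ w, ∃ y ∈ Y', ∀ l ∈ Y', y * w + B y ≤ l * w + B l := by
    intro w
    obtain ⟨y, hy, hw⟩ := argmin w
    exact ⟨y, hy, fun l hl => by have := hmin w l hl; linarith⟩
  -- crossing set
  set S : Finset ℝ :=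
    ((Y' ×ˢ Y').filter (fun q => q.1 ≠ q.2)).image
      (fun q => (B q.2 - B q.1) / (q.1 - q.2)) with hSdef
  have hS : ∀ k l, k ∈ Y' → l ∈ Y' → k ≠ l → (B l - B k)/(k - l) ∈ S := by
    intro k l hk hl hne
    rw [hSdef]
    rw [Finset.mem_image]
    refine ⟨(k, l), ?_, rfl⟩
    rw [Finset.mem_filter, Finset.mem_product]
    exact ⟨⟨hk, hl⟩, hne⟩
  -- concavity
  have hconc : ConcaveOn ℝ Set.univ h := by
    refine ⟨convex_univ, ?_⟩
    intro v _ z _ s t hs ht hst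
    obtain ⟨y, hy, he⟩ := argmin (s • v + t • z)
    rw [he]
    have h1 : h v ≤ y * v + B y := hmin v y hy
    have h2 : h z ≤ y * z + B y := hmin z y hy
    have e : y * (s • v + t • z) + B y = s • (y * v + B y) + t • (y * z + B y) := by
      simp only [smul_eq_mul]; linear_combination (-B y) * hst
    rw [e]
    simp only [smul_eq_mul]
    have := mul_le_mul_of_nonneg_left h1 hs
    have := mul_le_mul_of_nonneg_left h2 ht
    linarith
  -- affinity on a piece
  have haff : ∀ (m : ℝ) (T : Set ℝ),
      (∀ w ∈ T, ∀ c ∈ S, ¬(m ≤ c ∧ c < w) ∧ ¬(w < c ∧ c ≤ m)) → AffOn h T := by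
    intro m T hT
    obtain ⟨y, hy, hminy⟩ := hargmin' m
    refine ⟨y, B y, fun w hw => ?_⟩
    exact hminline w y hy (core_cmp Y' B S hS m w y hy hminy (hT w hw))
  rcases S.eq_empty_or_nonempty with hSe | hSne
  · -- no crossings: affine everywhere
    have haffU : AffOn h Set.univ := by
      apply haff 0
      intro w _ c hc
      rw [hSe] at hc
      exact absurd hc (Finset.notMem_empty c)
    exact ⟨0, fun _ => 0, ⟨⟨fun i h1 h2 => by omega, fun _ => haffU, fun h1 => by omega⟩,
      hconc, hconst⟩⟩
  · -- sort the crossings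
    set L : List ℝ := S.sort (· ≤ ·) with hL
    set N : ℕ := S.card with hN
    have hlen : L.length = N := Finset.length_sort _
    have hNpos : 0 < N := by
      rw [hN]; exact Finset.card_pos.mpr hSne
    set x : ℕ → ℝ := fun i => L.getD (i - 1) 0 with hx
    have hget : ∀ i, 1 ≤ i → i ≤ N → ∀ (hi : i - 1 < L.length), x i = L.get ⟨i - 1, hi⟩ := by
      intro i h1 h2 hi
      rw [hx]
      simp [List.getD_eq_getElem?_getD, List.getElem?_eq_getElem hi]
    have hsorted : L.SortedLT := Finset.sortedLT_sort S
    have hmemx : ∀ i, 1 ≤ i → i ≤ N → x i ∈ S := by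
      intro i h1 h2
      have hi : i - 1 < L.length := by omega
      rw [hget i h1 h2 hi]
      rw [← Finset.mem_sort (· ≤ ·)]
      exact List.get_mem L _
    have hxlt : ∀ i j, 1 ≤ i → i < j → j ≤ N → x i < x j := by
      intro i j h1 hij hj
      have hi : i - 1 < L.length := by omega
      have hjj : j - 1 < L.length := by omega
      rw [hget i h1 (by omega) hi, hget j (by omega) hj hjj]
      exact hsorted.strictMono_get (by simp [Fin.lt_def]; omega)
    have hcomplete : ∀ c ∈ S, ∃ i, 1 ≤ i ∧ i ≤ N ∧ c = x i := by
      intro c hc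
      have : c ∈ L := by rw [hL, Finset.mem_sort (· ≤ ·)]; exact hc
      obtain ⟨⟨j, hj⟩, hjc⟩ := List.mem_iff_get.mp this
      refine ⟨j + 1, by omega, by omega, ?_⟩
      rw [hget (j+1) (by omega) (by omega) (by omega)]
      simp [← hjc]
    have hxmin : ∀ c ∈ S, x 1 ≤ c := by
      intro c hc
      obtain ⟨i, h1, h2, he⟩ := hcomplete c hc
      rcases eq_or_lt_of_le h1 with h | h
      · rw [he, ← h]
      · rw [he]; exact le_of_lt (hxlt 1 i (le_refl _) h h2)
    have hxmax : ∀ c ∈ S, c ≤ x N := by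
      intro c hc
      obtain ⟨i, h1, h2, he⟩ := hcomplete c hc
      rcases eq_or_lt_of_le h2 with h | h
      · rw [he, h]
      · rw [he]; exact le_of_lt (hxlt i N h1 h (le_refl _))
    have hgap : ∀ i, 1 ≤ i → i + 1 ≤ N → ∀ c ∈ S, ¬(x i < c ∧ c < x (i+1)) := by
      intro i h1 h2 c hc ⟨ha, hb⟩
      obtain ⟨j, hj1, hj2, he⟩ := hcomplete c hc
      rw [he] at ha hb
      have hij : i < j := by
        by_contra hcon
        push_neg at hcon
        rcases eq_or_lt_of_le hcon with h | h
        · rw [h] at ha; linarith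
        · have := hxlt j i hj1 h (by omega); linarith
      have hji : j < i + 1 := by
        by_contra hcon
        push_neg at hcon
        rcases eq_or_lt_of_le hcon with h | h
        · rw [← h] at hb; linarith
        · have := hxlt (i+1) j (by omega) h hj2; linarith
      omega
    refine ⟨N, x, ⟨⟨fun i hi1 hi2 => hxlt i (i+1) hi1 (by omega) hi2, fun h0 => by omega,
      fun _ => ⟨?_, ?_, ?_⟩⟩, hconc, hconst⟩⟩
    · -- Iic (x 1)
      apply haff (x 1 - 1)
      intro w hw c hc
      have h1 := hxmin c hc
      simp only [Set.mem_Iic] at hw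
      constructor
      · rintro ⟨hm, hcw⟩; linarith
      · rintro ⟨hwc, hcm⟩; linarith
    · -- Ici (x N)
      apply haff (x N + 1)
      intro w hw c hc
      have h1 := hxmax c hc
      simp only [Set.mem_Ici] at hw
      constructor
      · rintro ⟨hm, hcw⟩; linarith
      · rintro ⟨hwc, hcm⟩; linarith
    · -- middle pieces
      intro i hi1 hi2
      apply haff ((x i + x (i+1)) / 2)
      intro w hw c hc
      simp only [Set.mem_Icc] at hw
      have hmid := hxlt i (i+1) hi1 (by omega) hi2
      have hg := hgap i hi1 hi2 c hc
      constructor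
      · rintro ⟨hm, hcw⟩; exact hg ⟨by linarith, by linarith⟩
      · rintro ⟨hwc, hcm⟩; exact hg ⟨by linarith, by linarith⟩

end FinTight

section Extract

lemma classH_const (C : ℝ) : ClassH (fun _ => C) := by
  refine ⟨0, fun _ => 0, ⟨⟨fun i h1 h2 => by omega, fun _ => ⟨0, C, fun y _ => by ring⟩,
    fun h1 => by omega⟩, ?_, ⟨0, fun y _ => rfl⟩⟩⟩
  exact ⟨convex_univ, fun v _ z _ s t hs ht hst => by
    simp only [smul_eq_mul]
    have e : s * C + t * C = C := by linear_combination C * hst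
    linarith⟩

/-- Any class-H function is either constant or admits PLData with positive initial slope. -/
lemma classH_extract {f : ℝ → ℝ} (hf : ClassH f) :
    (∃ C, ∀ y, f y = C) ∨ ∃ D : PLData f, 0 < D.a 0 := by
  classical
  obtain ⟨N, x, ⟨⟨hmono, h0, hpieces⟩, hconc, xb, hxb⟩⟩ := hf
  rcases Nat.eq_zero_or_pos N with hN0 | hN1
  · -- f affine on ℝ and eventually constant ⇒ constant
    obtain ⟨a, c, hac⟩ := h0 hN0
    left
    have ha : a = 0 := by
      have e1 : f xb = a * xb + c := hac xb (Set.mem_univ _)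
      have e2 : f (xb + 1) = a * (xb + 1) + c := hac _ (Set.mem_univ _)
      have e3 : f (xb + 1) = f xb := hxb _ (by linarith)
      linarith
    refine ⟨c, fun y => ?_⟩
    rw [hac y (Set.mem_univ _), ha]; ring
  · obtain ⟨hIic, hIci, hmid⟩ := hpieces hN1
    obtain ⟨a0, c0, h0spec⟩ := hIic
    obtain ⟨aN, cN, hNspec⟩ := hIci
    have hmid' : ∀ i, ∃ ac : ℝ × ℝ, 1 ≤ i → i + 1 ≤ N →
        ∀ y, x i ≤ y → y ≤ x (i+1) → f y = ac.1 * y + ac.2 := by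
      intro i
      by_cases hi : 1 ≤ i ∧ i + 1 ≤ N
      · obtain ⟨a, c, hac⟩ := hmid i hi.1 hi.2
        exact ⟨(a, c), fun _ _ y hy1 hy2 => hac y ⟨hy1, hy2⟩⟩
      · exact ⟨(0, 0), fun h1 h2 => absurd ⟨h1, h2⟩ hi⟩
    choose mid hmidspec using hmid'
    set A : ℕ → ℝ := fun i => if i = 0 then a0 else if i = N then aN else (mid i).1 with hA
    set C : ℕ → ℝ := fun i => if i = 0 then c0 else if i = N then cN else (mid i).2 with hC
    have hD : ∃ D : PLData f, D.a 0 = a0 ∧ D.N = N := by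
      refine ⟨⟨N, hN1, x, A, C, hmono, ?_, ?_, ?_, hconc, xb, hxb⟩, ?_, rfl⟩
      · intro y hy
        rw [hA, hC]; simp only [if_pos rfl]
        exact h0spec y hy
      · intro y hy
        rw [hA, hC]
        have : N ≠ 0 := by omega
        simp only [if_neg this, if_pos rfl]
        exact hNspec y hy
      · intro i hi1 hi2 y hy1 hy2
        rw [hA, hC]
        have e1 : i ≠ 0 := by omega
        have e2 : i ≠ N := by omega
        simp only [if_neg e1, if_neg e2]
        exact hmidspec i hi1 hi2 y hy1 hy2
      · show A 0 = a0
        rw [hA]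
        simp
    obtain ⟨D, hDa, hDN⟩ := hD
    rcases eq_or_lt_of_le (D.a_nonneg 0 (by omega)) with h | h
    · left
      obtain ⟨C', hC'⟩ : ∃ C', ∀ y, f y = C' := ⟨f 0, fun y => D.fconst h.symm y 0⟩
      exact ⟨C', hC'⟩
    · right
      exact ⟨D, h⟩

end Extract

section MaxExists

/-- A continuous function decaying linearly in both directions attains its maximum. -/
lemma exists_global_max (φ : ℝ → ℝ) (hcont : Continuous φ)
    (α1 c1 : ℝ) (hc1 : 0 < c1) (hup : ∀ b, φ b ≤ α1 + c1 * b)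
    (α2 c2 : ℝ) (hc2 : c2 < 0) (hdn : ∀ b, φ b ≤ α2 + c2 * b) :
    ∃ bs, ∀ b, φ b ≤ φ bs := by
  set blo : ℝ := min ((φ 0 - 1 - α1)/c1) 0 with hblo
  set bhi : ℝ := max ((φ 0 - 1 - α2)/c2) 0 with hbhi
  have h0K : (0:ℝ) ∈ Set.Icc blo bhi := ⟨min_le_right _ _, le_max_right _ _⟩
  obtain ⟨bs, hbsK, hbs⟩ := isCompact_Icc.exists_isMaxOn ⟨0, h0K⟩ hcont.continuousOn
  refine ⟨bs, fun b => ?_⟩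
  rcases le_or_gt blo b with h1 | h1
  · rcases le_or_gt b bhi with h2 | h2
    · exact hbs ⟨h1, h2⟩
    · have hq : (φ 0 - 1 - α2)/c2 ≤ bhi := le_max_left _ _
      have e : (φ 0 - 1 - α2)/c2 * c2 = φ 0 - 1 - α2 := div_mul_cancel₀ _ (ne_of_lt hc2)
      have h3 : c2 * b < φ 0 - 1 - α2 := by
        have u1 := mul_lt_mul_of_neg_left h2 hc2
        have u2 := mul_le_mul_of_nonpos_left hq hc2.le
        linarith
      have h4 : φ b < φ 0 := by have := hdn b; linarith
      have h5 : φ 0 ≤ φ bs := hbs h0K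
      linarith
  · have hq : blo ≤ (φ 0 - 1 - α1)/c1 := min_le_left _ _
    have e : (φ 0 - 1 - α1)/c1 * c1 = φ 0 - 1 - α1 := div_mul_cancel₀ _ (ne_of_gt hc1)
    have h3 : c1 * b < φ 0 - 1 - α1 := by
      have u1 := mul_lt_mul_of_pos_left h1 hc1
      have u2 := mul_le_mul_of_nonneg_left hq hc1.le
      linarith
    have h4 : φ b < φ 0 := by have := hup b; linarith
    have h5 : φ 0 ≤ φ bs := hbs h0K
    linarith

end MaxExists

set_option maxHeartbeats 1000000 in
/-- Class `H` is preserved by the dynamic programming recursion: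
if `f` and `g` belong to class `H`, then so does `V(w) = sup_b H(w,b)`. -/
theorem stmt_13 (R u d p : ℝ) (hd : 0 < d) (hdR : d < R) (hRu : R < u)
    (hp0 : 0 < p) (hp1 : p < 1)
    (f g : ℝ → ℝ) (hf : ClassH f) (hg : ClassH g) :
    ClassH (Vfun R u d p f g) := by
  classical
  have hR : (0:ℝ) < R := lt_trans hd hdR
  have hR' : R ≠ 0 := ne_of_gt hR
  have hRinv : (0:ℝ) < R⁻¹ := by positivity
  have huR : (0:ℝ) < u - R := by linarith
  have hRd : (0:ℝ) < R - d := by linarith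
  have hp1' : (0:ℝ) < 1 - p := by linarith
  have hVdef : ∀ z, Vfun R u d p f g z = ⨆ b, Hfun R u d p f g z b := fun _ => rfl
  -- global maxima of f and g
  obtain ⟨zf, hzf_max, hzf_const⟩ : ∃ z, (∀ y, f y ≤ f z) ∧ ∀ y, z ≤ y → f y = f z := by
    obtain ⟨N, x, ⟨_, hconc, xb, hxb⟩⟩ := hf
    refine ⟨xb, fun y => ?_, hxb⟩
    rcases le_or_gt xb y with h | h
    · rw [hxb y h]
    · have h2 : f (2 * xb - y) = f xb := hxb _ (by linarith)
      have h3 := concave3 hconc y xb (2 * xb - y) h (by linarith)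
      rw [h2] at h3
      nlinarith [h3]
  obtain ⟨zg, hzg_max, hzg_const⟩ : ∃ z, (∀ y, g y ≤ g z) ∧ ∀ y, z ≤ y → g y = g z := by
    obtain ⟨N, x, ⟨_, hconc, xb, hxb⟩⟩ := hg
    refine ⟨xb, fun y => ?_, hxb⟩
    rcases le_or_gt xb y with h | h
    · rw [hxb y h]
    · have h2 : g (2 * xb - y) = g xb := hxb _ (by linarith)
      have h3 := concave3 hconc y xb (2 * xb - y) h (by linarith)
      rw [h2] at h3
      nlinarith [h3]
  set M : ℝ := R⁻¹ * (p * f zf + (1 - p) * g zg) with hM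
  -- uniform upper bound
  have hub : ∀ w b, Hfun R u d p f g w b ≤ M := by
    intro w b
    simp only [Hfun]
    rw [hM]
    have h1 : p * f (w*R + b*(u-R)) ≤ p * f zf :=
      mul_le_mul_of_nonneg_left (hzf_max _) hp0.le
    have h2 : (1-p) * g (w*R + b*(d-R)) ≤ (1-p) * g zg :=
      mul_le_mul_of_nonneg_left (hzg_max _) hp1'.le
    apply mul_le_mul_of_nonneg_left _ hRinv.le
    linarith
  have hbdd : ∀ w, BddAbove (Set.range (fun b => Hfun R u d p f g w b)) :=
    fun w => ⟨M, by rintro v ⟨b, rfl⟩; exact hub w b⟩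
  -- V is eventually constant (equal to M)
  have hVM : ∀ z, max zf zg / R ≤ z → Vfun R u d p f g z = M := by
    intro z hz
    have hzR : max zf zg ≤ z * R := by
      have h := mul_le_mul_of_nonneg_right hz hR.le
      calc max zf zg = max zf zg / R * R := by field_simp
        _ ≤ z * R := h
    rw [hVdef]
    apply le_antisymm (ciSup_le fun b => hub z b)
    have h0 : Hfun R u d p f g z 0 = M := by
      simp only [Hfun]
      rw [hM]
      have e1 : z*R + 0*(u-R) = z*R := by ring
      have e2 : z*R + 0*(d-R) = z*R := by ring
      rw [e1, e2, hzf_const (z*R) (le_trans (le_max_left _ _) hzR),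
          hzg_const (z*R) (le_trans (le_max_right _ _) hzR)]
    rw [← h0]
    exact le_ciSup (hbdd z) 0
  have hVconst : ∃ xb, ∀ z, xb ≤ z → Vfun R u d p f g z = Vfun R u d p f g xb :=
    ⟨max zf zg / R, fun z hz => by rw [hVM z hz, hVM _ (le_refl _)]⟩
  -- degenerate case: f constant
  rcases classH_extract hf with ⟨Cf, hCf⟩ | ⟨Df, haf⟩
  · have key : ∀ w, Vfun R u d p f g w = M := by
      intro w
      rw [hVdef]
      apply le_antisymm (ciSup_le fun b => hub w b)
      have hdR' : d - R ≠ 0 := by linarith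
      set b0 : ℝ := (zg - w*R)/(d-R) with hb0
      have harg : w*R + b0*(d-R) = zg := by
        rw [hb0]; field_simp; ring
      have h0 : Hfun R u d p f g w b0 = M := by
        simp only [Hfun]
        rw [hM, harg, hCf (w*R + b0*(u-R)), hCf zf]
      rw [← h0]
      exact le_ciSup (hbdd w) b0
    have hfun : Vfun R u d p f g = fun _ => M := funext key
    rw [hfun]
    exact classH_const M
  -- degenerate case: g constant
  rcases classH_extract hg with ⟨Cg, hCg⟩ | ⟨Dg, hag⟩
  · have key : ∀ w, Vfun R u d p f g w = M := by
      intro w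
      rw [hVdef]
      apply le_antisymm (ciSup_le fun b => hub w b)
      have huR' : u - R ≠ 0 := by linarith
      set b0 : ℝ := (zf - w*R)/(u-R) with hb0
      have harg : w*R + b0*(u-R) = zf := by
        rw [hb0]; field_simp; ring
      have h0 : Hfun R u d p f g w b0 = M := by
        simp only [Hfun]
        rw [hM, harg, hCg (w*R + b0*(d-R)), hCg zg]
      rw [← h0]
      exact le_ciSup (hbdd w) b0
    have hfun : Vfun R u d p f g = fun _ => M := funext key
    rw [hfun]
    exact classH_const M
  -- main case: both f and g genuinely non-constant
  have hpu : (0:ℝ) < p * (u - R) := by positivity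
  have hpd : (0:ℝ) < (1-p) * (R - d) := by positivity
  set Ξ : Finset ℝ := ((Finset.range (Df.N+1)).image (fun i => p*(u-R)*Df.a i)) ∪
      ((Finset.range (Dg.N+1)).image (fun j => (1-p)*(R-d)*Dg.a j)) with hΞ
  apply classH_of_fin_tight _ (Ξ.image (fun ξ => ξ/(u-R) + ξ/(R-d))) _ hVconst
  intro w
  -- supergradients at the leftmost kinks, giving the coercivity bounds
  have hfx1 : ∀ y, f y ≤ f (Df.x 1) + Df.a 0 * (y - Df.x 1) := by
    apply Df.superg
    · rw [PLData.rs, Df.idx_x 1 (le_refl _) Df.hN]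
      exact Df.a_anti 0 1 (by omega) Df.hN
    · rw [PLData.ls, Df.lidx_x 1 (le_refl _) Df.hN]
  have hgx1 : ∀ y, g y ≤ g (Dg.x 1) + Dg.a 0 * (y - Dg.x 1) := by
    apply Dg.superg
    · rw [PLData.rs, Dg.idx_x 1 (le_refl _) Dg.hN]
      exact Dg.a_anti 0 1 (by omega) Dg.hN
    · rw [PLData.ls, Dg.lidx_x 1 (le_refl _) Dg.hN]
  -- existence of a maximizer of b ↦ H(w,b)
  obtain ⟨bs, hbs⟩ : ∃ bs, ∀ b, Hfun R u d p f g w b ≤ Hfun R u d p f g w bs := by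
    have hcont : Continuous (fun b => Hfun R u d p f g w b) := by
      have h1 : Continuous fun b : ℝ => w*R + b*(u-R) := by continuity
      have h2 : Continuous fun b : ℝ => w*R + b*(d-R) := by continuity
      have h3 : Continuous (fun b : ℝ =>
          R⁻¹ * (p * f (w*R + b*(u-R)) + (1-p) * g (w*R + b*(d-R)))) :=
        continuous_const.mul ((continuous_const.mul (Df.cont.comp h1)).add
          (continuous_const.mul (Dg.cont.comp h2)))
      simpa [Hfun] using h3
    apply exists_global_max _ hcont
      (R⁻¹*(p*(f (Df.x 1) + Df.a 0*(w*R - Df.x 1)) + (1-p)*g zg)) (R⁻¹*(p*Df.a 0*(u-R)))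
      (by positivity)
      (?_)
      (R⁻¹*(p*f zf + (1-p)*(g (Dg.x 1) + Dg.a 0*(w*R - Dg.x 1)))) (R⁻¹*((1-p)*Dg.a 0*(d-R)))
      (by nlinarith [mul_pos hRinv (mul_pos (mul_pos hp1' hag) hRd)])
      (?_)
    · intro b
      simp only [Hfun]
      have h1 : p * f (w*R + b*(u-R)) ≤ p * (f (Df.x 1) + Df.a 0*(w*R + b*(u-R) - Df.x 1)) :=
        mul_le_mul_of_nonneg_left (hfx1 _) hp0.le
      have h2 : (1-p) * g (w*R + b*(d-R)) ≤ (1-p) * g zg :=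
        mul_le_mul_of_nonneg_left (hzg_max _) hp1'.le
      have h3 : R⁻¹ * (p * f (w*R + b*(u-R)) + (1-p) * g (w*R + b*(d-R)))
          ≤ R⁻¹ * (p * (f (Df.x 1) + Df.a 0*(w*R + b*(u-R) - Df.x 1)) + (1-p) * g zg) :=
        mul_le_mul_of_nonneg_left (by linarith) hRinv.le
      calc R⁻¹ * (p * f (w*R + b*(u-R)) + (1-p) * g (w*R + b*(d-R)))
          ≤ R⁻¹ * (p * (f (Df.x 1) + Df.a 0*(w*R + b*(u-R) - Df.x 1)) + (1-p) * g zg) := h3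
        _ = R⁻¹*(p*(f (Df.x 1) + Df.a 0*(w*R - Df.x 1)) + (1-p)*g zg)
            + R⁻¹*(p*Df.a 0*(u-R)) * b := by ring
    · intro b
      simp only [Hfun]
      have h1 : p * f (w*R + b*(u-R)) ≤ p * f zf :=
        mul_le_mul_of_nonneg_left (hzf_max _) hp0.le
      have h2 : (1-p) * g (w*R + b*(d-R)) ≤ (1-p) * (g (Dg.x 1) + Dg.a 0*(w*R + b*(d-R) - Dg.x 1)) :=
        mul_le_mul_of_nonneg_left (hgx1 _) hp1'.le
      have h3 : R⁻¹ * (p * f (w*R + b*(u-R)) + (1-p) * g (w*R + b*(d-R)))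
          ≤ R⁻¹ * (p * f zf + (1-p) * (g (Dg.x 1) + Dg.a 0*(w*R + b*(d-R) - Dg.x 1))) :=
        mul_le_mul_of_nonneg_left (by linarith) hRinv.le
      calc R⁻¹ * (p * f (w*R + b*(u-R)) + (1-p) * g (w*R + b*(d-R)))
          ≤ R⁻¹ * (p * f zf + (1-p) * (g (Dg.x 1) + Dg.a 0*(w*R + b*(d-R) - Dg.x 1))) := h3
        _ = R⁻¹*(p*f zf + (1-p)*(g (Dg.x 1) + Dg.a 0*(w*R - Dg.x 1)))
            + R⁻¹*((1-p)*Dg.a 0*(d-R)) * b := by ring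
  set sstar : ℝ := w*R + bs*(u-R) with hsstar
  set tstar : ℝ := w*R + bs*(d-R) with htstar
  -- first-order optimality conditions at the maximizer
  have opt1 : p*(u-R)*Df.rs sstar ≤ (1-p)*(R-d)*Dg.ls tstar := by
    obtain ⟨δ1, hδ1, hf1⟩ := Df.F3r sstar
    obtain ⟨δ2, hδ2, hg1⟩ := Dg.F3l tstar
    set ε : ℝ := min (δ1/(u-R)) (δ2/(R-d)) with hε
    have hεpos : 0 < ε := lt_min (by positivity) (by positivity)
    have hεu : ε*(u-R) ≤ δ1 := (le_div_iff₀ huR).mp (by rw [hε]; exact min_le_left _ _)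
    have hεd : ε*(R-d) ≤ δ2 := (le_div_iff₀ hRd).mp (by rw [hε]; exact min_le_right _ _)
    have hεu0 : 0 ≤ ε*(u-R) := by positivity
    have hεd0 : 0 ≤ ε*(R-d) := by positivity
    have e1 : f (w*R + (bs+ε)*(u-R)) = f sstar + Df.rs sstar * (ε*(u-R)) := by
      have harg : w*R + (bs+ε)*(u-R) = sstar + ε*(u-R) := by rw [hsstar]; ring
      rw [harg, hf1 (sstar + ε*(u-R)) (by linarith) (by linarith)]
      ring
    have e2 : g (w*R + (bs+ε)*(d-R)) = g tstar - Dg.ls tstar * (ε*(R-d)) := by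
      have harg : w*R + (bs+ε)*(d-R) = tstar - ε*(R-d) := by rw [htstar]; ring
      rw [harg, hg1 (tstar - ε*(R-d)) (by linarith) (by linarith)]
      ring
    have hcomp := hbs (bs + ε)
    simp only [Hfun] at hcomp
    rw [e1, e2, ← hsstar, ← htstar] at hcomp
    have h4 := (mul_le_mul_iff_right₀ hRinv).mp hcomp
    have h5 : p*(Df.rs sstar)*(ε*(u-R)) ≤ (1-p)*(Dg.ls tstar)*(ε*(R-d)) := by linarith
    nlinarith [h5, hεpos]
  have opt2 : (1-p)*(R-d)*Dg.rs tstar ≤ p*(u-R)*Df.ls sstar := by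
    obtain ⟨δ1, hδ1, hf1⟩ := Df.F3l sstar
    obtain ⟨δ2, hδ2, hg1⟩ := Dg.F3r tstar
    set ε : ℝ := min (δ1/(u-R)) (δ2/(R-d)) with hε
    have hεpos : 0 < ε := lt_min (by positivity) (by positivity)
    have hεu : ε*(u-R) ≤ δ1 := (le_div_iff₀ huR).mp (by rw [hε]; exact min_le_left _ _)
    have hεd : ε*(R-d) ≤ δ2 := (le_div_iff₀ hRd).mp (by rw [hε]; exact min_le_right _ _)
    have hεu0 : 0 ≤ ε*(u-R) := by positivity
    have hεd0 : 0 ≤ ε*(R-d) := by positivity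
    have e1 : f (w*R + (bs-ε)*(u-R)) = f sstar - Df.ls sstar * (ε*(u-R)) := by
      have harg : w*R + (bs-ε)*(u-R) = sstar - ε*(u-R) := by rw [hsstar]; ring
      rw [harg, hf1 (sstar - ε*(u-R)) (by linarith) (by linarith)]
      ring
    have e2 : g (w*R + (bs-ε)*(d-R)) = g tstar + Dg.rs tstar * (ε*(R-d)) := by
      have harg : w*R + (bs-ε)*(d-R) = tstar + ε*(R-d) := by rw [htstar]; ring
      rw [harg, hg1 (tstar + ε*(R-d)) (by linarith) (by linarith)]
      ring
    have hcomp := hbs (bs - ε)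
    simp only [Hfun] at hcomp
    rw [e1, e2, ← hsstar, ← htstar] at hcomp
    have h4 := (mul_le_mul_iff_right₀ hRinv).mp hcomp
    have h5 : (1-p)*(Dg.rs tstar)*(ε*(R-d)) ≤ p*(Df.ls sstar)*(ε*(u-R)) := by linarith
    nlinarith [h5, hεpos]
  -- the matched dual slope
  set ξ : ℝ := max (p*(u-R)*Df.rs sstar) ((1-p)*(R-d)*Dg.rs tstar) with hξ
  have hqf1 : Df.rs sstar ≤ ξ/(p*(u-R)) := by
    rw [le_div_iff₀ hpu]
    have := le_max_left (p*(u-R)*Df.rs sstar) ((1-p)*(R-d)*Dg.rs tstar)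
    rw [← hξ] at this
    linarith
  have hqf2 : ξ/(p*(u-R)) ≤ Df.ls sstar := by
    rw [div_le_iff₀ hpu]
    rw [hξ]
    apply max_le
    · nlinarith [Df.rs_le_ls sstar, hpu]
    · linarith [opt2]
  have hqg1 : Dg.rs tstar ≤ ξ/((1-p)*(R-d)) := by
    rw [le_div_iff₀ hpd]
    have := le_max_right (p*(u-R)*Df.rs sstar) ((1-p)*(R-d)*Dg.rs tstar)
    rw [← hξ] at this
    linarith
  have hqg2 : ξ/((1-p)*(R-d)) ≤ Dg.ls tstar := by
    rw [div_le_iff₀ hpd]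
    rw [hξ]
    apply max_le
    · linarith [opt1]
    · nlinarith [Dg.rs_le_ls tstar, hpd]
  have hsupf : ∀ σ, f σ ≤ f sstar + (ξ/(p*(u-R))) * (σ - sstar) :=
    Df.superg sstar _ hqf1 hqf2
  have hsupg : ∀ σ, g σ ≤ g tstar + (ξ/((1-p)*(R-d))) * (σ - tstar) :=
    Dg.superg tstar _ hqg1 hqg2
  -- membership of the slope in the finite set
  have hξΞ : ξ ∈ Ξ := by
    rw [hΞ]
    rcases max_choice (p*(u-R)*Df.rs sstar) ((1-p)*(R-d)*Dg.rs tstar) with h | h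
    · apply Finset.mem_union_left
      rw [Finset.mem_image]
      refine ⟨Df.idx sstar, Finset.mem_range.mpr (by have := Df.idx_le sstar; omega), ?_⟩
      rw [hξ, h]; rfl
    · apply Finset.mem_union_right
      rw [Finset.mem_image]
      refine ⟨Dg.idx tstar, Finset.mem_range.mpr (by have := Dg.idx_le tstar; omega), ?_⟩
      rw [hξ, h]; rfl
  refine ⟨ξ/(u-R) + ξ/(R-d), Finset.mem_image_of_mem _ hξΞ,
    R⁻¹*(p*f sstar + (1-p)*g tstar - (ξ/(u-R))*sstar - (ξ/(R-d))*tstar), ?_, ?_⟩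
  · -- the affine majorant dominates V
    intro v
    rw [hVdef]
    apply ciSup_le
    intro b
    simp only [Hfun]
    have h1 : p * f (v*R + b*(u-R)) ≤ p * (f sstar + (ξ/(p*(u-R))) * (v*R + b*(u-R) - sstar)) :=
      mul_le_mul_of_nonneg_left (hsupf _) hp0.le
    have h2 : (1-p) * g (v*R + b*(d-R))
        ≤ (1-p) * (g tstar + (ξ/((1-p)*(R-d))) * (v*R + b*(d-R) - tstar)) :=
      mul_le_mul_of_nonneg_left (hsupg _) hp1'.le
    have h3 : R⁻¹ * (p * f (v*R + b*(u-R)) + (1-p) * g (v*R + b*(d-R)))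
        ≤ R⁻¹ * (p * (f sstar + (ξ/(p*(u-R))) * (v*R + b*(u-R) - sstar))
          + (1-p) * (g tstar + (ξ/((1-p)*(R-d))) * (v*R + b*(d-R) - tstar))) :=
      mul_le_mul_of_nonneg_left (by linarith) hRinv.le
    have heq : R⁻¹ * (p * (f sstar + (ξ/(p*(u-R))) * (v*R + b*(u-R) - sstar))
          + (1-p) * (g tstar + (ξ/((1-p)*(R-d))) * (v*R + b*(d-R) - tstar)))
        = (ξ/(u-R) + ξ/(R-d))*v
          + R⁻¹*(p*f sstar + (1-p)*g tstar - (ξ/(u-R))*sstar - (ξ/(R-d))*tstar) := by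
      field_simp
      ring
    rw [heq] at h3
    exact h3
  · -- tightness at w
    have hVw : Vfun R u d p f g w = Hfun R u d p f g w bs := by
      rw [hVdef]
      exact le_antisymm (ciSup_le hbs) (le_ciSup (hbdd w) bs)
    rw [hVw]
    simp only [Hfun]
    rw [← hsstar, ← htstar, hsstar, htstar]
    field_simp
    ring
end

section
/- Suppose w₀ ∈ ℝ is such that (w₀, β(w₀)) ∈ C^u_i ∩ C^d_j for some 1 ≤ i ≤ N_u and 1 ≤ j ≤ N_d. Then the right derivative of V at w₀ satisfies V'⁺(w₀) = max{ ((1 − p)/(1 − q))·g'⁺(x^d_j), (p/q)·f'⁺(x^u_i) }, where q = (R − d)/(u − d). -/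
lemma rDeriv_affOn {f : ℝ → ℝ} {a c x₀ η : ℝ} (hη : 0 < η)
    (h : ∀ y ∈ Set.Icc x₀ (x₀ + η), f y = a * y + c) : rDeriv f x₀ = a := by
  have hg : HasDerivWithinAt (fun y : ℝ => a * y + c) a (Set.Ioi x₀) x₀ := by
    simpa using (((hasDerivAt_id x₀).const_mul a).add_const c).hasDerivWithinAt
  have heq : f =ᶠ[nhdsWithin x₀ (Set.Ioi x₀)] (fun y : ℝ => a * y + c) := by
    filter_upwards [Ioc_mem_nhdsGT (by linarith : x₀ < x₀ + η)] with y hy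
    exact h y ⟨le_of_lt hy.1, hy.2⟩
  have hx : f x₀ = a * x₀ + c := h x₀ ⟨le_refl _, by linarith⟩
  exact (hg.congr_of_eventuallyEq heq hx).derivWithin (uniqueDiffWithinAt_Ioi _)

lemma lDeriv_affOn {f : ℝ → ℝ} {a c x₀ η : ℝ} (hη : 0 < η)
    (h : ∀ y ∈ Set.Icc (x₀ - η) x₀, f y = a * y + c) : lDeriv f x₀ = a := by
  have hg : HasDerivWithinAt (fun y : ℝ => a * y + c) a (Set.Iio x₀) x₀ := by
    simpa using (((hasDerivAt_id x₀).const_mul a).add_const c).hasDerivWithinAt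
  have heq : f =ᶠ[nhdsWithin x₀ (Set.Iio x₀)] (fun y : ℝ => a * y + c) := by
    filter_upwards [Ico_mem_nhdsLT (by linarith : x₀ - η < x₀)] with y hy
    exact h y ⟨hy.1, le_of_lt hy.2⟩
  have hx : f x₀ = a * x₀ + c := h x₀ ⟨by linarith, le_refl _⟩
  exact (hg.congr_of_eventuallyEq heq hx).derivWithin (uniqueDiffWithinAt_Iio _)

lemma concave_slope3 {f : ℝ → ℝ} (hf : ConcaveOn ℝ Set.univ f) {a b c : ℝ}
    (hab : a < b) (hbc : b < c) : (f c - f b) / (c - b) ≤ (f b - f a) / (b - a) :=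
  hf.slope_anti_adjacent (Set.mem_univ a) (Set.mem_univ c) hab hbc

lemma concave_right_bound {f : ℝ → ℝ} (hf : ConcaveOn ℝ Set.univ f) {a b c : ℝ}
    (hab : a < b) (hbc : b < c) : f c - f b ≤ ((f b - f a) / (b - a)) * (c - b) := by
  have h := concave_slope3 hf hab hbc
  have hcb : (0:ℝ) < c - b := by linarith
  calc f c - f b = ((f c - f b)/(c-b)) * (c - b) := by field_simp
    _ ≤ ((f b - f a) / (b - a)) * (c - b) := mul_le_mul_of_nonneg_right h (le_of_lt hcb)

lemma concave_supergrad {f : ℝ → ℝ} (hf : ConcaveOn ℝ Set.univ f)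
    {x₀ ηR ηL aR cR aL cL m : ℝ} (hηR : 0 < ηR) (hηL : 0 < ηL)
    (hR : ∀ y ∈ Set.Icc x₀ (x₀ + ηR), f y = aR * y + cR)
    (hL : ∀ y ∈ Set.Icc (x₀ - ηL) x₀, f y = aL * y + cL)
    (hmR : aR ≤ m) (hmL : m ≤ aL) :
    ∀ y : ℝ, f y ≤ f x₀ + m * (y - x₀) := by
  intro y
  have hx0R : f x₀ = aR * x₀ + cR := hR x₀ ⟨le_refl _, by linarith⟩
  have hx0L : f x₀ = aL * x₀ + cL := hL x₀ ⟨by linarith, le_refl _⟩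
  rcases lt_trichotomy y x₀ with hy | hy | hy
  · rcases le_or_gt (x₀ - ηL) y with h1 | h1
    · have := hL y ⟨h1, le_of_lt hy⟩; nlinarith
    · have hb : f (x₀ - ηL) = aL * (x₀ - ηL) + cL := hL _ ⟨le_refl _, by linarith⟩
      have hslope : ((f x₀ - f (x₀ - ηL)) / (x₀ - (x₀ - ηL))) = aL := by
        rw [hx0L, hb]; field_simp; ring_nf; field_simp
      have h2 := concave_slope3 hf h1 (by linarith : x₀ - ηL < x₀)
      rw [hslope] at h2
      have hpos : (0:ℝ) < (x₀ - ηL) - y := by linarith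
      have h3 : aL * ((x₀ - ηL) - y) ≤ f (x₀ - ηL) - f y := by
        have := mul_le_mul_of_nonneg_right h2 (le_of_lt hpos)
        calc aL * ((x₀ - ηL) - y)
            ≤ ((f (x₀ - ηL) - f y) / ((x₀ - ηL) - y)) * ((x₀ - ηL) - y) := this
          _ = f (x₀ - ηL) - f y := by field_simp
      nlinarith
  · simp [hy]
  · rcases le_or_gt y (x₀ + ηR) with h1 | h1
    · have := hR y ⟨le_of_lt hy, h1⟩; nlinarith
    · have hb : f (x₀ + ηR) = aR * (x₀ + ηR) + cR := hR _ ⟨by linarith, le_refl _⟩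
      have hslope : ((f (x₀ + ηR) - f x₀) / ((x₀ + ηR) - x₀)) = aR := by
        rw [hx0R, hb]; field_simp; ring_nf; field_simp
      have h2 := concave_right_bound hf (by linarith : x₀ < x₀ + ηR) h1
      rw [hslope] at h2
      nlinarith

/-- the affine piece of `f` just to the right of the singular value `x i`. -/
lemma right_piece {f : ℝ → ℝ} {N : ℕ} {x : ℕ → ℝ} (h : HasSingVals f N x)
    {i : ℕ} (hi1 : 1 ≤ i) (hiN : i ≤ N) :
    ∃ η c, 0 < η ∧ ∀ y ∈ Set.Icc (x i) (x i + η), f y = rDeriv f (x i) * y + c := by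
  have hN : 1 ≤ N := hi1.trans hiN
  rcases lt_or_eq_of_le hiN with hlt | heq
  · obtain ⟨a, c, hac⟩ := (h.1.1.2.2 hN).2.2 i hi1 (by omega)
    have hη : 0 < x (i+1) - x i := by
      have := h.1.1.1 i hi1 (by omega); linarith
    have key : ∀ y ∈ Set.Icc (x i) (x i + (x (i+1) - x i)), f y = a * y + c := by
      intro y hy; exact hac y ⟨hy.1, by have := hy.2; linarith⟩
    have hr : rDeriv f (x i) = a := rDeriv_affOn hη key
    exact ⟨_, c, hη, fun y hy => by rw [hr]; exact key y hy⟩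
  · obtain ⟨a, c, hac⟩ := (h.1.1.2.2 hN).2.1
    subst heq
    have key : ∀ y ∈ Set.Icc (x i) (x i + 1), f y = a * y + c := by
      intro y hy; exact hac y hy.1
    have hr : rDeriv f (x i) = a := rDeriv_affOn one_pos key
    exact ⟨1, c, one_pos, fun y hy => by rw [hr]; exact key y hy⟩

/-- the affine piece of `f` just to the left of the singular value `x i`. -/
lemma left_piece {f : ℝ → ℝ} {N : ℕ} {x : ℕ → ℝ} (h : HasSingVals f N x)
    {i : ℕ} (hi1 : 1 ≤ i) (hiN : i ≤ N) :
    ∃ η c, 0 < η ∧ ∀ y ∈ Set.Icc (x i - η) (x i), f y = lDeriv f (x i) * y + c := by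
  have hN : 1 ≤ N := hi1.trans hiN
  rcases eq_or_lt_of_le hi1 with heq | hgt
  · obtain ⟨a, c, hac⟩ := (h.1.1.2.2 hN).1
    have key : ∀ y ∈ Set.Icc (x i - 1) (x i), f y = a * y + c := by
      intro y hy; exact hac y (show y ≤ x 1 by rw [heq]; exact hy.2)
    have hr : lDeriv f (x i) = a := lDeriv_affOn one_pos key
    exact ⟨1, c, one_pos, fun y hy => by rw [hr]; exact key y hy⟩
  · obtain ⟨k, rfl⟩ : ∃ k, i = k + 1 := ⟨i - 1, by omega⟩
    obtain ⟨a, c, hac⟩ := (h.1.1.2.2 hN).2.2 k (by omega) (by omega)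
    have hη : 0 < x (k+1) - x k := by
      have := h.1.1.1 k (by omega) (by omega); linarith
    have key : ∀ y ∈ Set.Icc (x (k+1) - (x (k+1) - x k)) (x (k+1)), f y = a * y + c := by
      intro y hy; exact hac y ⟨by have := hy.1; linarith, hy.2⟩
    have hr : lDeriv f (x (k+1)) = a := lDeriv_affOn hη key
    exact ⟨_, c, hη, fun y hy => by rw [hr]; exact key y hy⟩

/-- a class-H function is bounded above by its terminal value. -/
lemma classH_bddAbove {f : ℝ → ℝ} (hf : ConcaveOn ℝ Set.univ f) {xb : ℝ}
    (hxb : ∀ y, xb ≤ y → f y = f xb) : ∀ y, f y ≤ f xb := by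
  intro y
  rcases le_or_gt xb y with h | h
  · exact le_of_eq (hxb y h)
  · have s := concave_slope3 hf h (by linarith : xb < xb + 1)
    rw [hxb (xb+1) (by linarith)] at s
    simp at s
    have h2 : (0:ℝ) ≤ (f xb - f y) / (xb - y) := by linarith [s]
    have h3 : (0:ℝ) < xb - y := by linarith
    nlinarith [mul_nonneg h2 h3.le, div_mul_cancel₀ (f xb - f y) (ne_of_gt h3)]

/-- a non-constant class-H function admits a global affine upper bound
with strictly positive slope. -/
lemma classH_affine_upper {f : ℝ → ℝ} {N : ℕ} {x : ℕ → ℝ} (h : HasSingVals f N x)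
    (hN : 1 ≤ N) : ∃ A C : ℝ, 0 < A ∧ ∀ y, f y ≤ A * y + C := by
  have hconc := h.1.2.1
  obtain ⟨xb, hxb⟩ := h.1.2.2
  obtain ⟨ηR, cR, hηR, hR⟩ := right_piece h le_rfl hN
  obtain ⟨aL, cL, hacL⟩ := (h.1.1.2.2 hN).1
  have keyL : ∀ y ∈ Set.Icc (x 1 - 1) (x 1), f y = aL * y + cL :=
    fun y hy => hacL y hy.2
  have hlD : lDeriv f (x 1) = aL := lDeriv_affOn one_pos keyL
  set aR := rDeriv f (x 1) with haR
  -- aR ≥ 0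
  have haR0 : 0 ≤ aR := by
    set Y := max xb (x 1 + ηR) + 1 with hY
    have hY1 : x 1 + ηR < Y := by
      have := le_max_right xb (x 1 + ηR); simp only [hY]; linarith
    have hY2 : xb ≤ Y := by have := le_max_left xb (x 1 + ηR); simp only [hY]; linarith
    have hfY : f Y = f xb := hxb Y hY2
    have hfY1 : f (Y+1) = f xb := hxb _ (by linarith)
    have s1 := concave_slope3 hconc hY1 (by linarith : Y < Y + 1)
    have s2 := concave_slope3 hconc (by linarith : x 1 < x 1 + ηR) hY1
    rw [hfY, hfY1] at s1
    rw [hfY] at s2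
    simp at s1
    have hval1 : f (x 1 + ηR) = aR * (x 1 + ηR) + cR := hR _ ⟨by linarith, le_refl _⟩
    have hval0 : f (x 1) = aR * (x 1) + cR := hR _ ⟨le_refl _, by linarith⟩
    have hsl : (f (x 1 + ηR) - f (x 1)) / (x 1 + ηR - x 1) = aR := by
      rw [hval1, hval0]; field_simp; ring_nf; field_simp
    rw [hsl] at s2
    linarith [le_trans s1 s2]
  have hkink : aR < aL := by rw [← hlD]; exact h.2 1 le_rfl hN
  have hsg := concave_supergrad hconc hηR one_pos hR keyL (le_of_lt hkink) le_rfl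
  exact ⟨aL, f (x 1) - aL * (x 1), by linarith, fun y => by have := hsg y; linarith⟩

section helpers
open Filter Set

lemma exists_max (R u d p : ℝ) (hR : 0 < R) (hRu : R < u) (hdR : d < R)
    (hp0 : 0 < p) (hp1 : p < 1) (f g : ℝ → ℝ)
    (hcf : ConcaveOn ℝ Set.univ f) (hcg : ConcaveOn ℝ Set.univ g)
    (hAf : ∃ A C : ℝ, 0 < A ∧ ∀ y, f y ≤ A * y + C)
    (hAg : ∃ A C : ℝ, 0 < A ∧ ∀ y, g y ≤ A * y + C)
    (hMf : ∃ Mf, ∀ y, f y ≤ Mf) (hMg : ∃ Mg, ∀ y, g y ≤ Mg) (w₀ : ℝ) :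
    ∀ b, Hfun R u d p f g w₀ b ≤ Hfun R u d p f g w₀ (betaFun R u d p f g w₀) := by
  obtain ⟨Af, Cf, hAf0, hAfle⟩ := hAf
  obtain ⟨Ag, Cg, hAg0, hAgle⟩ := hAg
  obtain ⟨Mf, hMfle⟩ := hMf
  obtain ⟨Mg, hMgle⟩ := hMg
  have hfc : Continuous f := continuousOn_univ.mp
    (hcf.continuousOn isOpen_univ)
  have hgc : Continuous g := continuousOn_univ.mp
    (hcg.continuousOn isOpen_univ)
  have hp1' : (0:ℝ) < 1 - p := by linarith
  set φ : ℝ → ℝ := fun b => Hfun R u d p f g w₀ b with hφdef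
  have hφc : Continuous φ := by
    simp only [hφdef, Hfun]
    exact continuous_const.mul
      ((continuous_const.mul (hfc.comp (by continuity))).add
       (continuous_const.mul (hgc.comp (by continuity))))
  have hub_top : ∀ b, φ b ≤ R⁻¹ * (p * Mf + (1-p) * (Ag * (w₀*R + b*(d-R)) + Cg)) := by
    intro b
    simp only [hφdef, Hfun]
    exact mul_le_mul_of_nonneg_left
      (add_le_add (mul_le_mul_of_nonneg_left (hMfle _) hp0.le)
        (mul_le_mul_of_nonneg_left (hAgle _) hp1'.le)) (by positivity)
  have hub_bot : ∀ b, φ b ≤ R⁻¹ * (p * (Af * (w₀*R + b*(u-R)) + Cf) + (1-p) * Mg) := by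
    intro b
    simp only [hφdef, Hfun]
    exact mul_le_mul_of_nonneg_left
      (add_le_add (mul_le_mul_of_nonneg_left (hAfle _) hp0.le)
        (mul_le_mul_of_nonneg_left (hMgle _) hp1'.le)) (by positivity)
  have htop : Tendsto φ atTop atBot := by
    refine tendsto_atBot_mono hub_top ?_
    refine (tendsto_const_mul_atBot_of_pos (by positivity : (0:ℝ) < R⁻¹)).2 ?_
    refine tendsto_atBot_add_const_left _ (p * Mf) ?_
    refine (tendsto_const_mul_atBot_of_pos hp1').2 ?_
    refine tendsto_atBot_add_const_right _ Cg ?_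
    refine (tendsto_const_mul_atBot_of_pos hAg0).2 ?_
    refine tendsto_atBot_add_const_left _ (w₀*R) ?_
    exact (tendsto_mul_const_atBot_of_neg (by linarith : d - R < 0)).2 tendsto_id
  have hbot : Tendsto φ atBot atBot := by
    refine tendsto_atBot_mono hub_bot ?_
    refine (tendsto_const_mul_atBot_of_pos (by positivity : (0:ℝ) < R⁻¹)).2 ?_
    refine tendsto_atBot_add_const_right _ ((1-p) * Mg) ?_
    refine (tendsto_const_mul_atBot_of_pos hp0).2 ?_
    refine tendsto_atBot_add_const_right _ Cf ?_
    refine (tendsto_const_mul_atBot_of_pos hAf0).2 ?_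
    refine tendsto_atBot_add_const_left _ (w₀*R) ?_
    exact (tendsto_mul_const_atBot_of_pos (by linarith : 0 < u - R)).2 tendsto_id
  obtain ⟨T1, hT1⟩ := eventually_atTop.1 (htop.eventually (eventually_lt_atBot (φ 0)))
  obtain ⟨T2, hT2⟩ := eventually_atBot.1 (hbot.eventually (eventually_lt_atBot (φ 0)))
  set lo : ℝ := min T2 0 with hlo
  set hi : ℝ := max T1 0 with hhi
  have h0mem : (0:ℝ) ∈ Set.Icc lo hi := ⟨min_le_right _ _, le_max_right _ _⟩
  obtain ⟨bs, hbsmem, hbsmax⟩ :=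
    isCompact_Icc.exists_isMaxOn ⟨0, h0mem⟩ hφc.continuousOn
  have hglob : ∀ b, φ b ≤ φ bs := by
    intro b
    rcases le_or_gt b hi with h1 | h1
    · rcases le_or_gt lo b with h2 | h2
      · exact hbsmax ⟨h2, h1⟩
      · have hble : b ≤ T2 := le_trans h2.le (min_le_left _ _)
        exact (hT2 b hble).le.trans (hbsmax h0mem)
    · have : T1 ≤ b := (le_max_left T1 0).trans h1.le
      exact (hT1 b this).le.trans (hbsmax h0mem)
  have hbdd : BddAbove (Set.range φ) := ⟨φ bs, by rintro _ ⟨b, rfl⟩; exact hglob b⟩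
  have hV : Vfun R u d p f g w₀ = φ bs :=
    le_antisymm (ciSup_le hglob) (le_ciSup hbdd bs)
  have hcl : IsClosed (Bset R u d p f g w₀) := isClosed_eq hφc continuous_const
  have hne : (Bset R u d p f g w₀).Nonempty :=
    ⟨bs, by simp only [Bset, Set.mem_setOf_eq]; exact hV.symm⟩
  have hbb : BddBelow (Bset R u d p f g w₀) := by
    refine ⟨lo, fun b hb => ?_⟩
    by_contra hc
    push_neg at hc
    have hble : b ≤ T2 := le_trans hc.le (min_le_left _ _)
    have h2 := hT2 b hble
    have hb' : φ b = Vfun R u d p f g w₀ := hb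
    rw [hV] at hb'
    have h3 : φ 0 ≤ φ bs := hbsmax h0mem
    linarith
  have hβ : Hfun R u d p f g w₀ (betaFun R u d p f g w₀) = Vfun R u d p f g w₀ :=
    hcl.csInf_mem hne hbb
  intro b
  rw [hβ, hV]
  exact hglob b

end helpers

set_option maxHeartbeats 1000000 in
/-- If `(w₀, β(w₀)) ∈ C^u_i ∩ C^d_j` for some `1 ≤ i ≤ Nu`, `1 ≤ j ≤ Nd`,
then `V'⁺(w₀) = max{ ((1−p)/(1−q)) g'⁺(x^d_j), (p/q) f'⁺(x^u_i) }`, `q = (R−d)/(u−d)`. -/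
theorem stmt_14 (R u d p : ℝ) (hd : 0 < d) (hdR : d < R) (hRu : R < u)
    (hp0 : 0 < p) (hp1 : p < 1)
    (q : ℝ) (hq : q = (R - d) / (u - d))
    (f g : ℝ → ℝ) (Nu Nd : ℕ) (xu xd : ℕ → ℝ)
    (hf : HasSingVals f Nu xu) (hg : HasSingVals g Nd xd)
    (hNu : 1 ≤ Nu) (hNd : 1 ≤ Nd)
    (hfnc : ∃ a b : ℝ, f a ≠ f b) (hgnc : ∃ a b : ℝ, g a ≠ g b)
    (w₀ : ℝ) (i j : ℕ) (hi1 : 1 ≤ i) (hiN : i ≤ Nu) (hj1 : 1 ≤ j) (hjN : j ≤ Nd)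
    (hmem : (w₀, betaFun R u d p f g w₀) ∈ Cu R u (xu i) ∩ Cd R d (xd j)) :
    rDeriv (Vfun R u d p f g) w₀ =
      max ((1 - p) / (1 - q) * rDeriv g (xd j)) (p / q * rDeriv f (xu i)) := by
  have hR : 0 < R := hd.trans hdR
  have huR : 0 < u - R := by linarith
  have hRd : 0 < R - d := by linarith
  have hud : 0 < u - d := by linarith
  have hp1' : (0:ℝ) < 1 - p := by linarith
  have hq0 : 0 < q := by rw [hq]; positivity
  have hq1 : q < 1 := by rw [hq, div_lt_one hud]; linarith
  have h1q : 0 < 1 - q := by linarith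
  have hqsum : q * (u - R) + (1 - q) * (d - R) = 0 := by
    rw [hq]; field_simp; ring
  have hcf := hf.1.2.1
  have hcg := hg.1.2.1
  set b₀ : ℝ := betaFun R u d p f g w₀ with hb₀def
  have hyu : w₀ * R + b₀ * (u - R) = xu i := hmem.1
  have hzd : w₀ * R + b₀ * (d - R) = xd j := hmem.2
  set fp : ℝ := rDeriv f (xu i) with hfpdef
  set fm : ℝ := lDeriv f (xu i) with hfmdef
  set gp : ℝ := rDeriv g (xd j) with hgpdef
  set gm : ℝ := lDeriv g (xd j) with hgmdef
  have hkf : fp < fm := hf.2 i hi1 hiN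
  have hkg : gp < gm := hg.2 j hj1 hjN
  obtain ⟨ηfR, cfR, hηfR, hfR⟩ := right_piece hf hi1 hiN
  obtain ⟨ηfL, cfL, hηfL, hfL⟩ := left_piece hf hi1 hiN
  obtain ⟨ηgR, cgR, hηgR, hgR⟩ := right_piece hg hj1 hjN
  obtain ⟨ηgL, cgL, hηgL, hgL⟩ := left_piece hg hj1 hjN
  have hfval : f (xu i) = fp * (xu i) + cfR := hfR _ ⟨le_rfl, by linarith⟩
  have hfvalL : f (xu i) = fm * (xu i) + cfL := hfL _ ⟨by linarith, le_rfl⟩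
  have hgval : g (xd j) = gp * (xd j) + cgR := hgR _ ⟨le_rfl, by linarith⟩
  have hgvalL : g (xd j) = gm * (xd j) + cgL := hgL _ ⟨by linarith, le_rfl⟩
  -- attainment of the sup at b₀
  have hglob : ∀ b, Hfun R u d p f g w₀ b ≤ Hfun R u d p f g w₀ b₀ := by
    have hAf := classH_affine_upper hf hNu
    have hAg := classH_affine_upper hg hNd
    obtain ⟨xbf, hxbf⟩ := hf.1.2.2
    obtain ⟨xbg, hxbg⟩ := hg.1.2.2
    exact exists_max R u d p hR hRu hdR hp0 hp1 f g hcf hcg hAf hAg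
      ⟨f xbf, classH_bddAbove hcf hxbf⟩ ⟨g xbg, classH_bddAbove hcg hxbg⟩ w₀
  -- first optimality inequality (perturbation b₀ + ε)
  have I1 : p * fp * (u - R) ≤ (1 - p) * gm * (R - d) := by
    set ε : ℝ := min (ηfR / (u - R)) (ηgL / (R - d)) with hεdef
    have hε : 0 < ε := lt_min (by positivity) (by positivity)
    have hεf : ε * (u - R) ≤ ηfR := by
      rw [← le_div_iff₀ huR]; exact min_le_left _ _
    have hεg : ε * (R - d) ≤ ηgL := by
      rw [← le_div_iff₀ hRd]; exact min_le_right _ _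
    have hy1 : w₀ * R + (b₀ + ε) * (u - R) = xu i + ε * (u - R) := by
      rw [← hyu]; ring
    have hz1 : w₀ * R + (b₀ + ε) * (d - R) = xd j - ε * (R - d) := by
      rw [← hzd]; ring
    have hb := hglob (b₀ + ε)
    simp only [Hfun] at hb
    rw [hy1, hz1, hyu, hzd] at hb
    have key := (mul_le_mul_iff_right₀ (by positivity : (0:ℝ) < R⁻¹)).1 hb
    have hεu : 0 ≤ ε * (u - R) := mul_nonneg hε.le huR.le
    have hεd : 0 ≤ ε * (R - d) := mul_nonneg hε.le hRd.le
    have e1 : f (xu i + ε * (u - R)) = fp * (xu i + ε * (u - R)) + cfR :=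
      hfR _ ⟨by linarith, by linarith⟩
    have e2 : g (xd j - ε * (R - d)) = gm * (xd j - ε * (R - d)) + cgL :=
      hgL _ ⟨by linarith, by linarith⟩
    rw [e1, e2, hfval, hgvalL] at key
    have h' : (p * fp * (u - R)) * ε ≤ ((1 - p) * gm * (R - d)) * ε := by
      ring_nf at key ⊢; linarith
    exact le_of_mul_le_mul_right h' hε
  -- second optimality inequality (perturbation b₀ - ε)
  have I2 : (1 - p) * gp * (R - d) ≤ p * fm * (u - R) := by
    set ε : ℝ := min (ηfL / (u - R)) (ηgR / (R - d)) with hεdef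
    have hε : 0 < ε := lt_min (by positivity) (by positivity)
    have hεf : ε * (u - R) ≤ ηfL := by
      rw [← le_div_iff₀ huR]; exact min_le_left _ _
    have hεg : ε * (R - d) ≤ ηgR := by
      rw [← le_div_iff₀ hRd]; exact min_le_right _ _
    have hy1 : w₀ * R + (b₀ - ε) * (u - R) = xu i - ε * (u - R) := by
      rw [← hyu]; ring
    have hz1 : w₀ * R + (b₀ - ε) * (d - R) = xd j + ε * (R - d) := by
      rw [← hzd]; ring
    have hb := hglob (b₀ - ε)
    simp only [Hfun] at hb
    rw [hy1, hz1, hyu, hzd] at hb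
    have key := (mul_le_mul_iff_right₀ (by positivity : (0:ℝ) < R⁻¹)).1 hb
    have hεu : 0 ≤ ε * (u - R) := mul_nonneg hε.le huR.le
    have hεd : 0 ≤ ε * (R - d) := mul_nonneg hε.le hRd.le
    have e1 : f (xu i - ε * (u - R)) = fm * (xu i - ε * (u - R)) + cfL :=
      hfL _ ⟨by linarith, by linarith⟩
    have e2 : g (xd j + ε * (R - d)) = gp * (xd j + ε * (R - d)) + cgR :=
      hgR _ ⟨by linarith, by linarith⟩
    rw [e1, e2, hfvalL, hgval] at key
    have h' : ((1 - p) * gp * (R - d)) * ε ≤ (p * fm * (u - R)) * ε := by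
      ring_nf at key ⊢; linarith
    exact le_of_mul_le_mul_right h' hε
  -- q-normalized versions
  have hqu : u - R = (1 - q) * (u - d) := by rw [hq]; field_simp; ring
  have hqd : R - d = q * (u - d) := by rw [hq]; field_simp
  have I1' : p * fp * (1 - q) ≤ (1 - p) * gm * q := by
    rw [hqu, hqd] at I1
    have h' : (p * fp * (1 - q)) * (u - d) ≤ ((1 - p) * gm * q) * (u - d) := by
      nlinarith [I1]
    exact le_of_mul_le_mul_right h' hud
  have I2' : (1 - p) * gp * q ≤ p * fm * (1 - q) := by
    rw [hqu, hqd] at I2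
    have h' : ((1 - p) * gp * q) * (u - d) ≤ (p * fm * (1 - q)) * (u - d) := by
      nlinarith [I2]
    exact le_of_mul_le_mul_right h' hud
  set M : ℝ := max ((1 - p) / (1 - q) * gp) (p / q * fp) with hMdef
  -- bounds on M
  have hqMlow : p * fp ≤ q * M := by
    have h1 : p / q * fp ≤ M := le_max_right _ _
    have h2 := mul_le_mul_of_nonneg_left h1 hq0.le
    have h3 : q * (p / q * fp) = p * fp := by field_simp
    linarith [h3 ▸ h2]
  have h1qMlow : (1 - p) * gp ≤ (1 - q) * M := by
    have h1 : (1 - p) / (1 - q) * gp ≤ M := le_max_left _ _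
    have h2 := mul_le_mul_of_nonneg_left h1 h1q.le
    have h3 : (1 - q) * ((1 - p) / (1 - q) * gp) = (1 - p) * gp := by field_simp
    linarith [h3 ▸ h2]
  have hqMhigh : q * M ≤ p * fm := by
    rcases max_cases ((1 - p) / (1 - q) * gp) (p / q * fp) with ⟨hM, _⟩ | ⟨hM, _⟩
    · rw [hMdef, hM]
      have h' : (q * ((1 - p) / (1 - q) * gp)) * (1 - q) ≤ (p * fm) * (1 - q) := by
        have h3 : (q * ((1 - p) / (1 - q) * gp)) * (1 - q) = (1 - p) * gp * q := by
          field_simp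
        rw [h3]; linarith [I2']
      exact le_of_mul_le_mul_right h' h1q
    · rw [hMdef, hM]
      have h3 : q * (p / q * fp) = p * fp := by field_simp
      rw [h3]; exact mul_le_mul_of_nonneg_left hkf.le hp0.le
  have h1qMhigh : (1 - q) * M ≤ (1 - p) * gm := by
    rcases max_cases ((1 - p) / (1 - q) * gp) (p / q * fp) with ⟨hM, _⟩ | ⟨hM, _⟩
    · rw [hMdef, hM]
      have h3 : (1 - q) * ((1 - p) / (1 - q) * gp) = (1 - p) * gp := by field_simp
      rw [h3]; exact mul_le_mul_of_nonneg_left hkg.le hp1'.le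
    · rw [hMdef, hM]
      have h' : ((1 - q) * (p / q * fp)) * q ≤ ((1 - p) * gm) * q := by
        have h3 : ((1 - q) * (p / q * fp)) * q = p * fp * (1 - q) := by
          field_simp
        rw [h3]; linarith [I1']
      exact le_of_mul_le_mul_right h' hq0
  -- supergradient bounds
  have hm1 : fp ≤ q * M / p := by rw [le_div_iff₀ hp0]; linarith
  have hm2 : q * M / p ≤ fm := by rw [div_le_iff₀ hp0]; linarith
  have hm1' : gp ≤ (1 - q) * M / (1 - p) := by rw [le_div_iff₀ hp1']; linarith
  have hm2' : (1 - q) * M / (1 - p) ≤ gm := by rw [div_le_iff₀ hp1']; linarith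
  have hfs := concave_supergrad hcf hηfR hηfL hfR hfL hm1 hm2
  have hgs := concave_supergrad hcg hηgR hηgL hgR hgL hm1' hm2'
  -- global upper bound on H
  have hub : ∀ w b, Hfun R u d p f g w b ≤ Hfun R u d p f g w₀ b₀ + M * (w - w₀) := by
    intro w b
    have hy0 : q * (xu i) + (1 - q) * (xd j) = w₀ * R := by
      linear_combination (-q) * hyu - (1 - q) * hzd + b₀ * hqsum
    have hy' : q * (w * R + b * (u - R)) + (1 - q) * (w * R + b * (d - R)) = w * R := by
      linear_combination b * hqsum
    have h1 := hfs (w * R + b * (u - R))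
    have h2 := hgs (w * R + b * (d - R))
    have hh1 := mul_le_mul_of_nonneg_left h1 hp0.le
    have hh2 := mul_le_mul_of_nonneg_left h2 hp1'.le
    have hlin : p * (f (xu i) + q * M / p * (w * R + b * (u - R) - xu i))
        + (1 - p) * (g (xd j) + (1 - q) * M / (1 - p) * (w * R + b * (d - R) - xd j))
        = (p * f (xu i) + (1 - p) * g (xd j)) + M * (w - w₀) * R := by
      have hpm : p * (q * M / p) = q * M := by field_simp
      have hpm' : (1 - p) * ((1 - q) * M / (1 - p)) = (1 - q) * M := by field_simp
      linear_combination (w * R + b * (u - R) - xu i) * hpm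
        + (w * R + b * (d - R) - xd j) * hpm' + M * hy' - M * hy0
    have hinner : p * f (w * R + b * (u - R)) + (1 - p) * g (w * R + b * (d - R))
        ≤ (p * f (xu i) + (1 - p) * g (xd j)) + M * (w - w₀) * R := by
      calc p * f (w * R + b * (u - R)) + (1 - p) * g (w * R + b * (d - R))
          ≤ p * (f (xu i) + q * M / p * (w * R + b * (u - R) - xu i))
            + (1 - p) * (g (xd j) + (1 - q) * M / (1 - p) * (w * R + b * (d - R) - xd j)) :=
            add_le_add hh1 hh2
        _ = _ := hlin
    have := mul_le_mul_of_nonneg_left hinner (by positivity : (0:ℝ) ≤ R⁻¹)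
    calc Hfun R u d p f g w b
        = R⁻¹ * (p * f (w * R + b * (u - R)) + (1 - p) * g (w * R + b * (d - R))) := rfl
      _ ≤ R⁻¹ * ((p * f (xu i) + (1 - p) * g (xd j)) + M * (w - w₀) * R) := this
      _ = Hfun R u d p f g w₀ b₀ + M * (w - w₀) := by
          simp only [Hfun]; rw [hyu, hzd]; field_simp
  have hBdd : ∀ w, BddAbove (Set.range (fun b => Hfun R u d p f g w b)) := fun w =>
    ⟨Hfun R u d p f g w₀ b₀ + M * (w - w₀), by rintro _ ⟨b, rfl⟩; exact hub w b⟩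
  have hVub : ∀ w, Vfun R u d p f g w ≤ Hfun R u d p f g w₀ b₀ + M * (w - w₀) :=
    fun w => ciSup_le (hub w)
  -- lower bound on a right neighborhood
  set κ1 : ℝ := R * (u - d) / (u - R) with hκ1def
  set κ2 : ℝ := R * (u - d) / (R - d) with hκ2def
  have hκ1 : 0 < κ1 := by positivity
  have hκ2 : 0 < κ2 := by positivity
  set ε : ℝ := min (ηgR / κ1) (ηfR / κ2) with hεdef
  have hε : 0 < ε := lt_min (by positivity) (by positivity)
  have hR0 : R ≠ 0 := ne_of_gt hR
  have huR0 : u - R ≠ 0 := ne_of_gt huR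
  have hRd0 : R - d ≠ 0 := ne_of_gt hRd
  have hud0 : u - d ≠ 0 := ne_of_gt hud
  have hone_q : 1 - q = (u - R) / (u - d) := by
    rw [hq]; field_simp; ring
  have hid1 : R⁻¹ * κ1 = 1 / (1 - q) := by
    rw [hκ1def, hone_q]; field_simp
  have hid2 : R⁻¹ * κ2 = 1 / q := by
    rw [hκ2def, hq]; field_simp
  have hlow : ∀ w ∈ Set.Icc w₀ (w₀ + ε),
      Hfun R u d p f g w₀ b₀ + M * (w - w₀) ≤ Vfun R u d p f g w := by
    intro w hw
    have hδ0 : 0 ≤ w - w₀ := by linarith [hw.1]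
    have hδε : w - w₀ ≤ ε := by linarith [hw.2]
    -- candidate 1 : stay on the line C^u
    have hc1 : Hfun R u d p f g w (b₀ - (w - w₀) * R / (u - R))
        = Hfun R u d p f g w₀ b₀ + (1 - p) / (1 - q) * gp * (w - w₀) := by
      have hyb1 : w * R + (b₀ - (w - w₀) * R / (u - R)) * (u - R) = xu i := by
        rw [← hyu]; field_simp; ring
      have hzb1 : w * R + (b₀ - (w - w₀) * R / (u - R)) * (d - R)
          = xd j + (w - w₀) * κ1 := by
        rw [← hzd, hκ1def]; field_simp; ring
      have hmemg : (w - w₀) * κ1 ≤ ηgR := by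
        have h1 : w - w₀ ≤ ηgR / κ1 := hδε.trans (min_le_left _ _)
        rw [← le_div_iff₀ hκ1]; exact h1
      have hκnn : 0 ≤ (w - w₀) * κ1 := mul_nonneg hδ0 hκ1.le
      have hgv : g (xd j + (w - w₀) * κ1) = gp * (xd j + (w - w₀) * κ1) + cgR :=
        hgR _ ⟨by linarith, by linarith⟩
      simp only [Hfun]
      rw [hyb1, hzb1, hyu, hzd, hgv, hgval]
      linear_combination ((1 - p) * gp * (w - w₀)) * hid1
    -- candidate 2 : stay on the line C^d
    have hc2 : Hfun R u d p f g w (b₀ - (w - w₀) * R / (d - R))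
        = Hfun R u d p f g w₀ b₀ + p / q * fp * (w - w₀) := by
      have hdR' : d - R ≠ 0 := by linarith
      have hyb2 : w * R + (b₀ - (w - w₀) * R / (d - R)) * (u - R)
          = xu i + (w - w₀) * κ2 := by
        rw [← hyu, hκ2def]; field_simp; ring
      have hzb2 : w * R + (b₀ - (w - w₀) * R / (d - R)) * (d - R) = xd j := by
        rw [← hzd]; field_simp; ring
      have hmemf : (w - w₀) * κ2 ≤ ηfR := by
        have h1 : w - w₀ ≤ ηfR / κ2 := hδε.trans (min_le_right _ _)
        rw [← le_div_iff₀ hκ2]; exact h1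
      have hκnn : 0 ≤ (w - w₀) * κ2 := mul_nonneg hδ0 hκ2.le
      have hfv : f (xu i + (w - w₀) * κ2) = fp * (xu i + (w - w₀) * κ2) + cfR :=
        hfR _ ⟨by linarith, by linarith⟩
      simp only [Hfun]
      rw [hyb2, hzb2, hyu, hzd, hfv, hfval]
      linear_combination (p * fp * (w - w₀)) * hid2
    rcases max_cases ((1 - p) / (1 - q) * gp) (p / q * fp) with ⟨hM, _⟩ | ⟨hM, _⟩
    · have := le_ciSup (hBdd w) (b₀ - (w - w₀) * R / (u - R))
      rw [hc1] at this
      calc Hfun R u d p f g w₀ b₀ + M * (w - w₀)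
          = Hfun R u d p f g w₀ b₀ + (1 - p) / (1 - q) * gp * (w - w₀) := by
            rw [hMdef, hM]
        _ ≤ Vfun R u d p f g w := this
    · have := le_ciSup (hBdd w) (b₀ - (w - w₀) * R / (d - R))
      rw [hc2] at this
      calc Hfun R u d p f g w₀ b₀ + M * (w - w₀)
          = Hfun R u d p f g w₀ b₀ + p / q * fp * (w - w₀) := by rw [hMdef, hM]
        _ ≤ Vfun R u d p f g w := this
  have hVeq : ∀ w ∈ Set.Icc w₀ (w₀ + ε),
      Vfun R u d p f g w = Hfun R u d p f g w₀ b₀ + M * (w - w₀) :=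
    fun w hw => le_antisymm (hVub w) (hlow w hw)
  have hV₀ : Vfun R u d p f g w₀ = Hfun R u d p f g w₀ b₀ := by
    have := hVeq w₀ ⟨le_rfl, by linarith⟩
    simpa using this
  -- compute the right derivative
  have haff : HasDerivWithinAt
      (fun w => Hfun R u d p f g w₀ b₀ + M * (w - w₀)) M (Set.Ioi w₀) w₀ := by
    have h1 : HasDerivAt (fun w : ℝ => Hfun R u d p f g w₀ b₀ + M * (w - w₀)) M w₀ := by
      simpa using (((hasDerivAt_id w₀).sub_const w₀).const_mul M).const_add
        (Hfun R u d p f g w₀ b₀)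
    exact h1.hasDerivWithinAt
  have hEv : (Vfun R u d p f g)
      =ᶠ[nhdsWithin w₀ (Set.Ioi w₀)] (fun w => Hfun R u d p f g w₀ b₀ + M * (w - w₀)) := by
    filter_upwards [Ioc_mem_nhdsGT (by linarith : w₀ < w₀ + ε)] with w hw
    exact hVeq w ⟨hw.1.le, hw.2⟩
  have hx0 : Vfun R u d p f g w₀ = Hfun R u d p f g w₀ b₀ + M * (w₀ - w₀) := by
    rw [hV₀]; ring
  have hder : HasDerivWithinAt (Vfun R u d p f g) M (Set.Ioi w₀) w₀ :=
    haff.congr_of_eventuallyEq hEv hx0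
  exact hder.derivWithin (uniqueDiffWithinAt_Ioi _)
end

section
/- Suppose w₀ ∈ ℝ is such that (w₀, β(w₀)) ∈ C^u_i ∩ C^d_j for some 1 ≤ i ≤ N_u and 1 ≤ j ≤ N_d. Then the left derivative of V at w₀ satisfies V'⁻(w₀) = min{ ((1 − p)/(1 − q))·g'⁻(x^d_j), (p/q)·f'⁻(x^u_i) }, where q = (R − d)/(u − d). -/
open Filter Set

/-- Left derivative of an eventually-affine function. -/
lemma myLDeriv (f : ℝ → ℝ) (x δ a c : ℝ) (hδ : 0 < δ)
    (h : ∀ y ∈ Set.Icc (x - δ) x, f y = a * y + c) :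
    derivWithin f (Set.Iio x) x = a := by
  have hx : f x = a * x + c := h x ⟨by linarith, le_refl x⟩
  have heq : f =ᶠ[nhdsWithin x (Set.Iio x)] (fun y => a * y + c) := by
    filter_upwards [inter_mem_nhdsWithin (Set.Iio x) (Ioi_mem_nhds (show x - δ < x by linarith))] with y hy
    exact h y ⟨le_of_lt hy.2, le_of_lt hy.1⟩
  rw [Filter.EventuallyEq.derivWithin_eq heq hx]
  have : HasDerivWithinAt (fun y : ℝ => a * y + c) (a * 1) (Set.Iio x) x :=
    (((hasDerivAt_id x).const_mul a).add_const c).hasDerivWithinAt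
  simpa using this.derivWithin (uniqueDiffWithinAt_Iio x)

lemma myRDeriv (f : ℝ → ℝ) (x δ a c : ℝ) (hδ : 0 < δ)
    (h : ∀ y ∈ Set.Icc x (x + δ), f y = a * y + c) :
    derivWithin f (Set.Ioi x) x = a := by
  have hx : f x = a * x + c := h x ⟨le_refl x, by linarith⟩
  have heq : f =ᶠ[nhdsWithin x (Set.Ioi x)] (fun y => a * y + c) := by
    filter_upwards [inter_mem_nhdsWithin (Set.Ioi x) (Iio_mem_nhds (show x < x + δ by linarith))] with y hy
    exact h y ⟨le_of_lt hy.1, le_of_lt hy.2⟩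
  rw [Filter.EventuallyEq.derivWithin_eq heq hx]
  have : HasDerivWithinAt (fun y : ℝ => a * y + c) (a * 1) (Set.Ioi x) x :=
    (((hasDerivAt_id x).const_mul a).add_const c).hasDerivWithinAt
  simpa using this.derivWithin (uniqueDiffWithinAt_Ioi x)

/-- supergradient bound to the left from a left affine piece of a concave function. -/
lemma superLeft (f : ℝ → ℝ) (hf : ConcaveOn ℝ Set.univ f) (x δ a c : ℝ) (hδ : 0 < δ)
    (h : ∀ y ∈ Set.Icc (x - δ) x, f y = a * y + c) :
    ∀ y ≤ x, f y ≤ f x + a * (y - x) := by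
  intro y hy
  have hx : f x = a * x + c := h x ⟨by linarith, le_refl x⟩
  rcases le_or_gt (x - δ) y with h1 | h1
  · rw [h y ⟨h1, hy⟩, hx]; exact le_of_eq (by ring)
  · -- y < x - δ
    set lam : ℝ := δ / (x - y) with hlam
    have hxy : 0 < x - y := by linarith
    have hlam0 : 0 < lam := div_pos hδ hxy
    have hlam1 : lam < 1 := (div_lt_one hxy).2 (by linarith)
    have hcomb : lam * y + (1 - lam) * x = x - δ := by
      field_simp [hlam]
      linear_combination -1 * (div_mul_cancel₀ δ (ne_of_gt hxy) : lam * (x - y) = δ)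
    have hc := hf.2 (Set.mem_univ y) (Set.mem_univ x) (show (0:ℝ) ≤ lam from le_of_lt hlam0)
      (show (0:ℝ) ≤ 1 - lam by linarith) (show lam + (1 - lam) = 1 by ring)
    simp only [smul_eq_mul] at hc
    rw [hcomb] at hc
    have hfd : f (x - δ) = a * (x - δ) + c := h _ ⟨le_refl _, by linarith⟩
    have hls : lam * (x - y) = δ := div_mul_cancel₀ δ (ne_of_gt hxy)
    -- from hc: lam * f y + (1-lam) * f x ≤ f x - a * δ
    have key : lam * f y ≤ lam * f x - a * δ := by
      rw [hfd, hx] at hc; nlinarith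
    have : lam * f y ≤ lam * (f x + a * (y - x)) := by
      calc lam * f y ≤ lam * f x - a * δ := key
        _ = lam * (f x + a * (y - x)) := by rw [← hls]; ring
    exact le_of_mul_le_mul_left this hlam0

lemma superRight (f : ℝ → ℝ) (hf : ConcaveOn ℝ Set.univ f) (x δ a c : ℝ) (hδ : 0 < δ)
    (h : ∀ y ∈ Set.Icc x (x + δ), f y = a * y + c) :
    ∀ y, x ≤ y → f y ≤ f x + a * (y - x) := by
  intro y hy
  have hx : f x = a * x + c := h x ⟨le_refl x, by linarith⟩
  rcases le_or_gt y (x + δ) with h1 | h1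
  · rw [h y ⟨hy, h1⟩, hx]; exact le_of_eq (by ring)
  · set lam : ℝ := δ / (y - x) with hlam
    have hxy : 0 < y - x := by linarith
    have hlam0 : 0 < lam := div_pos hδ hxy
    have hlam1 : lam < 1 := (div_lt_one hxy).2 (by linarith)
    have hcomb : lam * y + (1 - lam) * x = x + δ := by
      field_simp [hlam]
      linear_combination (div_mul_cancel₀ δ (ne_of_gt hxy) : lam * (y - x) = δ)
    have hc := hf.2 (Set.mem_univ y) (Set.mem_univ x) (show (0:ℝ) ≤ lam from le_of_lt hlam0)
      (show (0:ℝ) ≤ 1 - lam by linarith) (show lam + (1 - lam) = 1 by ring)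
    simp only [smul_eq_mul] at hc
    rw [hcomb] at hc
    have hfd : f (x + δ) = a * (x + δ) + c := h _ ⟨by linarith, le_refl _⟩
    have hls : lam * (y - x) = δ := div_mul_cancel₀ δ (ne_of_gt hxy)
    have key : lam * f y ≤ lam * f x + a * δ := by
      rw [hfd, hx] at hc; nlinarith
    have : lam * f y ≤ lam * (f x + a * (y - x)) := by
      calc lam * f y ≤ lam * f x + a * δ := key
        _ = lam * (f x + a * (y - x)) := by rw [← hls]; ring
    exact le_of_mul_le_mul_left this hlam0

lemma concave_tendsto_atBot (f : ℝ → ℝ) (hf : ConcaveOn ℝ Set.univ f)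
    (y z : ℝ) (hyz : y < z) (hlt : f y < f z) :
    Filter.Tendsto f Filter.atBot Filter.atBot := by
  set m : ℝ := (f z - f y) / (z - y) with hm
  have hzy : 0 < z - y := by linarith
  have hm0 : 0 < m := div_pos (by linarith) hzy
  have hbound : ∀ x < y, f x ≤ f z - m * (z - x) := by
    intro x hx
    set lam : ℝ := (z - y) / (z - x) with hlam
    have hzx : 0 < z - x := by linarith
    have hlam0 : 0 < lam := div_pos hzy hzx
    have hlam1 : lam < 1 := (div_lt_one hzx).2 (by linarith)
    have hcomb : lam * x + (1 - lam) * z = y := by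
      field_simp [hlam]; linear_combination -1 * (div_mul_cancel₀ (z - y) (ne_of_gt hzx) : lam * (z - x) = z - y)
    have hc := hf.2 (Set.mem_univ x) (Set.mem_univ z) (show (0:ℝ) ≤ lam from le_of_lt hlam0)
      (show (0:ℝ) ≤ 1 - lam by linarith) (show lam + (1 - lam) = 1 by ring)
    simp only [smul_eq_mul] at hc
    rw [hcomb] at hc
    -- lam * f x + (1 - lam) * f z ≤ f y
    have hls : lam * (z - x) = z - y := div_mul_cancel₀ _ (ne_of_gt hzx)
    have hms : m * (z - y) = f z - f y := div_mul_cancel₀ _ (ne_of_gt hzy)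
    have : lam * f x ≤ lam * (f z - m * (z - x)) := by
      have h2 : m * (lam * (z - x)) = f z - f y := by rw [hls]; exact hms
      nlinarith [hc, h2]
    exact le_of_mul_le_mul_left this hlam0
  have hgb : Tendsto (fun x : ℝ => f z - m * (z - x)) atBot atBot := by
    have h1 : Tendsto (fun x : ℝ => m * x) atBot atBot :=
      (tendsto_const_mul_atBot_of_pos hm0).2 tendsto_id
    have h2 : Tendsto (fun x : ℝ => (f z - m * z) + m * x) atBot atBot :=
      tendsto_atBot_add_const_left _ _ h1
    exact h2.congr (fun x => by ring)
  refine tendsto_atBot_mono' atBot ?_ hgb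
  filter_upwards [eventually_lt_atBot y] with x hx
  exact hbound x hx

lemma exists_drop (f : ℝ → ℝ) (hf : ConcaveOn ℝ Set.univ f) (xb : ℝ)
    (hconst : ∀ y, xb ≤ y → f y = f xb) (hnc : ∃ a b : ℝ, f a ≠ f b) :
    ∃ y, y < xb ∧ f y < f xb := by
  obtain ⟨a, b, hab⟩ := hnc
  have hne : ∃ y, f y ≠ f xb := by
    by_contra h
    push_neg at h
    exact hab (by rw [h a, h b])
  obtain ⟨y, hy⟩ := hne
  have hylt : y < xb := by
    by_contra h
    push_neg at h
    exact hy (hconst y h)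
  refine ⟨y, hylt, ?_⟩
  rcases lt_or_gt_of_ne hy with h | h
  · exact h
  · -- f y > f xb : contradiction with concavity using point 2*xb - y
    exfalso
    set z : ℝ := 2 * xb - y with hz
    have hzb : xb ≤ z := by simp only [hz]; linarith
    have hfz : f z = f xb := hconst z hzb
    have hc := hf.2 (Set.mem_univ y) (Set.mem_univ z)
      (show (0:ℝ) ≤ 1/2 by norm_num) (show (0:ℝ) ≤ 1/2 by norm_num) (by norm_num)
    simp only [smul_eq_mul] at hc
    have hcomb : 1/2 * y + 1/2 * z = xb := by simp only [hz]; ring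
    rw [hcomb, hfz] at hc
    linarith

lemma leftPiece (f : ℝ → ℝ) (N : ℕ) (x : ℕ → ℝ) (h : PWAff f N x) (i : ℕ)
    (hi1 : 1 ≤ i) (hiN : i ≤ N) :
    ∃ δ : ℝ, 0 < δ ∧ ∃ a c : ℝ, ∀ y ∈ Set.Icc (x i - δ) (x i), f y = a * y + c := by
  obtain ⟨hlt, -, hp⟩ := h
  obtain ⟨h1, hN, hmid⟩ := hp (hi1.trans hiN)
  rcases eq_or_lt_of_le hi1 with rfl | h2i
  · obtain ⟨a, c, hac⟩ := h1
    exact ⟨1, one_pos, a, c, fun y hy => hac y hy.2⟩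
  · have hi' : 1 ≤ i - 1 := by omega
    have hieq : i - 1 + 1 = i := by omega
    have haff := hmid (i-1) hi' (by omega)
    have hlt' := hlt (i-1) hi' (by omega)
    rw [hieq] at haff hlt'
    obtain ⟨a, c, hac⟩ := haff
    refine ⟨x i - x (i-1), by linarith, a, c, fun y hy => hac y ⟨?_, hy.2⟩⟩
    have := hy.1; linarith

lemma rightPiece (f : ℝ → ℝ) (N : ℕ) (x : ℕ → ℝ) (h : PWAff f N x) (i : ℕ)
    (hi1 : 1 ≤ i) (hiN : i ≤ N) :
    ∃ δ : ℝ, 0 < δ ∧ ∃ a c : ℝ, ∀ y ∈ Set.Icc (x i) (x i + δ), f y = a * y + c := by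
  obtain ⟨hlt, -, hp⟩ := h
  obtain ⟨h1, hN, hmid⟩ := hp (hi1.trans hiN)
  rcases eq_or_lt_of_le hiN with rfl | hiltN
  · obtain ⟨a, c, hac⟩ := hN
    exact ⟨1, one_pos, a, c, fun y hy => hac y hy.1⟩
  · have haff := hmid i hi1 (by omega)
    have hlt' := hlt i hi1 (by omega)
    obtain ⟨a, c, hac⟩ := haff
    refine ⟨x (i+1) - x i, by linarith, a, c, fun y hy => hac y ⟨hy.1, ?_⟩⟩
    have := hy.2; linarith

lemma twoSided (f : ℝ → ℝ) (x a b γ : ℝ)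
    (hl : ∀ y ≤ x, f y ≤ f x + a * (y - x))
    (hr : ∀ y, x ≤ y → f y ≤ f x + b * (y - x))
    (hbγ : b ≤ γ) (hγa : γ ≤ a) : ∀ y, f y ≤ f x + γ * (y - x) := by
  intro y
  rcases le_total y x with h | h
  · have := hl y h; nlinarith
  · have := hr y h; nlinarith
set_option maxHeartbeats 1000000 in
/-- If `(w₀, β(w₀)) ∈ C^u_i ∩ C^d_j` for some `1 ≤ i ≤ Nu`, `1 ≤ j ≤ Nd`,
then `V'⁻(w₀) = min{ ((1−p)/(1−q)) g'⁻(x^d_j), (p/q) f'⁻(x^u_i) }`, `q = (R−d)/(u−d)`. -/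
theorem stmt_15 (R u d p : ℝ) (hd : 0 < d) (hdR : d < R) (hRu : R < u)
    (hp0 : 0 < p) (hp1 : p < 1)
    (q : ℝ) (hq : q = (R - d) / (u - d))
    (f g : ℝ → ℝ) (Nu Nd : ℕ) (xu xd : ℕ → ℝ)
    (hf : HasSingVals f Nu xu) (hg : HasSingVals g Nd xd)
    (hNu : 1 ≤ Nu) (hNd : 1 ≤ Nd)
    (hfnc : ∃ a b : ℝ, f a ≠ f b) (hgnc : ∃ a b : ℝ, g a ≠ g b)
    (w₀ : ℝ) (i j : ℕ) (hi1 : 1 ≤ i) (hiN : i ≤ Nu) (hj1 : 1 ≤ j) (hjN : j ≤ Nd)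
    (hmem : (w₀, betaFun R u d p f g w₀) ∈ Cu R u (xu i) ∩ Cd R d (xd j)) :
    lDeriv (Vfun R u d p f g) w₀ =
      min ((1 - p) / (1 - q) * lDeriv g (xd j)) (p / q * lDeriv f (xu i)) := by
  classical
  -- basic positivity
  have hR : 0 < R := lt_trans hd hdR
  have huR : 0 < u - R := by linarith
  have hRd : 0 < R - d := by linarith
  have hud : 0 < u - d := by linarith
  have hdR' : d - R < 0 := by linarith
  have hp1' : 0 < 1 - p := by linarith
  have hq0 : 0 < q := by rw [hq]; positivity
  have hq1 : q < 1 := by rw [hq, div_lt_one hud]; linarith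
  have h1q0 : 0 < 1 - q := by linarith
  have hqu : q * (u - d) = R - d := by rw [hq]; field_simp
  have h1qu : (1 - q) * (u - d) = u - R := by nlinarith [hqu]
  have hzero : q * (u - R) + (1 - q) * (d - R) = 0 := by
    linear_combination (1 - q) * hqu - q * h1qu
  -- unpack class H structure
  obtain ⟨⟨hfPW, hfConc, xbf, hfconst⟩, hfkink⟩ := hf
  obtain ⟨⟨hgPW, hgConc, xbg, hgconst⟩, hgkink⟩ := hg
  have hfc : Continuous f := hfConc.locallyLipschitz.continuous
  have hgc : Continuous g := hgConc.locallyLipschitz.continuous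
  obtain ⟨yf, hyf, hyf'⟩ := exists_drop f hfConc xbf hfconst hfnc
  obtain ⟨yg, hyg, hyg'⟩ := exists_drop g hgConc xbg hgconst hgnc
  have hfbot : Filter.Tendsto f Filter.atBot Filter.atBot :=
    concave_tendsto_atBot f hfConc yf xbf hyf (by rwa [hfconst xbf le_rfl] at hyf' ⊢)
  have hgbot : Filter.Tendsto g Filter.atBot Filter.atBot :=
    concave_tendsto_atBot g hgConc yg xbg hyg hyg'
  -- the objective at w₀
  set φ : ℝ → ℝ := Hfun R u d p f g w₀ with hφdef
  have hφ_eq : ∀ b, φ b = R⁻¹ * (p * f (w₀ * R + b * (u - R)) +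
      (1 - p) * g (w₀ * R + b * (d - R))) := fun b => rfl
  have hφcont : Continuous φ := by
    rw [hφdef]; unfold Hfun; fun_prop
  -- coercivity
  have hcoco : Filter.Tendsto φ (Filter.cocompact ℝ) Filter.atBot := by
    rw [cocompact_eq_atBot_atTop, Filter.tendsto_sup]
    constructor
    · have hξ : Filter.Tendsto (fun b : ℝ => w₀ * R + b * (u - R)) Filter.atBot Filter.atBot :=
        tendsto_atBot_add_const_left _ _
          ((tendsto_mul_const_atBot_of_pos huR).2 Filter.tendsto_id)
      have hη : Filter.Tendsto (fun b : ℝ => w₀ * R + b * (d - R)) Filter.atBot Filter.atTop :=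
        tendsto_atTop_add_const_left _ _
          ((tendsto_mul_const_atTop_of_neg hdR').2 Filter.tendsto_id)
      have hgev : ∀ᶠ b in Filter.atBot, g (w₀ * R + b * (d - R)) = g xbg :=
        (hη.eventually (Filter.eventually_ge_atTop xbg)).mono (fun b hb => hgconst _ hb)
      have hfpart : Filter.Tendsto (fun b : ℝ => p * f (w₀ * R + b * (u - R)))
          Filter.atBot Filter.atBot :=
        (tendsto_const_mul_atBot_of_pos hp0).2 (hfbot.comp hξ)
      have hsum : Filter.Tendsto (fun b : ℝ => p * f (w₀ * R + b * (u - R)) +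
          (1 - p) * g (w₀ * R + b * (d - R))) Filter.atBot Filter.atBot := by
        have h1 : Filter.Tendsto (fun b : ℝ => p * f (w₀ * R + b * (u - R)) + (1 - p) * g xbg)
            Filter.atBot Filter.atBot := tendsto_atBot_add_const_right _ _ hfpart
        exact h1.congr' (by filter_upwards [hgev] with b hb; rw [hb])
      have := (tendsto_const_mul_atBot_of_pos (inv_pos.2 hR)).2 hsum
      exact this.congr (fun b => (hφ_eq b).symm)
    · have hξ : Filter.Tendsto (fun b : ℝ => w₀ * R + b * (u - R)) Filter.atTop Filter.atTop :=
        tendsto_atTop_add_const_left _ _ (Filter.Tendsto.atTop_mul_const huR Filter.tendsto_id)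
      have hη : Filter.Tendsto (fun b : ℝ => w₀ * R + b * (d - R)) Filter.atTop Filter.atBot :=
        tendsto_atBot_add_const_left _ _
          ((tendsto_mul_const_atBot_of_neg hdR').2 Filter.tendsto_id)
      have hfev : ∀ᶠ b in Filter.atTop, f (w₀ * R + b * (u - R)) = f xbf :=
        (hξ.eventually (Filter.eventually_ge_atTop xbf)).mono (fun b hb => hfconst _ hb)
      have hgpart : Filter.Tendsto (fun b : ℝ => (1 - p) * g (w₀ * R + b * (d - R)))
          Filter.atTop Filter.atBot :=
        (tendsto_const_mul_atBot_of_pos hp1').2 (hgbot.comp hη)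
      have hsum : Filter.Tendsto (fun b : ℝ => p * f (w₀ * R + b * (u - R)) +
          (1 - p) * g (w₀ * R + b * (d - R))) Filter.atTop Filter.atBot := by
        have h1 : Filter.Tendsto (fun b : ℝ => p * f xbf + (1 - p) * g (w₀ * R + b * (d - R)))
            Filter.atTop Filter.atBot := tendsto_atBot_add_const_left _ _ hgpart
        exact h1.congr' (by filter_upwards [hfev] with b hb; rw [hb])
      have := (tendsto_const_mul_atBot_of_pos (inv_pos.2 hR)).2 hsum
      exact this.congr (fun b => (hφ_eq b).symm)
  -- maximizer exists
  obtain ⟨bstar, hbstar⟩ := hφcont.exists_forall_ge hcoco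
  have hbdd : BddAbove (Set.range φ) := ⟨φ bstar, by rintro _ ⟨b, rfl⟩; exact hbstar b⟩
  have hVw0 : Vfun R u d p f g w₀ = φ bstar :=
    le_antisymm (ciSup_le hbstar) (le_ciSup hbdd bstar)
  -- β is a maximizer
  have hBeq : Bset R u d p f g w₀ = {b | φ b = φ bstar} := by
    unfold Bset; rw [hVw0]
  have hβmem : betaFun R u d p f g w₀ ∈ Bset R u d p f g w₀ := by
    rw [hBeq]
    unfold betaFun
    rw [hBeq]
    have hBb : BddBelow {b | φ b = φ bstar} := by
      have hev := (hcoco.eventually (Filter.eventually_lt_atBot (φ bstar)))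
      rw [cocompact_eq_atBot_atTop] at hev
      obtain ⟨B, hB⟩ := Filter.eventually_atBot.1 (hev.filter_mono le_sup_left)
      exact ⟨B, fun b hb => by
        by_contra hcon
        push_neg at hcon
        exact absurd hb (ne_of_lt (hB b (le_of_lt hcon)))⟩
    exact (isClosed_eq hφcont continuous_const).csInf_mem ⟨bstar, rfl⟩ hBb
  set β := betaFun R u d p f g w₀ with hβdef
  have hβφ : φ β = φ bstar := by rw [hBeq] at hβmem; exact hβmem
  have hopt : ∀ b, φ b ≤ φ β := fun b => (hbstar b).trans (le_of_eq hβφ.symm)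
  have hVβ : Vfun R u d p f g w₀ = φ β := by rw [hVw0, hβφ]
  -- kink line membership
  have hu : w₀ * R + β * (u - R) = xu i := hmem.1
  have hd' : w₀ * R + β * (d - R) = xd j := hmem.2
  -- affine pieces
  obtain ⟨δf, hδf, af, cf, haf⟩ := leftPiece f Nu xu hfPW i hi1 hiN
  obtain ⟨δf', hδf', bf, cf', hbf⟩ := rightPiece f Nu xu hfPW i hi1 hiN
  obtain ⟨δg, hδg, ag, cg, hag⟩ := leftPiece g Nd xd hgPW j hj1 hjN
  obtain ⟨δg', hδg', bg, cg', hbg⟩ := rightPiece g Nd xd hgPW j hj1 hjN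
  have hlf : lDeriv f (xu i) = af := myLDeriv f _ δf af cf hδf haf
  have hrf : rDeriv f (xu i) = bf := myRDeriv f _ δf' bf cf' hδf' hbf
  have hlg : lDeriv g (xd j) = ag := myLDeriv g _ δg ag cg hδg hag
  have hrg : rDeriv g (xd j) = bg := myRDeriv g _ δg' bg cg' hδg' hbg
  have hkf : bf < af := by have := hfkink i hi1 hiN; rwa [hlf, hrf] at this
  have hkg : bg < ag := by have := hgkink j hj1 hjN; rwa [hlg, hrg] at this
  -- supergradient bounds
  have hFl : ∀ y ≤ xu i, f y ≤ f (xu i) + af * (y - xu i) :=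
    superLeft f hfConc _ δf af cf hδf haf
  have hFr : ∀ y, xu i ≤ y → f y ≤ f (xu i) + bf * (y - xu i) :=
    superRight f hfConc _ δf' bf cf' hδf' hbf
  have hGl : ∀ y ≤ xd j, g y ≤ g (xd j) + ag * (y - xd j) :=
    superLeft g hgConc _ δg ag cg hδg hag
  have hGr : ∀ y, xd j ≤ y → g y ≤ g (xd j) + bg * (y - xd j) :=
    superRight g hgConc _ δg' bg cg' hδg' hbg
  have hRinv : 0 < R⁻¹ := inv_pos.2 hR
  -- first-order conditions at the optimum
  have cond1 : p * bf * (u - R) + (1 - p) * ag * (d - R) ≤ 0 := by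
    set t := min (δf' / (u - R)) (δg / (R - d)) with htdef
    have ht0 : 0 < t := lt_min (div_pos hδf' huR) (div_pos hδg hRd)
    have ht1 : t * (u - R) ≤ δf' := by
      calc t * (u - R) ≤ (δf' / (u - R)) * (u - R) :=
            mul_le_mul_of_nonneg_right (min_le_left _ _) (le_of_lt huR)
        _ = δf' := div_mul_cancel₀ _ (ne_of_gt huR)
    have ht2 : t * (R - d) ≤ δg := by
      calc t * (R - d) ≤ (δg / (R - d)) * (R - d) :=
            mul_le_mul_of_nonneg_right (min_le_right _ _) (le_of_lt hRd)
        _ = δg := div_mul_cancel₀ _ (ne_of_gt hRd)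
    have e1 : w₀ * R + (β + t) * (u - R) = xu i + t * (u - R) := by linear_combination hu
    have e2 : w₀ * R + (β + t) * (d - R) = xd j - t * (R - d) := by linear_combination hd'
    have htp1 : 0 < t * (u - R) := mul_pos ht0 huR
    have htp2 : 0 < t * (R - d) := mul_pos ht0 hRd
    have m1 : xu i + t * (u - R) ∈ Set.Icc (xu i) (xu i + δf') :=
      ⟨by linarith, by linarith⟩
    have m2 : xd j - t * (R - d) ∈ Set.Icc (xd j - δg) (xd j) :=
      ⟨by linarith, by linarith⟩
    have hineq := hopt (β + t)
    rw [hφ_eq (β + t), hφ_eq β, e1, e2, hu, hd', hbf _ m1, hag _ m2,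
      hbf (xu i) ⟨le_rfl, by linarith⟩, hag (xd j) ⟨by linarith, le_rfl⟩] at hineq
    have h3 := le_of_mul_le_mul_left hineq hRinv
    have h4 : t * (p * bf * (u - R) + (1 - p) * ag * (d - R)) ≤ 0 := by linarith [h3]
    by_contra hcon
    push_neg at hcon
    linarith [mul_pos ht0 hcon, h4]
  have cond2 : 0 ≤ p * af * (u - R) + (1 - p) * bg * (d - R) := by
    set t := min (δf / (u - R)) (δg' / (R - d)) with htdef
    have ht0 : 0 < t := lt_min (div_pos hδf huR) (div_pos hδg' hRd)
    have ht1 : t * (u - R) ≤ δf := by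
      calc t * (u - R) ≤ (δf / (u - R)) * (u - R) :=
            mul_le_mul_of_nonneg_right (min_le_left _ _) (le_of_lt huR)
        _ = δf := div_mul_cancel₀ _ (ne_of_gt huR)
    have ht2 : t * (R - d) ≤ δg' := by
      calc t * (R - d) ≤ (δg' / (R - d)) * (R - d) :=
            mul_le_mul_of_nonneg_right (min_le_right _ _) (le_of_lt hRd)
        _ = δg' := div_mul_cancel₀ _ (ne_of_gt hRd)
    have e1 : w₀ * R + (β - t) * (u - R) = xu i - t * (u - R) := by linear_combination hu
    have e2 : w₀ * R + (β - t) * (d - R) = xd j + t * (R - d) := by linear_combination hd'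
    have htp1 : 0 < t * (u - R) := mul_pos ht0 huR
    have htp2 : 0 < t * (R - d) := mul_pos ht0 hRd
    have m1 : xu i - t * (u - R) ∈ Set.Icc (xu i - δf) (xu i) :=
      ⟨by linarith, by linarith⟩
    have m2 : xd j + t * (R - d) ∈ Set.Icc (xd j) (xd j + δg') :=
      ⟨by linarith, by linarith⟩
    have hineq := hopt (β - t)
    rw [hφ_eq (β - t), hφ_eq β, e1, e2, hu, hd', haf _ m1, hbg _ m2,
      haf (xu i) ⟨by linarith, le_rfl⟩, hbg (xd j) ⟨le_rfl, by linarith⟩] at hineq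
    have h3 := le_of_mul_le_mul_left hineq hRinv
    have h4 : 0 ≤ t * (p * af * (u - R) + (1 - p) * bg * (d - R)) := by linarith [h3]
    by_contra hcon
    push_neg at hcon
    linarith [mul_pos ht0 (neg_pos.2 hcon), h4]
  -- the slope
  set sf : ℝ := p / q * af with hsfdef
  set sg : ℝ := (1 - p) / (1 - q) * ag with hsgdef
  set s : ℝ := min sg sf with hsdef
  -- gamma bounds
  have hγf_le : s * q / p ≤ af := by
    have h5 : s ≤ sf := min_le_right sg sf
    calc s * q / p ≤ sf * q / p := by gcongr
      _ = af := by rw [hsfdef]; field_simp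
  have hγf_ge : bf ≤ s * q / p := by
    rw [le_div_iff₀ hp0]
    have e_uR : u - R = (1 - q) * (u - d) := by linarith [h1qu]
    have e_dR : d - R = -(q * (u - d)) := by linarith [hqu]
    have cond1' := cond1
    rw [e_uR, e_dR] at cond1'
    have k0 : (p * bf * (1 - q) - (1 - p) * ag * q) * (u - d) ≤ 0 := by linarith [cond1']
    have k1 : p * bf * (1 - q) ≤ (1 - p) * ag * q := by
      by_contra hcon
      push_neg at hcon
      have := mul_pos (show (0:ℝ) < p * bf * (1 - q) - (1 - p) * ag * q by linarith) hud
      linarith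
    have k2 : bf * p ≤ q * sg := by
      rw [hsgdef, show q * ((1 - p) / (1 - q) * ag) = (q * (1 - p) * ag) / (1 - q) by ring,
        le_div_iff₀ h1q0]
      linarith [k1]
    have k3 : bf * p ≤ q * sf := by
      rw [hsfdef, show q * (p / q * af) = p * af * (q / q) by ring, div_self (ne_of_gt hq0)]
      have := mul_le_mul_of_nonneg_left hkf.le hp0.le
      linarith
    calc bf * p ≤ min (q * sg) (q * sf) := le_min k2 k3
      _ = q * min sg sf := (mul_min_of_nonneg _ _ hq0.le).symm
      _ = s * q := by rw [hsdef]; ring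
  have hγg_le : s * (1 - q) / (1 - p) ≤ ag := by
    have h5 : s ≤ sg := min_le_left sg sf
    calc s * (1 - q) / (1 - p) ≤ sg * (1 - q) / (1 - p) := by gcongr
      _ = ag := by rw [hsgdef]; field_simp
  have hγg_ge : bg ≤ s * (1 - q) / (1 - p) := by
    rw [le_div_iff₀ hp1']
    have e_uR : u - R = (1 - q) * (u - d) := by linarith [h1qu]
    have e_dR : d - R = -(q * (u - d)) := by linarith [hqu]
    have cond2' := cond2
    rw [e_uR, e_dR] at cond2'
    have k0 : 0 ≤ (p * af * (1 - q) - (1 - p) * bg * q) * (u - d) := by linarith [cond2']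
    have k1 : (1 - p) * bg * q ≤ p * af * (1 - q) := by
      by_contra hcon
      push_neg at hcon
      have := mul_pos (show (0:ℝ) < (1 - p) * bg * q - p * af * (1 - q) by linarith) hud
      linarith
    have k2 : bg * (1 - p) ≤ (1 - q) * sf := by
      rw [hsfdef, show (1 - q) * (p / q * af) = ((1 - q) * p * af) / q by ring,
        le_div_iff₀ hq0]
      linarith [k1]
    have k3 : bg * (1 - p) ≤ (1 - q) * sg := by
      rw [hsgdef, show (1 - q) * ((1 - p) / (1 - q) * ag) = (1 - p) * ag * ((1 - q) / (1 - q)) by ring,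
        div_self (ne_of_gt h1q0)]
      have := mul_le_mul_of_nonneg_left hkg.le hp1'.le
      linarith
    calc bg * (1 - p) ≤ min ((1 - q) * sg) ((1 - q) * sf) := le_min k3 k2
      _ = (1 - q) * min sg sf := (mul_min_of_nonneg _ _ h1q0.le).symm
      _ = s * (1 - q) := by rw [hsdef]; ring
  -- global supergradient bounds
  have hfb : ∀ y, f y ≤ f (xu i) + (s * q / p) * (y - xu i) :=
    twoSided f (xu i) af bf (s * q / p) hFl hFr hγf_ge hγf_le
  have hgb : ∀ y, g y ≤ g (xd j) + (s * (1 - q) / (1 - p)) * (y - xd j) :=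
    twoSided g (xd j) ag bg (s * (1 - q) / (1 - p)) hGl hGr hγg_ge hγg_le
  have pγf_eq : p * (s * q / p) = s * q := by field_simp
  have pγg_eq : (1 - p) * (s * (1 - q) / (1 - p)) = s * (1 - q) := by field_simp
  have hline0 : q * xu i + (1 - q) * xd j = w₀ * R := by
    linear_combination (-q) * hu - (1 - q) * hd' + β * hzero
  have eφβ : φ β = R⁻¹ * (p * f (xu i) + (1 - p) * g (xd j)) := by
    rw [hφ_eq β, hu, hd']
  -- the key global bound
  have key : ∀ w b', Hfun R u d p f g w b' ≤ φ β + s * (w - w₀) := by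
    intro w b'
    have hξη : q * (w * R + b' * (u - R)) + (1 - q) * (w * R + b' * (d - R)) = w * R := by
      linear_combination b' * hzero
    have h1 := hfb (w * R + b' * (u - R))
    have h2 := hgb (w * R + b' * (d - R))
    have m1 := mul_le_mul_of_nonneg_left h1 hp0.le
    have m2 := mul_le_mul_of_nonneg_left h2 hp1'.le
    have e3 : p * ((s * q / p) * ((w * R + b' * (u - R)) - xu i)) +
        (1 - p) * ((s * (1 - q) / (1 - p)) * ((w * R + b' * (d - R)) - xd j)) =
        s * (R * (w - w₀)) := by
      linear_combination ((w * R + b' * (u - R)) - xu i) * pγf_eq +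
        ((w * R + b' * (d - R)) - xd j) * pγg_eq + s * hξη - s * hline0
    have hXY : p * f (w * R + b' * (u - R)) + (1 - p) * g (w * R + b' * (d - R)) ≤
        (p * f (xu i) + (1 - p) * g (xd j)) + s * (R * (w - w₀)) := by linarith [m1, m2, e3]
    have := mul_le_mul_of_nonneg_left hXY hRinv.le
    calc Hfun R u d p f g w b' = R⁻¹ * (p * f (w * R + b' * (u - R)) +
          (1 - p) * g (w * R + b' * (d - R))) := rfl
      _ ≤ R⁻¹ * ((p * f (xu i) + (1 - p) * g (xd j)) + s * (R * (w - w₀))) := this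
      _ = φ β + s * (w - w₀) := by
          rw [eφβ]
          field_simp
  have hbddw : ∀ w, BddAbove (Set.range (fun b' => Hfun R u d p f g w b')) :=
    fun w => ⟨φ β + s * (w - w₀), by rintro _ ⟨b', rfl⟩; exact key w b'⟩
  have hVle : ∀ w, Vfun R u d p f g w ≤ φ β + s * (w - w₀) :=
    fun w => ciSup_le (fun b' => key w b')
  have hVge : ∀ w b', Hfun R u d p f g w b' ≤ Vfun R u d p f g w :=
    fun w b' => le_ciSup (hbddw w) b'
  -- lower bound on a left neighborhood
  have hlow : ∃ ε : ℝ, 0 < ε ∧ ∀ w ∈ Set.Icc (w₀ - ε) w₀,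
      φ β + s * (w - w₀) ≤ Vfun R u d p f g w := by
    rcases le_total sg sf with hc | hc
    · -- s = sg : move along the g-direction, keep ξ = xu i
      have hs : s = sg := min_eq_left hc
      set c₂ : ℝ := R * (u - d) / (u - R) with hc₂def
      have hc₂ : 0 < c₂ := by positivity
      refine ⟨δg / c₂, div_pos hδg hc₂, fun w hw => ?_⟩
      set b' : ℝ := β + (w₀ - w) * R / (u - R) with hb'def
      have e_u : w * R + b' * (u - R) = xu i := by
        rw [hb'def]
        have hcancel : (w₀ - w) * R / (u - R) * (u - R) = (w₀ - w) * R :=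
          div_mul_cancel₀ _ (ne_of_gt huR)
        linear_combination hu + hcancel
      have e_d : w * R + b' * (d - R) = xd j + c₂ * (w - w₀) := by
        rw [hb'def, hc₂def]
        field_simp
        linear_combination (u - R) * hd'
      have hwle : c₂ * (w₀ - w) ≤ δg := by
        have h6 : w₀ - w ≤ δg / c₂ := by have := hw.1; linarith
        calc c₂ * (w₀ - w) ≤ c₂ * (δg / c₂) := by gcongr
          _ = δg := mul_div_cancel₀ _ (ne_of_gt hc₂)
      have hnn : 0 ≤ c₂ * (w₀ - w) := mul_nonneg hc₂.le (by linarith [hw.2])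
      have m2 : xd j + c₂ * (w - w₀) ∈ Set.Icc (xd j - δg) (xd j) := by
        constructor
        · have : c₂ * (w - w₀) = -(c₂ * (w₀ - w)) := by ring
          rw [this]; linarith [hwle]
        · have : c₂ * (w - w₀) = -(c₂ * (w₀ - w)) := by ring
          rw [this]; linarith [hnn]
      have eH : Hfun R u d p f g w b' = φ β + s * (w - w₀) := by
        have lhs_eq : Hfun R u d p f g w b' = R⁻¹ * (p * f (xu i) +
            (1 - p) * (ag * (xd j + c₂ * (w - w₀)) + cg)) := by
          show R⁻¹ * (p * f (w * R + b' * (u - R)) + (1 - p) * g (w * R + b' * (d - R))) = _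
          rw [e_u, e_d, hag _ m2]
        rw [lhs_eq, eφβ, hag (xd j) ⟨by linarith, le_rfl⟩, hs, hsgdef]
        have h1q : 1 - q = (u - R) / (u - d) := by
          rw [hq]; field_simp; ring
        rw [h1q, hc₂def]
        field_simp
        ring
      rw [← eH]
      exact hVge w b'
    · -- s = sf : move along the f-direction, keep η = xd j
      have hs : s = sf := min_eq_right hc
      set c₁ : ℝ := R * (u - d) / (R - d) with hc₁def
      have hc₁ : 0 < c₁ := by positivity
      refine ⟨δf / c₁, div_pos hδf hc₁, fun w hw => ?_⟩
      set b' : ℝ := β - (w₀ - w) * R / (R - d) with hb'def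
      have hval : (R - d) * (R - d)⁻¹ = 1 := mul_inv_cancel₀ (ne_of_gt hRd)
      have e_d : w * R + b' * (d - R) = xd j := by
        rw [hb'def]
        linear_combination hd' + (w₀ - w) * R * hval
      have e_u : w * R + b' * (u - R) = xu i + c₁ * (w - w₀) := by
        rw [hb'def, hc₁def]
        linear_combination hu - (w - w₀) * R * hval
      have hwle : c₁ * (w₀ - w) ≤ δf := by
        have h6 : w₀ - w ≤ δf / c₁ := by have := hw.1; linarith
        calc c₁ * (w₀ - w) ≤ c₁ * (δf / c₁) := by gcongr
          _ = δf := mul_div_cancel₀ _ (ne_of_gt hc₁)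
      have hnn : 0 ≤ c₁ * (w₀ - w) := mul_nonneg hc₁.le (by linarith [hw.2])
      have m1 : xu i + c₁ * (w - w₀) ∈ Set.Icc (xu i - δf) (xu i) := by
        constructor
        · have : c₁ * (w - w₀) = -(c₁ * (w₀ - w)) := by ring
          rw [this]; linarith [hwle]
        · have : c₁ * (w - w₀) = -(c₁ * (w₀ - w)) := by ring
          rw [this]; linarith [hnn]
      have eH : Hfun R u d p f g w b' = φ β + s * (w - w₀) := by
        have lhs_eq : Hfun R u d p f g w b' = R⁻¹ * (p * (af * (xu i + c₁ * (w - w₀)) + cf) +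
            (1 - p) * g (xd j)) := by
          show R⁻¹ * (p * f (w * R + b' * (u - R)) + (1 - p) * g (w * R + b' * (d - R))) = _
          rw [e_u, e_d, haf _ m1]
        rw [lhs_eq, eφβ, haf (xu i) ⟨by linarith, le_rfl⟩, hs, hsfdef]
        rw [hq, hc₁def]
        field_simp
        ring
      rw [← eH]
      exact hVge w b'
  obtain ⟨ε, hε, hlow'⟩ := hlow
  have hVeq : ∀ w ∈ Set.Icc (w₀ - ε) w₀, Vfun R u d p f g w = φ β + s * (w - w₀) :=
    fun w hw => le_antisymm (hVle w) (hlow' w hw)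
  -- compute the left derivative
  have heq : Vfun R u d p f g =ᶠ[nhdsWithin w₀ (Set.Iio w₀)]
      (fun w => φ β + s * (w - w₀)) := by
    filter_upwards [inter_mem_nhdsWithin (Set.Iio w₀)
      (Ioi_mem_nhds (show w₀ - ε < w₀ by linarith))] with w hw
    exact hVeq w ⟨le_of_lt hw.2, le_of_lt hw.1⟩
  have hval : Vfun R u d p f g w₀ = φ β + s * (w₀ - w₀) := by rw [hVβ]; ring
  have hld : lDeriv (Vfun R u d p f g) w₀ = s := by
    show derivWithin (Vfun R u d p f g) (Set.Iio w₀) w₀ = s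
    rw [Filter.EventuallyEq.derivWithin_eq heq hval]
    have hder : HasDerivWithinAt (fun w => φ β + s * (w - w₀)) (s * 1) (Set.Iio w₀) w₀ :=
      ((((hasDerivAt_id w₀).sub_const w₀).const_mul s).const_add (φ β)).hasDerivWithinAt
    simpa using hder.derivWithin (uniqueDiffWithinAt_Iio w₀)
  rw [hld, hlg, hlf, ← hsgdef, ← hsfdef]
end

section
/- First-order optimality at a grid intersection: suppose w₀ ∈ ℝ is such that (w₀, β(w₀)) ∈ C^u_i ∩ C^d_j for some 1 ≤ i ≤ N_u and 1 ≤ j ≤ N_d. Then (p/q)·f'⁺(x^u_i) ≤ ((1 − p)/(1 − q))·g'⁻(x^d_j) and ((1 − p)/(1 − q))·g'⁺(x^d_j) ≤ (p/q)·f'⁻(x^u_i), where q = (R − d)/(u − d), and at least one of these two inequalities is strict. -/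
open Set Filter Topology

lemma rDeriv_eq (f : ℝ → ℝ) (x a c ε : ℝ) (hε : 0 < ε)
    (h : ∀ y ∈ Set.Icc x (x + ε), f y = a * y + c) : rDeriv f x = a := by
  have hx : f x = a * x + c := h x ⟨le_refl x, by linarith⟩
  have heq : f =ᶠ[𝓝[>] x] fun y => a * y + c := by
    filter_upwards [Ioc_mem_nhdsGT_of_mem (⟨le_refl x, by linarith⟩ : x ∈ Set.Ico x (x + ε))] with y hy
    exact h y ⟨hy.1.le, hy.2⟩
  have h2 : HasDerivWithinAt (fun y : ℝ => a * y + c) a (Set.Ioi x) x := by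
    simpa using (((hasDerivAt_id x).const_mul a).add_const c).hasDerivWithinAt
  rw [rDeriv, heq.derivWithin_eq hx, h2.derivWithin (uniqueDiffWithinAt_Ioi x)]

lemma lDeriv_eq (f : ℝ → ℝ) (x a c ε : ℝ) (hε : 0 < ε)
    (h : ∀ y ∈ Set.Icc (x - ε) x, f y = a * y + c) : lDeriv f x = a := by
  have hx : f x = a * x + c := h x ⟨by linarith, le_refl x⟩
  have heq : f =ᶠ[𝓝[<] x] fun y => a * y + c := by
    filter_upwards [Ico_mem_nhdsLT_of_mem (⟨by linarith, le_refl x⟩ : x ∈ Set.Ioc (x - ε) x)] with y hy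
    exact h y ⟨hy.1, hy.2.le⟩
  have h2 : HasDerivWithinAt (fun y : ℝ => a * y + c) a (Set.Iio x) x := by
    simpa using (((hasDerivAt_id x).const_mul a).add_const c).hasDerivWithinAt
  rw [lDeriv, heq.derivWithin_eq hx, h2.derivWithin (uniqueDiffWithinAt_Iio x)]

lemma exists_right_affine {f : ℝ → ℝ} {N : ℕ} {x : ℕ → ℝ} (h : PWAff f N x)
    {i : ℕ} (hi1 : 1 ≤ i) (hiN : i ≤ N) :
    ∃ a c ε, 0 < ε ∧ ∀ y ∈ Set.Icc (x i) (x i + ε), f y = a * y + c := by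
  obtain ⟨hmono, -, hint⟩ := h
  obtain ⟨-, hright, hmid⟩ := hint (hi1.trans hiN)
  rcases eq_or_lt_of_le hiN with rfl | hlt
  · obtain ⟨a, c, hac⟩ := hright
    exact ⟨a, c, 1, one_pos, fun y hy => hac y hy.1⟩
  · obtain ⟨a, c, hac⟩ := hmid i hi1 hlt
    have hx : x i < x (i + 1) := hmono i hi1 hlt
    exact ⟨a, c, x (i + 1) - x i, by linarith, fun y hy =>
      hac y ⟨hy.1, by have := hy.2; linarith⟩⟩

lemma exists_left_affine {f : ℝ → ℝ} {N : ℕ} {x : ℕ → ℝ} (h : PWAff f N x)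
    {i : ℕ} (hi1 : 1 ≤ i) (hiN : i ≤ N) :
    ∃ a c ε, 0 < ε ∧ ∀ y ∈ Set.Icc (x i - ε) (x i), f y = a * y + c := by
  obtain ⟨hmono, -, hint⟩ := h
  obtain ⟨hleft, -, hmid⟩ := hint (hi1.trans hiN)
  rcases eq_or_lt_of_le hi1 with rfl | hlt
  · obtain ⟨a, c, hac⟩ := hleft
    exact ⟨a, c, 1, one_pos, fun y hy => hac y hy.2⟩
  · obtain ⟨k, rfl⟩ : ∃ k, i = k + 1 := ⟨i - 1, by omega⟩
    obtain ⟨a, c, hac⟩ := hmid k (by omega) (by omega)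
    have hx : x k < x (k + 1) := hmono k (by omega) (by omega)
    exact ⟨a, c, x (k + 1) - x k, by linarith, fun y hy =>
      hac y ⟨by have := hy.1; linarith, hy.2⟩⟩

lemma concave_le_const {f : ℝ → ℝ} (hconc : ConcaveOn ℝ Set.univ f)
    {xb : ℝ} (hconst : ∀ y, xb ≤ y → f y = f xb) : ∀ z, f z ≤ f xb := by
  intro z
  rcases le_or_gt xb z with hz | hz
  · exact (hconst z hz).le
  · have hs := hconc.slope_anti_adjacent (Set.mem_univ z) (Set.mem_univ (xb + 1)) hz
      (by linarith)
    have h1 : f (xb + 1) = f xb := hconst _ (by linarith)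
    rw [h1] at hs
    have h0 : (f xb - f xb) / (xb + 1 - xb) = 0 := by simp
    rw [h0] at hs
    rcases div_nonneg_iff.mp hs with ⟨h, -⟩ | ⟨-, h⟩
    · linarith
    · linarith

lemma concave_tendsto_atBot_s16 {f : ℝ → ℝ} (hconc : ConcaveOn ℝ Set.univ f)
    {xb : ℝ} (hconst : ∀ y, xb ≤ y → f y = f xb) (hnc : ∃ a b : ℝ, f a ≠ f b) :
    Tendsto f atBot atBot := by
  have key := concave_le_const hconc hconst
  obtain ⟨y₀, hy₀xb, hy₀⟩ : ∃ y₀, y₀ < xb ∧ f y₀ < f xb := by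
    obtain ⟨a, b, hab⟩ := hnc
    have h : f a ≠ f xb ∨ f b ≠ f xb := by
      by_contra h; push_neg at h; rw [h.1, h.2] at hab; exact hab rfl
    rcases h with h | h
    · refine ⟨a, ?_, lt_of_le_of_ne (key a) h⟩
      by_contra hge; push_neg at hge; exact h (hconst a hge)
    · refine ⟨b, ?_, lt_of_le_of_ne (key b) h⟩
      by_contra hge; push_neg at hge; exact h (hconst b hge)
  set m := (f xb - f y₀) / (xb - y₀) with hm
  have hmpos : 0 < m := div_pos (by linarith) (by linarith)
  have hbound : ∀ y, y < y₀ → f y ≤ f y₀ - m * y₀ + m * y := by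
    intro y hy
    have hs := hconc.slope_anti_adjacent (Set.mem_univ y) (Set.mem_univ xb) hy hy₀xb
    rw [← hm] at hs
    have hd : 0 < y₀ - y := by linarith
    have := (le_div_iff₀ hd).mp hs
    linarith
  have hlin : Tendsto (fun y : ℝ => f y₀ - m * y₀ + m * y) atBot atBot := by
    apply tendsto_atBot_add_const_left
    exact (tendsto_id (α := ℝ)).const_mul_atBot hmpos
  refine tendsto_atBot_mono' atBot ?_ hlin
  filter_upwards [eventually_lt_atBot y₀] with y hy using hbound y hy

lemma concave_continuous {f : ℝ → ℝ} (hconc : ConcaveOn ℝ Set.univ f) : Continuous f := by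
  rw [← continuousOn_univ]
  exact hconc.continuousOn isOpen_univ

set_option maxHeartbeats 1000000 in
/-- First-order optimality at a grid intersection: if
`(w₀, β(w₀)) ∈ C^u_i ∩ C^d_j` for some `1 ≤ i ≤ Nu`, `1 ≤ j ≤ Nd`, then
`(p/q) f'⁺(x^u_i) ≤ ((1−p)/(1−q)) g'⁻(x^d_j)` and
`((1−p)/(1−q)) g'⁺(x^d_j) ≤ (p/q) f'⁻(x^u_i)`, with at least one inequality strict. -/
theorem stmt_16 (R u d p : ℝ) (hd : 0 < d) (hdR : d < R) (hRu : R < u)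
    (hp0 : 0 < p) (hp1 : p < 1)
    (q : ℝ) (hq : q = (R - d) / (u - d))
    (f g : ℝ → ℝ) (Nu Nd : ℕ) (xu xd : ℕ → ℝ)
    (hf : HasSingVals f Nu xu) (hg : HasSingVals g Nd xd)
    (hNu : 1 ≤ Nu) (hNd : 1 ≤ Nd)
    (hfnc : ∃ a b : ℝ, f a ≠ f b) (hgnc : ∃ a b : ℝ, g a ≠ g b)
    (w₀ : ℝ) (i j : ℕ) (hi1 : 1 ≤ i) (hiN : i ≤ Nu) (hj1 : 1 ≤ j) (hjN : j ≤ Nd)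
    (hmem : (w₀, betaFun R u d p f g w₀) ∈ Cu R u (xu i) ∩ Cd R d (xd j)) :
    (p / q * rDeriv f (xu i) ≤ (1 - p) / (1 - q) * lDeriv g (xd j)) ∧
    ((1 - p) / (1 - q) * rDeriv g (xd j) ≤ p / q * lDeriv f (xu i)) ∧
    ((p / q * rDeriv f (xu i) < (1 - p) / (1 - q) * lDeriv g (xd j)) ∨
     ((1 - p) / (1 - q) * rDeriv g (xd j) < p / q * lDeriv f (xu i))) := by
  obtain ⟨⟨hfPW, hfconc, xbf, hfconst⟩, hfk⟩ := hf
  obtain ⟨⟨hgPW, hgconc, xbg, hgconst⟩, hgk⟩ := hg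
  have hR0 : (0:ℝ) < R := hd.trans hdR
  have huR : (0:ℝ) < u - R := by linarith
  have hRd : (0:ℝ) < R - d := by linarith
  have hud : (0:ℝ) < u - d := by linarith
  have h1p : (0:ℝ) < 1 - p := by linarith
  have hfc : Continuous f := concave_continuous hfconc
  have hgc : Continuous g := concave_continuous hgconc
  have hφcont : Continuous (fun b => Hfun R u d p f g w₀ b) := by
    simp only [Hfun]; fun_prop
  have hfbotf : Tendsto f atBot atBot := concave_tendsto_atBot_s16 hfconc hfconst hfnc
  have hgbotf : Tendsto g atBot atBot := concave_tendsto_atBot_s16 hgconc hgconst hgnc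
  have hflef := concave_le_const hfconc hfconst
  have hgleg := concave_le_const hgconc hgconst
  -- tendsto at +infinity
  have hinner_d : Tendsto (fun b : ℝ => w₀ * R + b * (d - R)) atTop atBot := by
    apply tendsto_atBot_add_const_left
    exact (tendsto_id (α := ℝ)).atTop_mul_const_of_neg (by linarith)
  have htop : Tendsto (fun b => Hfun R u d p f g w₀ b) atTop atBot := by
    have hψ : Tendsto (fun b : ℝ => R⁻¹ * p * f xbf +
        (R⁻¹ * (1 - p)) * g (w₀ * R + b * (d - R))) atTop atBot := by
      apply tendsto_atBot_add_const_left
      exact (hgbotf.comp hinner_d).const_mul_atBot (by positivity)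
    refine tendsto_atBot_mono' atTop (Eventually.of_forall fun b => ?_) hψ
    simp only [Hfun]
    nlinarith [hflef (w₀ * R + b * (u - R)),
      mul_le_mul_of_nonneg_left (hflef (w₀ * R + b * (u - R)))
        (show (0:ℝ) ≤ R⁻¹ * p by positivity)]
  have hinner_u : Tendsto (fun b : ℝ => w₀ * R + b * (u - R)) atBot atBot := by
    apply tendsto_atBot_add_const_left
    exact (tendsto_id (α := ℝ)).atBot_mul_const huR
  have hbot : Tendsto (fun b => Hfun R u d p f g w₀ b) atBot atBot := by
    have hψ : Tendsto (fun b : ℝ => R⁻¹ * (1 - p) * g xbg +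
        (R⁻¹ * p) * f (w₀ * R + b * (u - R))) atBot atBot := by
      apply tendsto_atBot_add_const_left
      exact (hfbotf.comp hinner_u).const_mul_atBot (by positivity)
    refine tendsto_atBot_mono' atBot (Eventually.of_forall fun b => ?_) hψ
    simp only [Hfun]
    nlinarith [hgleg (w₀ * R + b * (d - R)),
      mul_le_mul_of_nonneg_left (hgleg (w₀ * R + b * (d - R)))
        (show (0:ℝ) ≤ R⁻¹ * (1 - p) by positivity)]
  have hcoc : Tendsto (fun b => Hfun R u d p f g w₀ b) (cocompact ℝ) atBot := by
    rw [cocompact_eq_atBot_atTop]; exact hbot.sup htop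
  obtain ⟨bmax, hbmax⟩ := hφcont.exists_forall_ge hcoc
  have hbdd : BddAbove (Set.range fun b => Hfun R u d p f g w₀ b) := by
    refine ⟨Hfun R u d p f g w₀ bmax, ?_⟩
    rintro _ ⟨b, rfl⟩; exact hbmax b
  have hVle : ∀ b, Hfun R u d p f g w₀ b ≤ Vfun R u d p f g w₀ := fun b => le_ciSup hbdd b
  have hVmax : Vfun R u d p f g w₀ = Hfun R u d p f g w₀ bmax :=
    le_antisymm (ciSup_le hbmax) (hVle bmax)
  have hBne : (Bset R u d p f g w₀).Nonempty := ⟨bmax, hVmax.symm⟩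
  have hBclosed : IsClosed (Bset R u d p f g w₀) := by
    have : Bset R u d p f g w₀ =
        {b : ℝ | Hfun R u d p f g w₀ b = Vfun R u d p f g w₀} := rfl
    rw [this]
    exact isClosed_eq hφcont continuous_const
  have hBbdd : BddBelow (Bset R u d p f g w₀) := by
    obtain ⟨b₁, hb₁⟩ := eventually_atBot.mp
      (hbot.eventually (eventually_le_atBot (Vfun R u d p f g w₀ - 1)))
    refine ⟨b₁, fun b hb => ?_⟩
    by_contra hlt
    push_neg at hlt
    have h1 := hb₁ b hlt.le
    have h2 : Hfun R u d p f g w₀ b = Vfun R u d p f g w₀ := hb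
    linarith
  set b₀ := betaFun R u d p f g w₀ with hb₀def
  have hb₀mem : b₀ ∈ Bset R u d p f g w₀ := hBclosed.csInf_mem hBne hBbdd
  have hb₀eq : Hfun R u d p f g w₀ b₀ = Vfun R u d p f g w₀ := hb₀mem
  have hb₀min : ∀ b ∈ Bset R u d p f g w₀, b₀ ≤ b := fun b hb => csInf_le hBbdd hb
  have hcu : w₀ * R + b₀ * (u - R) = xu i := hmem.1
  have hcd : w₀ * R + b₀ * (d - R) = xd j := hmem.2
  obtain ⟨a₁, c₁, ε₁, hε₁, hfr⟩ := exists_right_affine hfPW hi1 hiN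
  obtain ⟨a₂, c₂, ε₂, hε₂, hfl⟩ := exists_left_affine hfPW hi1 hiN
  obtain ⟨g₁, d₁, εg₁, hεg₁, hgr⟩ := exists_right_affine hgPW hj1 hjN
  obtain ⟨g₂, d₂, εg₂, hεg₂, hgl⟩ := exists_left_affine hgPW hj1 hjN
  have hrdf : rDeriv f (xu i) = a₁ := rDeriv_eq f _ _ _ _ hε₁ hfr
  have hldf : lDeriv f (xu i) = a₂ := lDeriv_eq f _ _ _ _ hε₂ hfl
  have hrdg : rDeriv g (xd j) = g₁ := rDeriv_eq g _ _ _ _ hεg₁ hgr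
  have hldg : lDeriv g (xd j) = g₂ := lDeriv_eq g _ _ _ _ hεg₂ hgl
  -- right variation
  set δ := min (ε₁ / (u - R)) (εg₂ / (R - d)) with hδdef
  have hδ : 0 < δ := lt_min (div_pos hε₁ huR) (div_pos hεg₂ hRd)
  have hδ1 : δ * (u - R) ≤ ε₁ := (le_div_iff₀ huR).mp (min_le_left _ _)
  have hδ2 : δ * (R - d) ≤ εg₂ := (le_div_iff₀ hRd).mp (min_le_right _ _)
  have hδa : 0 < δ * (u - R) := mul_pos hδ huR
  have hδb : 0 < δ * (R - d) := mul_pos hδ hRd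
  have hf1 : f (w₀ * R + (b₀ + δ) * (u - R)) = a₁ * (xu i + δ * (u - R)) + c₁ := by
    rw [show w₀ * R + (b₀ + δ) * (u - R) = xu i + δ * (u - R) by linear_combination hcu]
    exact hfr _ ⟨by linarith, by linarith⟩
  have hg1 : g (w₀ * R + (b₀ + δ) * (d - R)) = g₂ * (xd j - δ * (R - d)) + d₂ := by
    rw [show w₀ * R + (b₀ + δ) * (d - R) = xd j - δ * (R - d) by linear_combination hcd]
    exact hgl _ ⟨by linarith, by linarith⟩
  have hf0 : f (w₀ * R + b₀ * (u - R)) = a₁ * xu i + c₁ := by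
    rw [hcu]; exact hfr _ ⟨le_refl _, by linarith⟩
  have hg0 : g (w₀ * R + b₀ * (d - R)) = g₂ * xd j + d₂ := by
    rw [hcd]; exact hgl _ ⟨by linarith, le_refl _⟩
  have hdiff1 : Hfun R u d p f g w₀ (b₀ + δ) = Hfun R u d p f g w₀ b₀ +
      R⁻¹ * δ * (p * a₁ * (u - R) - (1 - p) * g₂ * (R - d)) := by
    simp only [Hfun]
    rw [hf1, hg1, hf0, hg0]
    ring
  have hE1 : p * a₁ * (u - R) ≤ (1 - p) * g₂ * (R - d) := by
    have hle : Hfun R u d p f g w₀ (b₀ + δ) ≤ Hfun R u d p f g w₀ b₀ := by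
      rw [hb₀eq]; exact hVle _
    rw [hdiff1] at hle
    have hkey : R⁻¹ * δ * (p * a₁ * (u - R) - (1 - p) * g₂ * (R - d)) ≤ 0 := by linarith
    by_contra hcon
    push_neg at hcon
    have hEpos : 0 < p * a₁ * (u - R) - (1 - p) * g₂ * (R - d) := by linarith
    have := mul_pos (mul_pos (inv_pos.2 hR0) hδ) hEpos
    linarith
  -- left variation
  set δ' := min (ε₂ / (u - R)) (εg₁ / (R - d)) with hδ'def
  have hδ' : 0 < δ' := lt_min (div_pos hε₂ huR) (div_pos hεg₁ hRd)
  have hδ'1 : δ' * (u - R) ≤ ε₂ := (le_div_iff₀ huR).mp (min_le_left _ _)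
  have hδ'2 : δ' * (R - d) ≤ εg₁ := (le_div_iff₀ hRd).mp (min_le_right _ _)
  have hδ'a : 0 < δ' * (u - R) := mul_pos hδ' huR
  have hδ'b : 0 < δ' * (R - d) := mul_pos hδ' hRd
  have hf1' : f (w₀ * R + (b₀ - δ') * (u - R)) = a₂ * (xu i - δ' * (u - R)) + c₂ := by
    rw [show w₀ * R + (b₀ - δ') * (u - R) = xu i - δ' * (u - R) by linear_combination hcu]
    exact hfl _ ⟨by linarith, by linarith⟩
  have hg1' : g (w₀ * R + (b₀ - δ') * (d - R)) = g₁ * (xd j + δ' * (R - d)) + d₁ := by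
    rw [show w₀ * R + (b₀ - δ') * (d - R) = xd j + δ' * (R - d) by linear_combination hcd]
    exact hgr _ ⟨by linarith, by linarith⟩
  have hf0' : f (w₀ * R + b₀ * (u - R)) = a₂ * xu i + c₂ := by
    rw [hcu]; exact hfl _ ⟨by linarith, le_refl _⟩
  have hg0' : g (w₀ * R + b₀ * (d - R)) = g₁ * xd j + d₁ := by
    rw [hcd]; exact hgr _ ⟨le_refl _, by linarith⟩
  have hdiff : Hfun R u d p f g w₀ (b₀ - δ') = Hfun R u d p f g w₀ b₀ -
      R⁻¹ * δ' * (p * a₂ * (u - R) - (1 - p) * g₁ * (R - d)) := by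
    simp only [Hfun]
    rw [hf1', hg1', hf0', hg0']
    ring
  have hE2 : 0 ≤ p * a₂ * (u - R) - (1 - p) * g₁ * (R - d) := by
    have hle : Hfun R u d p f g w₀ (b₀ - δ') ≤ Hfun R u d p f g w₀ b₀ := by
      rw [hb₀eq]; exact hVle _
    rw [hdiff] at hle
    have hkey : 0 ≤ R⁻¹ * δ' * (p * a₂ * (u - R) - (1 - p) * g₁ * (R - d)) := by linarith
    by_contra hcon
    push_neg at hcon
    have := mul_neg_of_pos_of_neg (mul_pos (inv_pos.2 hR0) hδ') hcon
    linarith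
  have hE2s : 0 < p * a₂ * (u - R) - (1 - p) * g₁ * (R - d) := by
    rcases hE2.lt_or_eq with h | h
    · exact h
    · exfalso
      have hmem' : (b₀ - δ') ∈ Bset R u d p f g w₀ := by
        show Hfun R u d p f g w₀ (b₀ - δ') = Vfun R u d p f g w₀
        rw [hdiff, ← h]
        simpa using hb₀eq
      have := hb₀min _ hmem'
      linarith
  -- algebra to conclude
  rw [hrdf, hldf, hrdg, hldg, hq]
  have h1q : 1 - (R - d) / (u - d) = (u - R) / (u - d) := by field_simp; ring
  rw [h1q]
  refine ⟨?_, ?_, Or.inr ?_⟩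
  · rw [div_mul_eq_mul_div, div_mul_eq_mul_div, div_le_div_iff₀ (div_pos hRd hud) (div_pos huR hud), ← mul_div_assoc,
      ← mul_div_assoc, div_le_div_iff₀ hud hud]
    linarith [mul_le_mul_of_nonneg_right hE1 hud.le]
  · rw [div_mul_eq_mul_div, div_mul_eq_mul_div, div_le_div_iff₀ (div_pos huR hud) (div_pos hRd hud), ← mul_div_assoc,
      ← mul_div_assoc, div_le_div_iff₀ hud hud]
    linarith [mul_le_mul_of_nonneg_right hE2 hud.le]
  · rw [div_mul_eq_mul_div, div_mul_eq_mul_div, div_lt_div_iff₀ (div_pos huR hud) (div_pos hRd hud), ← mul_div_assoc,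
      ← mul_div_assoc, div_lt_div_iff₀ hud hud]
    linarith [mul_lt_mul_of_pos_right hE2s hud]
end

section
/- Location of the singular values of the value function: if V is not differentiable at a point w₀ ∈ ℝ, then there exist indices 1 ≤ i ≤ N_u and 1 ≤ j ≤ N_d such that w₀ = R⁻¹·(q·x^u_i + (1 − q)·x^d_j) and β(w₀) = (x^u_i − x^d_j)/(u − d), where q = (R − d)/(u − d); that is, (w₀, β(w₀)) is the intersection point C^u_i ∩ C^d_j of two grid lines. -/
section Stmt17Aux

open Set Filter Topology



/-- Core three-point concavity inequality. -/
lemma conc3 {f : ℝ → ℝ} (hf : ConcaveOn ℝ Set.univ f) {x y z : ℝ}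
    (hxy : x < y) (hyz : y < z) :
    (z - y) * f x + (y - x) * f z ≤ f y * (z - x) := by
  have hxz : x < z := hxy.trans hyz
  have ha : (0:ℝ) ≤ (z - y) / (z - x) := div_nonneg (by linarith) (by linarith)
  have hb' : (0:ℝ) ≤ (y - x) / (z - x) := div_nonneg (by linarith) (by linarith)
  have hab : (z - y) / (z - x) + (y - x) / (z - x) = 1 := by
    rw [← add_div, div_eq_one_iff_eq (by linarith : z - x ≠ 0)]; ring
  have h := hf.2 (Set.mem_univ x) (Set.mem_univ z) ha hb' hab
  rw [smul_eq_mul, smul_eq_mul, smul_eq_mul, smul_eq_mul] at h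
  have hyx : (z - y) / (z - x) * x + (y - x) / (z - x) * z = y := by
    rw [div_mul_eq_mul_div, div_mul_eq_mul_div, ← add_div,
      div_eq_iff (by linarith : z - x ≠ 0)]; ring
  rw [hyx] at h
  rw [div_mul_eq_mul_div, div_mul_eq_mul_div, ← add_div,
    div_le_iff₀ (by linarith : (0:ℝ) < z - x)] at h
  linarith

lemma chord_right {f : ℝ → ℝ} (hf : ConcaveOn ℝ Set.univ f) {x y z : ℝ}
    (hxy : x < y) (hyz : y ≤ z) :
    f z ≤ f x + (f y - f x) / (y - x) * (z - x) := by
  rcases eq_or_lt_of_le hyz with rfl | h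
  · rw [div_mul_cancel₀ _ (by intro hc; apply hxy.ne'; linarith [sub_eq_zero.1 hc] : y - x ≠ 0)]
    linarith
  · have h3 := conc3 hf hxy h
    have expand : (f z - f x) * (y - x) - (f y - f x) * (z - x) =
        ((z - y) * f x + (y - x) * f z) - f y * (z - x) := by ring
    have key : (f z - f x) * (y - x) ≤ (f y - f x) * (z - x) := by linarith
    have h4 : f z - f x ≤ (f y - f x) * (z - x) / (y - x) := by
      rw [le_div_iff₀ (by linarith : (0:ℝ) < y - x)]; linarith
    rw [div_mul_eq_mul_div]; linarith

lemma chord_left {f : ℝ → ℝ} (hf : ConcaveOn ℝ Set.univ f) {x y z : ℝ}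
    (hxy : x ≤ y) (hyz : y < z) :
    f x ≤ f y + (f z - f y) / (z - y) * (x - y) := by
  rcases eq_or_lt_of_le hxy with rfl | h
  · simp
  · have h3 := conc3 hf h hyz
    have expand : (f x - f y) * (z - y) - (f z - f y) * (x - y) =
        ((z - y) * f x + (y - x) * f z) - f y * (z - x) := by ring
    have key : (f x - f y) * (z - y) ≤ (f z - f y) * (x - y) := by linarith
    have h4 : f x - f y ≤ (f z - f y) * (x - y) / (z - y) := by
      rw [le_div_iff₀ (by linarith : (0:ℝ) < z - y)]; linarith
    rw [div_mul_eq_mul_div]; linarith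

lemma mono_of_tail {f : ℝ → ℝ} (hf : ConcaveOn ℝ Set.univ f) {xb : ℝ}
    (htail : ∀ y, xb ≤ y → f y = f xb) : Monotone f := by
  intro y1 y2 h12
  rcases eq_or_lt_of_le h12 with rfl | h
  · exact le_rfl
  by_contra hlt
  push_neg at hlt
  set s := (f y2 - f y1) / (y2 - y1) with hs
  have hsneg : s < 0 := div_neg_of_neg_of_pos (by linarith) (by linarith)
  set z := max (max xb y2) (y1 + (f xb - f y1) / s) + 1 with hz
  have hm1 : max xb y2 ≤ max (max xb y2) (y1 + (f xb - f y1) / s) := le_max_left _ _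
  have hzy2 : y2 ≤ z := by have := le_max_right xb y2; simp only [hz]; linarith
  have hzb : xb ≤ z := by have := le_max_left xb y2; simp only [hz]; linarith
  have hzq : y1 + (f xb - f y1) / s + 1 ≤ z := by
    have := le_max_right (max xb y2) (y1 + (f xb - f y1) / s); simp only [hz]; linarith
  have hcr := chord_right hf h hzy2
  have hfz : f z = f xb := htail z hzb
  have hmul : s * (z - y1) ≤ s * ((f xb - f y1) / s + 1) :=
    mul_le_mul_of_nonpos_left (by linarith) hsneg.le
  have hcan : s * ((f xb - f y1) / s + 1) = (f xb - f y1) + s := by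
    rw [mul_add, mul_div_cancel₀ _ hsneg.ne]; ring
  rw [← hs] at hcr
  clear_value s z
  linarith

lemma incr_pair {f : ℝ → ℝ} (hmono : Monotone f) (hnc : ∃ a b : ℝ, f a ≠ f b) :
    ∃ y1 y2 : ℝ, y1 < y2 ∧ f y1 < f y2 := by
  obtain ⟨a, b, hab⟩ := hnc
  rcases lt_trichotomy a b with h | h | h
  · exact ⟨a, b, h, lt_of_le_of_ne (hmono h.le) hab⟩
  · exact absurd (by rw [h]) hab
  · exact ⟨b, a, h, lt_of_le_of_ne (hmono h.le) (Ne.symm hab)⟩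

lemma tendsto_bot_of_pair {f : ℝ → ℝ} (hf : ConcaveOn ℝ Set.univ f) {y1 y2 : ℝ}
    (h12 : y1 < y2) (hflt : f y1 < f y2) : Tendsto f atBot atBot := by
  set s := (f y2 - f y1) / (y2 - y1) with hs
  have hspos : 0 < s := div_pos (by linarith) (by linarith)
  have hbound : ∀ y ≤ y1, f y ≤ f y1 + s * (y - y1) := by
    intro y hy
    have := chord_left hf hy h12
    rw [← hs] at this; exact this
  have hlin : Tendsto (fun y : ℝ => f y1 + s * (y - y1)) atBot atBot := by
    apply tendsto_atBot_add_const_left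
    apply Tendsto.const_mul_atBot hspos
    exact tendsto_atBot_add_const_right _ _ tendsto_id
  exact tendsto_atBot_mono' atBot (eventually_atBot.2 ⟨y1, hbound⟩) hlin

lemma exists_max_of_tendsto {h : ℝ → ℝ} (hc : Continuous h)
    (ht : Tendsto h atTop atBot) (hb : Tendsto h atBot atBot) :
    ∃ b, ∀ x, h x ≤ h b := by
  obtain ⟨A, hA⟩ := eventually_atTop.1 (ht.eventually (eventually_le_atBot (h 0)))
  obtain ⟨B, hB⟩ := eventually_atBot.1 (hb.eventually (eventually_le_atBot (h 0)))
  have hmem : (0:ℝ) ∈ Set.Icc (min B 0) (max A 0) := ⟨min_le_right _ _, le_max_right _ _⟩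
  obtain ⟨b, hbm, hmax⟩ := isCompact_Icc.exists_isMaxOn ⟨0, hmem⟩ hc.continuousOn
  refine ⟨b, fun x => ?_⟩
  by_cases hx : x ∈ Set.Icc (min B 0) (max A 0)
  · exact hmax hx
  · have h0b : h 0 ≤ h b := hmax hmem
    rcases lt_or_ge x (min B 0) with h1 | h1
    · have : h x ≤ h 0 := hB x (h1.le.trans (min_le_left _ _))
      linarith
    · have h2 : max A 0 < x := by
        by_contra h2
        push_neg at h2
        exact hx ⟨h1, h2⟩
      have : h x ≤ h 0 := hA x ((le_max_left A 0).trans h2.le)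
      linarith

lemma sg_global {ψ : ℝ → ℝ} (hψ : ConcaveOn ℝ Set.univ ψ) {z₀ m η : ℝ} (hη : 0 < η)
    (hloc : ∀ z, |z - z₀| ≤ η → ψ z ≤ ψ z₀ + m * (z - z₀)) :
    ∀ z, ψ z ≤ ψ z₀ + m * (z - z₀) := by
  intro z
  by_cases hz : |z - z₀| ≤ η
  · exact hloc z hz
  push_neg at hz
  have habs : 0 < |z - z₀| := hη.trans hz
  set t := η / |z - z₀| with ht
  have ht0 : 0 < t := div_pos hη habs
  have ht1 : t < 1 := (div_lt_one habs).2 hz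
  set z' := z₀ + t * (z - z₀) with hz'
  have hz'mem : |z' - z₀| ≤ η := by
    have : z' - z₀ = t * (z - z₀) := by rw [hz']; ring
    rw [this, abs_mul, abs_of_pos ht0, ht, div_mul_cancel₀ _ habs.ne']
  have hconc := hψ.2 (Set.mem_univ z₀) (Set.mem_univ z) (by linarith : (0:ℝ) ≤ 1 - t)
    ht0.le (by ring : (1 - t) + t = 1)
  rw [smul_eq_mul, smul_eq_mul, smul_eq_mul, smul_eq_mul] at hconc
  have harg : (1 - t) * z₀ + t * z = z' := by rw [hz']; ring
  rw [harg] at hconc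
  have hup := hloc z' hz'mem
  have h2 : z' - z₀ = t * (z - z₀) := by rw [hz']; ring
  rw [h2] at hup
  have h3 : t * ψ z ≤ t * (ψ z₀ + m * (z - z₀)) := by nlinarith [hconc, hup]
  exact (mul_le_mul_iff_right₀ ht0).1 h3

lemma key_diff (Φ Ψ : ℝ → ℝ) (hΦ : ConcaveOn ℝ Set.univ Φ) (hΨ : ConcaveOn ℝ Set.univ Ψ)
    (R e₁ e₂ w₀ b₀ : ℝ) (he₂ : e₂ ≠ 0)
    (hmax : ∀ b, Φ (w₀ * R + b * e₁) + Ψ (w₀ * R + b * e₂) ≤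
      Φ (w₀ * R + b₀ * e₁) + Ψ (w₀ * R + b₀ * e₂))
    (ε a c : ℝ) (hε : 0 < ε)
    (haff : ∀ y ∈ Set.Icc (w₀ * R + b₀ * e₁ - ε) (w₀ * R + b₀ * e₁ + ε), Φ y = a * y + c) :
    DifferentiableAt ℝ (fun w => ⨆ b, Φ (w * R + b * e₁) + Ψ (w * R + b * e₂)) w₀ := by
  have he₂pos : 0 < |e₂| := abs_pos.2 he₂
  set y₀ := w₀ * R + b₀ * e₁ with hy₀
  set z₀ := w₀ * R + b₀ * e₂ with hz₀
  set m := -(a * e₁) / e₂ with hm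
  have hme : m * e₂ = -(a * e₁) := div_mul_cancel₀ _ he₂
  set η := ε * |e₂| / (|e₁| + 1) with hη'
  have habs1 : (0:ℝ) ≤ |e₁| := abs_nonneg e₁
  have hηpos : 0 < η := div_pos (mul_pos hε he₂pos) (by linarith)
  have hΦ0 : Φ y₀ = a * y₀ + c := haff _ ⟨by linarith, by linarith⟩
  -- local supergradient of Ψ at z₀
  have hloc : ∀ z, |z - z₀| ≤ η → Ψ z ≤ Ψ z₀ + m * (z - z₀) := by
    intro z hz
    set δ := (z - z₀) / e₂ with hδ
    have hδe₂ : δ * e₂ = z - z₀ := div_mul_cancel₀ _ he₂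
    have hδe₁ : |δ * e₁| ≤ ε := by
      have h1 : |z - z₀| * (|e₁| + 1) ≤ ε * |e₂| := by
        rw [hη'] at hz
        exact (le_div_iff₀ (by linarith)).1 hz
      rw [abs_mul, hδ, abs_div, div_mul_eq_mul_div, div_le_iff₀ he₂pos]
      nlinarith [abs_nonneg (z - z₀)]
    obtain ⟨hδ1, hδ2⟩ := abs_le.1 hδe₁
    have hy' : y₀ + δ * e₁ ∈ Set.Icc (y₀ - ε) (y₀ + ε) := ⟨by linarith, by linarith⟩
    have hb := hmax (b₀ + δ)
    have hY : w₀ * R + (b₀ + δ) * e₁ = y₀ + δ * e₁ := by rw [hy₀]; ring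
    have hZ : w₀ * R + (b₀ + δ) * e₂ = z := by
      have h1 : w₀ * R + (b₀ + δ) * e₂ = z₀ + δ * e₂ := by rw [hz₀]; ring
      rw [h1, hδe₂]; ring
    rw [hY, hZ] at hb
    have hΦ1 : Φ (y₀ + δ * e₁) = a * (y₀ + δ * e₁) + c := haff _ hy'
    rw [hΦ1, hΦ0] at hb
    have hmz : m * (z - z₀) = -(a * (δ * e₁)) := by
      rw [← hδe₂]
      calc m * (δ * e₂) = m * e₂ * δ := by ring
        _ = -(a * (δ * e₁)) := by rw [hme]; ring
    rw [hmz]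
    have hexp : a * (y₀ + δ * e₁) = a * y₀ + a * (δ * e₁) := by ring
    clear_value y₀ z₀ m η δ
    linarith
  have hΨglob := sg_global hΨ hηpos hloc
  have hΦglob : ∀ y, Φ y ≤ Φ y₀ + a * (y - y₀) := by
    apply sg_global hΦ hε
    intro y hy
    obtain ⟨h1, h2⟩ := abs_le.1 hy
    have hy' : y ∈ Set.Icc (y₀ - ε) (y₀ + ε) := ⟨by linarith, by linarith⟩
    rw [haff y hy', hΦ0]
    have : a * y + c = a * y₀ + c + a * (y - y₀) := by ring
    linarith
  set M := (a + m) * R with hM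
  set S₀ := Φ y₀ + Ψ z₀ with hS₀
  have hub : ∀ w b, Φ (w * R + b * e₁) + Ψ (w * R + b * e₂) ≤ S₀ + M * (w - w₀) := by
    intro w b
    have h1 := hΦglob (w * R + b * e₁)
    have h2 := hΨglob (w * R + b * e₂)
    have hzero : a * (w * R + b * e₁ - y₀) + m * (w * R + b * e₂ - z₀) = M * (w - w₀) := by
      rw [hM, hy₀, hz₀]
      linear_combination (b - b₀) * hme
    rw [hS₀]
    clear_value y₀ z₀ m M S₀
    linarith
  have hbdd : ∀ w, BddAbove (Set.range fun b => Φ (w * R + b * e₁) + Ψ (w * R + b * e₂)) :=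
    fun w => ⟨S₀ + M * (w - w₀), by rintro _ ⟨b, rfl⟩; exact hub w b⟩
  set ρ := ε * |e₂| / (|R * (e₂ - e₁)| + 1) with hρ
  have hρpos : 0 < ρ := div_pos (mul_pos hε he₂pos) (by positivity)
  have hVeq : ∀ w ∈ Set.Ioo (w₀ - ρ) (w₀ + ρ),
      (⨆ b, Φ (w * R + b * e₁) + Ψ (w * R + b * e₂)) = S₀ + M * (w - w₀) := by
    intro w hw
    obtain ⟨hw1, hw2⟩ := hw
    apply le_antisymm
    · exact ciSup_le fun b => hub w b
    · set bw := b₀ - (w - w₀) * R / e₂ with hbw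
      have hZ : w * R + bw * e₂ = z₀ := by
        rw [hbw, hz₀]; field_simp; ring
      have hY : w * R + bw * e₁ = y₀ + (w - w₀) * (R * (e₂ - e₁)) / e₂ := by
        rw [hbw, hy₀]; field_simp; ring
      have habsw : |w - w₀| ≤ ρ := by
        rw [abs_le]; constructor <;> linarith
      have habs : |(w - w₀) * (R * (e₂ - e₁)) / e₂| ≤ ε := by
        have h2 : |w - w₀| * (|R * (e₂ - e₁)| + 1) ≤ ε * |e₂| := by
          rw [hρ] at habsw
          exact (le_div_iff₀ (by positivity)).1 habsw
        rw [abs_div, abs_mul, div_le_iff₀ he₂pos]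
        nlinarith [abs_nonneg (w - w₀), abs_nonneg (R * (e₂ - e₁))]
      obtain ⟨ha1, ha2⟩ := abs_le.1 habs
      have hYin : y₀ + (w - w₀) * (R * (e₂ - e₁)) / e₂ ∈ Set.Icc (y₀ - ε) (y₀ + ε) :=
        ⟨by linarith, by linarith⟩
      have hΦval : Φ (w * R + bw * e₁) = a * (y₀ + (w - w₀) * (R * (e₂ - e₁)) / e₂) + c := by
        rw [hY]; exact haff _ hYin
      have hcalc : Φ (w * R + bw * e₁) + Ψ (w * R + bw * e₂) = S₀ + M * (w - w₀) := by
        rw [hΦval, hZ, hS₀, hΦ0, hM, hm]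
        field_simp
        ring
      calc S₀ + M * (w - w₀) = Φ (w * R + bw * e₁) + Ψ (w * R + bw * e₂) := hcalc.symm
        _ ≤ _ := le_ciSup (hbdd w) bw
  have hd : DifferentiableAt ℝ (fun w : ℝ => S₀ + M * (w - w₀)) w₀ :=
    ((differentiableAt_fun_id.sub_const w₀).const_mul M).const_add S₀
  apply hd.congr_of_eventuallyEq
  filter_upwards [Ioo_mem_nhds (show w₀ - ρ < w₀ by linarith) (show w₀ < w₀ + ρ by linarith)] with w hw
  exact hVeq w hw

lemma window {f : ℝ → ℝ} {N : ℕ} {x : ℕ → ℝ} (hN : 1 ≤ N) (hpw : PWAff f N x)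
    {y₀ : ℝ} (hy : ∀ i, 1 ≤ i → i ≤ N → y₀ ≠ x i) :
    ∃ ε > 0, ∃ a c : ℝ, ∀ y ∈ Set.Icc (y₀ - ε) (y₀ + ε), f y = a * y + c := by
  obtain ⟨hlt, h0, hpieces⟩ := hpw
  obtain ⟨haff1, haffN, haffmid⟩ := hpieces hN
  by_cases h1 : y₀ < x 1
  · obtain ⟨a, c, hac⟩ := haff1
    refine ⟨(x 1 - y₀) / 2, by linarith, a, c, fun y hy' => hac y ?_⟩
    rw [Set.mem_Icc] at hy'
    rw [Set.mem_Iic]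
    linarith [hy'.2]
  by_cases hN' : x N < y₀
  · obtain ⟨a, c, hac⟩ := haffN
    refine ⟨(y₀ - x N) / 2, by linarith, a, c, fun y hy' => hac y ?_⟩
    rw [Set.mem_Icc] at hy'
    rw [Set.mem_Ici]
    linarith [hy'.1]
  push_neg at h1 hN'
  have h1' : x 1 < y₀ := lt_of_le_of_ne h1 (fun h => hy 1 le_rfl hN h.symm)
  have hN'' : y₀ < x N := lt_of_le_of_ne hN' (hy N hN le_rfl)
  set S := (Finset.Icc 1 N).filter (fun k => x k < y₀) with hS
  have hSne : S.Nonempty := ⟨1, by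
    rw [hS, Finset.mem_filter, Finset.mem_Icc]
    exact ⟨⟨le_rfl, hN⟩, h1'⟩⟩
  set i := S.max' hSne with hi
  have hiS : i ∈ S := S.max'_mem hSne
  rw [hS, Finset.mem_filter, Finset.mem_Icc] at hiS
  obtain ⟨⟨hi1, hi2⟩, hix⟩ := hiS
  have hiN : i < N := by
    rcases eq_or_lt_of_le hi2 with h | h
    · exfalso; rw [h] at hix; linarith
    · exact h
  have hnext : y₀ < x (i + 1) := by
    have hmem : i + 1 ∈ Finset.Icc 1 N := by rw [Finset.mem_Icc]; omega
    have hnot : i + 1 ∉ S := fun hin => by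
      have := S.le_max' (i + 1) hin
      omega
    have hle : ¬ x (i + 1) < y₀ := fun hc => hnot (by
      rw [hS, Finset.mem_filter]; exact ⟨hmem, hc⟩)
    push_neg at hle
    exact lt_of_le_of_ne hle (hy (i + 1) (by omega) (by omega))
  obtain ⟨a, c, hac⟩ := haffmid i hi1 (by omega)
  refine ⟨min (y₀ - x i) (x (i + 1) - y₀), lt_min (by linarith) (by linarith), a, c,
    fun y hy' => hac y ?_⟩
  rw [Set.mem_Icc] at hy'
  have hm1 := min_le_left (y₀ - x i) (x (i + 1) - y₀)
  have hm2 := min_le_right (y₀ - x i) (x (i + 1) - y₀)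
  exact ⟨by linarith [hy'.1], by linarith [hy'.2]⟩

end Stmt17Aux

open Set Filter Topology

/-- If the value function `V` is not differentiable at `w₀`, then
`(w₀, β(w₀))` is an intersection point `C^u_i ∩ C^d_j` of two grid lines, i.e.
`w₀ = R⁻¹ (q x^u_i + (1−q) x^d_j)` and `β(w₀) = (x^u_i − x^d_j)/(u−d)`,
where `q = (R−d)/(u−d)`. -/
theorem stmt_17 (R u d p : ℝ) (hd : 0 < d) (hdR : d < R) (hRu : R < u)
    (hp0 : 0 < p) (hp1 : p < 1)
    (q : ℝ) (hq : q = (R - d) / (u - d))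
    (f g : ℝ → ℝ) (Nu Nd : ℕ) (xu xd : ℕ → ℝ)
    (hf : HasSingVals f Nu xu) (hg : HasSingVals g Nd xd)
    (hNu : 1 ≤ Nu) (hNd : 1 ≤ Nd)
    (hfnc : ∃ a b : ℝ, f a ≠ f b) (hgnc : ∃ a b : ℝ, g a ≠ g b)
    (w₀ : ℝ) (hndiff : ¬ DifferentiableAt ℝ (Vfun R u d p f g) w₀) :
    ∃ i j : ℕ, 1 ≤ i ∧ i ≤ Nu ∧ 1 ≤ j ∧ j ≤ Nd ∧
      w₀ = R⁻¹ * (q * xu i + (1 - q) * xd j) ∧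
      betaFun R u d p f g w₀ = (xu i - xd j) / (u - d) ∧
      (w₀, betaFun R u d p f g w₀) ∈ Cu R u (xu i) ∩ Cd R d (xd j) := by
  obtain ⟨⟨hfpw, hfconc, xbf, hftail⟩, -⟩ := hf
  obtain ⟨⟨hgpw, hgconc, xbg, hgtail⟩, -⟩ := hg
  have hR : (0:ℝ) < R := hd.trans hdR
  have hRinv : (0:ℝ) < R⁻¹ := inv_pos.2 hR
  have hcΦ : (0:ℝ) < R⁻¹ * p := mul_pos hRinv hp0
  have hcΨ : (0:ℝ) < R⁻¹ * (1 - p) := mul_pos hRinv (by linarith)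
  set Φ : ℝ → ℝ := fun y => R⁻¹ * p * f y with hΦdef
  set Ψ : ℝ → ℝ := fun z => R⁻¹ * (1 - p) * g z with hΨdef
  have hHeq : ∀ w b : ℝ, Hfun R u d p f g w b
      = Φ (w * R + b * (u - R)) + Ψ (w * R + b * (d - R)) := by
    intro w b; simp only [Hfun, hΦdef, hΨdef]; ring
  have hΦconc : ConcaveOn ℝ Set.univ Φ := by
    have heq : ((R⁻¹ * p) • f) = Φ := by
      funext y; simp [hΦdef, smul_eq_mul, mul_assoc]
    rw [← heq]; exact hfconc.smul hcΦ.le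
  have hΨconc : ConcaveOn ℝ Set.univ Ψ := by
    have heq : ((R⁻¹ * (1 - p)) • g) = Ψ := by
      funext y; simp [hΨdef, smul_eq_mul, mul_assoc]
    rw [← heq]; exact hgconc.smul hcΨ.le
  have hfc : Continuous f := continuousOn_univ.1 (hfconc.continuousOn isOpen_univ)
  have hgc : Continuous g := continuousOn_univ.1 (hgconc.continuousOn isOpen_univ)
  have hfmono : Monotone f := mono_of_tail hfconc hftail
  have hgmono : Monotone g := mono_of_tail hgconc hgtail
  have hftop : ∀ y, f y ≤ f xbf := fun y => by
    rcases le_total y xbf with hh | hh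
    · exact hfmono hh
    · exact le_of_eq (hftail y hh)
  have hgtop : ∀ y, g y ≤ g xbg := fun y => by
    rcases le_total y xbg with hh | hh
    · exact hgmono hh
    · exact le_of_eq (hgtail y hh)
  obtain ⟨yf1, yf2, hf12, hfv⟩ := incr_pair hfmono hfnc
  obtain ⟨yg1, yg2, hg12, hgv⟩ := incr_pair hgmono hgnc
  have hfbot : Tendsto f atBot atBot := tendsto_bot_of_pair hfconc hf12 hfv
  have hgbot : Tendsto g atBot atBot := tendsto_bot_of_pair hgconc hg12 hgv
  set h0 : ℝ → ℝ := fun b => Hfun R u d p f g w₀ b with hh0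
  have hh0eq : ∀ b, h0 b = Φ (w₀ * R + b * (u - R)) + Ψ (w₀ * R + b * (d - R)) :=
    fun b => hHeq w₀ b
  have hcont : Continuous h0 := by
    have c1 : Continuous fun b : ℝ => w₀ * R + b * (u - R) := by continuity
    have c2 : Continuous fun b : ℝ => w₀ * R + b * (d - R) := by continuity
    have hcc : Continuous fun b : ℝ =>
        R⁻¹ * (p * f (w₀ * R + b * (u - R)) + (1 - p) * g (w₀ * R + b * (d - R))) :=
      continuous_const.mul ((continuous_const.mul (hfc.comp c1)).add
        (continuous_const.mul (hgc.comp c2)))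
    simpa only [hh0, Hfun] using hcc
  have htopt : Tendsto h0 atTop atBot := by
    have hb : ∀ b, h0 b ≤ R⁻¹ * p * f xbf + R⁻¹ * (1 - p) * g (w₀ * R + b * (d - R)) := by
      intro b
      rw [hh0eq b]
      simp only [hΦdef, hΨdef]
      have h1 : R⁻¹ * p * f (w₀ * R + b * (u - R)) ≤ R⁻¹ * p * f xbf :=
        mul_le_mul_of_nonneg_left (hftop _) hcΦ.le
      linarith
    have hZ : Tendsto (fun b : ℝ => w₀ * R + b * (d - R)) atTop atBot := by
      apply tendsto_atBot_add_const_left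
      exact Tendsto.atTop_mul_const_of_neg (by linarith : d - R < 0) tendsto_id
    have hlin : Tendsto (fun b : ℝ =>
        R⁻¹ * p * f xbf + R⁻¹ * (1 - p) * g (w₀ * R + b * (d - R))) atTop atBot := by
      apply tendsto_atBot_add_const_left
      exact Tendsto.const_mul_atBot hcΨ (hgbot.comp hZ)
    exact tendsto_atBot_mono' atTop (Eventually.of_forall hb) hlin
  have hbott : Tendsto h0 atBot atBot := by
    have hb : ∀ b, h0 b ≤ R⁻¹ * (1 - p) * g xbg + R⁻¹ * p * f (w₀ * R + b * (u - R)) := by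
      intro b
      rw [hh0eq b]
      simp only [hΦdef, hΨdef]
      have h1 : R⁻¹ * (1 - p) * g (w₀ * R + b * (d - R)) ≤ R⁻¹ * (1 - p) * g xbg :=
        mul_le_mul_of_nonneg_left (hgtop _) hcΨ.le
      linarith
    have hY : Tendsto (fun b : ℝ => w₀ * R + b * (u - R)) atBot atBot := by
      apply tendsto_atBot_add_const_left
      exact Tendsto.atBot_mul_const (by linarith : (0:ℝ) < u - R) tendsto_id
    have hlin : Tendsto (fun b : ℝ =>
        R⁻¹ * (1 - p) * g xbg + R⁻¹ * p * f (w₀ * R + b * (u - R))) atBot atBot := by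
      apply tendsto_atBot_add_const_left
      exact Tendsto.const_mul_atBot hcΦ (hfbot.comp hY)
    exact tendsto_atBot_mono' atBot (Eventually.of_forall hb) hlin
  obtain ⟨bstar, hbstar⟩ := exists_max_of_tendsto hcont htopt hbott
  have hbdd : BddAbove (Set.range h0) := ⟨h0 bstar, by rintro _ ⟨b, rfl⟩; exact hbstar b⟩
  have hVdef : Vfun R u d p f g w₀ = ⨆ b, h0 b := by simp only [Vfun, hh0]
  have hVval : Vfun R u d p f g w₀ = h0 bstar :=
    hVdef.trans (le_antisymm (ciSup_le hbstar) (le_ciSup hbdd bstar))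
  have hballe : ∀ b, h0 b ≤ Vfun R u d p f g w₀ := fun b => by rw [hVval]; exact hbstar b
  have hBsub : Bset R u d p f g w₀ = h0 ⁻¹' {Vfun R u d p f g w₀} := by
    ext b; simp [Bset, hh0]
  have hBclosed : IsClosed (Bset R u d p f g w₀) := by
    rw [hBsub]; exact IsClosed.preimage hcont isClosed_singleton
  have hBne : (Bset R u d p f g w₀).Nonempty := by
    refine ⟨bstar, ?_⟩
    show h0 bstar = Vfun R u d p f g w₀
    exact hVval.symm
  have hBbddBelow : BddBelow (Bset R u d p f g w₀) := by
    obtain ⟨A, hA⟩ := eventually_atBot.1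
      (hbott.eventually (eventually_lt_atBot (Vfun R u d p f g w₀)))
    refine ⟨A, fun b hb => ?_⟩
    by_contra hlt
    push_neg at hlt
    have h1 := hA b hlt.le
    have h2 : h0 b = Vfun R u d p f g w₀ := hb
    rw [h2] at h1; exact lt_irrefl _ h1
  have hb₀B : betaFun R u d p f g w₀ ∈ Bset R u d p f g w₀ :=
    IsClosed.csInf_mem hBclosed hBne hBbddBelow
  set b₀ := betaFun R u d p f g w₀ with hb₀def
  have hb₀val : h0 b₀ = Vfun R u d p f g w₀ := hb₀B
  have hmaxb : ∀ b, Φ (w₀ * R + b * (u - R)) + Ψ (w₀ * R + b * (d - R)) ≤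
      Φ (w₀ * R + b₀ * (u - R)) + Ψ (w₀ * R + b₀ * (d - R)) := by
    intro b
    have h1 : h0 b ≤ h0 b₀ := by rw [hb₀val]; exact hballe b
    rw [hh0eq b, hh0eq b₀] at h1; exact h1
  have hVfun1 : Vfun R u d p f g
      = fun w => ⨆ b, Φ (w * R + b * (u - R)) + Ψ (w * R + b * (d - R)) := by
    funext w; simp only [Vfun]; congr 1; funext b; exact hHeq w b
  have hVfun2 : Vfun R u d p f g
      = fun w => ⨆ b, Ψ (w * R + b * (d - R)) + Φ (w * R + b * (u - R)) := by
    funext w; simp only [Vfun]; congr 1; funext b; exact (hHeq w b).trans (add_comm _ _)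
  have hexi : ∃ i, 1 ≤ i ∧ i ≤ Nu ∧ xu i = w₀ * R + b₀ * (u - R) := by
    by_contra hno
    push_neg at hno
    obtain ⟨ε, hε, a, cc, haff⟩ := window hNu hfpw (fun i hi1 hi2 => (hno i hi1 hi2).symm)
    have haffΦ : ∀ y ∈ Set.Icc (w₀ * R + b₀ * (u - R) - ε) (w₀ * R + b₀ * (u - R) + ε),
        Φ y = (R⁻¹ * p * a) * y + (R⁻¹ * p * cc) := by
      intro y hy'
      simp only [hΦdef]
      rw [haff y hy']; ring
    have hdiff := key_diff Φ Ψ hΦconc hΨconc R (u - R) (d - R) w₀ b₀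
      (sub_ne_zero.mpr hdR.ne) hmaxb ε _ _ hε haffΦ
    rw [← hVfun1] at hdiff
    exact hndiff hdiff
  have hexj : ∃ j, 1 ≤ j ∧ j ≤ Nd ∧ xd j = w₀ * R + b₀ * (d - R) := by
    by_contra hno
    push_neg at hno
    obtain ⟨ε, hε, a, cc, haff⟩ := window hNd hgpw (fun j hj1 hj2 => (hno j hj1 hj2).symm)
    have haffΨ : ∀ z ∈ Set.Icc (w₀ * R + b₀ * (d - R) - ε) (w₀ * R + b₀ * (d - R) + ε),
        Ψ z = (R⁻¹ * (1 - p) * a) * z + (R⁻¹ * (1 - p) * cc) := by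
      intro z hz'
      simp only [hΨdef]
      rw [haff z hz']; ring
    have hmaxb' : ∀ b, Ψ (w₀ * R + b * (d - R)) + Φ (w₀ * R + b * (u - R)) ≤
        Ψ (w₀ * R + b₀ * (d - R)) + Φ (w₀ * R + b₀ * (u - R)) := by
      intro b; have := hmaxb b; linarith
    have hdiff := key_diff Ψ Φ hΨconc hΦconc R (d - R) (u - R) w₀ b₀
      (sub_ne_zero.mpr hRu.ne') hmaxb' ε _ _ hε haffΨ
    rw [← hVfun2] at hdiff
    exact hndiff hdiff
  obtain ⟨i, hi1, hi2, hyi⟩ := hexi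
  obtain ⟨j, hj1, hj2, hzj⟩ := hexj
  have hud : u - d ≠ 0 := sub_ne_zero.mpr (by linarith : u ≠ d)
  refine ⟨i, j, hi1, hi2, hj1, hj2, ?_, ?_, ?_, ?_⟩
  · rw [hq, hyi, hzj]
    field_simp
    ring
  · rw [hyi, hzj]
    field_simp
    ring
  · show w₀ * R + b₀ * (u - R) = xu i
    exact hyi.symm
  · show w₀ * R + b₀ * (d - R) = xd j
    exact hzj.symm
end
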